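/- arXiv:2012.15431 — 15 statements merged into one kernel-verified Lean document; each statement's English description precedes it below -/
import Mathlib

section
/- Let (A_i)_{i∈I} be a family of topological abelian groups with linear topology, and equip the direct sum ⊕_{i∈I} A_i with the coproduct topology. (a) If every A_i is separated, then ⊕_{i∈I} A_i is separated. (b) If every A_i is complete, then ⊕_{i∈I} A_i is complete. -/
open Filter Topology

/-- A topological abelian group has *linear topology* if the open subgroups form a basis of
neighborhoods of zero, i.e. every neighborhood of `0` contains an open subgroup. -/
def HasLinearTopology (A : Type*) [AddCommGroup A] [TopologicalSpace A] : Prop :=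
  ∀ s ∈ nhds (0 : A), ∃ U : AddSubgroup A, IsOpen (U : Set A) ∧ (U : Set A) ⊆ s

/-- A topological abelian group is *complete* if it is complete as a uniform space with respect
to the canonical uniformity of the topological group. -/
def IsCompleteTAG (A : Type*) [AddCommGroup A] [TopologicalSpace A] [IsTopologicalAddGroup A] :
    Prop :=
  @CompleteSpace A (IsTopologicalAddGroup.rightUniformSpace A)

/-- Let `(A i)_{i ∈ I}` be a family of topological abelian groups with linear
topology and equip the direct sum `⊕_{i ∈ I} A i` (formalized as `Π₀ i, A i`) with the coproduct
topology, i.e. the group topology in which the subgroups `⊕ᵢ Uᵢ`, with each `Uᵢ ⊆ A i` an open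
subgroup, form a basis of neighborhoods of `0`.
(a) If every `A i` is separated then so is the direct sum.
(b) If every `A i` is complete then so is the direct sum. -/
theorem statement1 {I : Type*} {A : I → Type*} [∀ i, AddCommGroup (A i)]
    [∀ i, TopologicalSpace (A i)] [∀ i, IsTopologicalAddGroup (A i)]
    (hlin : ∀ i, HasLinearTopology (A i))
    (τ : TopologicalSpace (Π₀ i, A i))
    (hgrp : @IsTopologicalAddGroup (Π₀ i, A i) τ _)
    (hbasis : (@nhds _ τ 0).HasBasis
      (fun U : ∀ i, AddSubgroup (A i) => ∀ i, IsOpen (U i : Set (A i)))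
      (fun U => {f : Π₀ i, A i | ∀ i, f i ∈ U i})) :
    ((∀ i, T2Space (A i)) → @T2Space (Π₀ i, A i) τ) ∧
    ((∀ i, IsCompleteTAG (A i)) →
      @CompleteSpace (Π₀ i, A i) (@IsTopologicalAddGroup.rightUniformSpace _ _ τ hgrp)) := by
  classical
  letI := τ
  haveI := hgrp
  have hWmem : ∀ (U : ∀ i, AddSubgroup (A i)), (∀ i, IsOpen (U i : Set (A i))) →
      {f : Π₀ i, A i | ∀ i, f i ∈ U i} ∈ 𝓝 (0 : Π₀ i, A i) :=
    fun U hU => hbasis.mem_of_mem hU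
  have hUpd : ∀ (i : I) (V : AddSubgroup (A i)), IsOpen (V : Set (A i)) →
      ∀ j, IsOpen ((Function.update (fun j => (⊤ : AddSubgroup (A j))) i V j : AddSubgroup (A j))
        : Set (A j)) := by
    intro i V hV j
    rcases eq_or_ne j i with rfl | hj
    · rwa [Function.update_self]
    · rw [Function.update_of_ne hj, AddSubgroup.coe_top]
      exact isOpen_univ
  constructor
  · -- Part (a): separation
    intro hT2
    apply IsTopologicalAddGroup.t2Space_of_zero_sep
    intro f hf
    obtain ⟨i, hi⟩ : ∃ i, f i ≠ 0 := by
      by_contra h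
      push_neg at h
      exact hf (DFinsupp.ext h)
    obtain ⟨V, hVopen, hVsub⟩ := hlin i {f i}ᶜ (compl_singleton_mem_nhds (Ne.symm hi))
    refine ⟨{g : Π₀ i, A i |
        ∀ j, g j ∈ Function.update (fun j => (⊤ : AddSubgroup (A j))) i V j},
      hWmem _ (hUpd i V hVopen), ?_⟩
    intro hmem
    have h1 := hmem i
    rw [Function.update_self] at h1
    exact hVsub h1 rfl
  · -- Part (b): completeness
    intro hcomp
    letI uD : UniformSpace (Π₀ i, A i) := IsTopologicalAddGroup.rightUniformSpace _
    refine ⟨fun {F} hF => ?_⟩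
    obtain ⟨hne, hFF⟩ := hF
    rw [uniformity_eq_comap_nhds_zero' (G := Π₀ i, A i)] at hFF
    -- From Cauchyness: every basis subgroup admits a coset in F
    have hsub : ∀ (U : ∀ i, AddSubgroup (A i)), (∀ i, IsOpen (U i : Set (A i))) →
        ∃ g : Π₀ i, A i, {h : Π₀ i, A i | ∀ i, h i - g i ∈ U i} ∈ F := by
      intro U hU
      have h1 : {p : (Π₀ i, A i) × (Π₀ i, A i) | ∀ i, p.2 i - p.1 i ∈ U i} ∈ F ×ˢ F := by
        apply hFF
        refine mem_comap.2 ⟨_, hWmem U hU, ?_⟩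
        intro p hp i
        have := hp i
        simpa [sub_eq_add_neg] using this
      obtain ⟨t₁, ht₁, t₂, ht₂, hts⟩ := mem_prod_iff.1 h1
      obtain ⟨g, hg⟩ := Filter.nonempty_of_mem ht₁
      refine ⟨g, mem_of_superset ht₂ fun h hh => ?_⟩
      exact hts (Set.mk_mem_prod hg hh)
    set Fi : ∀ i, Filter (A i) := fun i => F.map fun f => f i with hFidef
    have hFine : ∀ i, (Fi i).NeBot := fun i => Filter.map_neBot
    -- two cosets of the same subgroup in the same proper filter coincide
    have hcoset : ∀ (i) (V : AddSubgroup (A i)) (a b : A i),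
        {c | c - a ∈ V} ∈ Fi i → {c | c - b ∈ V} ∈ Fi i → a - b ∈ V := by
      intro i V a b ha hb
      obtain ⟨c, hc1, hc2⟩ := Filter.nonempty_of_mem (inter_mem ha hb)
      have hc1' : c - a ∈ V := hc1
      have hc2' : c - b ∈ V := hc2
      have h3 : (c - b) - (c - a) = a - b := by abel
      have h4 := sub_mem hc2' hc1'
      rwa [h3] at h4
    have htend0 : ∀ i, Tendsto (fun f : Π₀ i, A i => f i) F (𝓝 (0 : A i)) ↔
        ∀ V : AddSubgroup (A i), IsOpen (V : Set (A i)) → (V : Set (A i)) ∈ Fi i := by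
      intro i
      constructor
      · intro h V hV
        exact h (hV.mem_nhds V.zero_mem)
      · intro h s hs
        obtain ⟨V, hVo, hVs⟩ := hlin i s hs
        exact mem_of_superset (h V hVo) hVs
    set S : Set I := {i | ¬ Tendsto (fun f : Π₀ i, A i => f i) F (𝓝 (0 : A i))} with hSdef
    have hbad : ∀ i, ∃ V : AddSubgroup (A i), IsOpen (V : Set (A i)) ∧
        (i ∈ S → (V : Set (A i)) ∉ Fi i) := by
      intro i
      by_cases hi : i ∈ S
      · have := hi
        rw [hSdef, Set.mem_setOf_eq, htend0 i] at this
        push_neg at this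
        obtain ⟨V, hVo, hVn⟩ := this
        exact ⟨V, hVo, fun _ => hVn⟩
      · refine ⟨⊤, ?_, fun h => absurd h hi⟩
        rw [AddSubgroup.coe_top]; exact isOpen_univ
    choose Ub hUbopen hUbnot using hbad
    obtain ⟨g₀, hg₀⟩ := hsub Ub hUbopen
    have hSfin : S.Finite := by
      refine Set.Finite.subset g₀.support.finite_toSet ?_
      intro i hiS
      by_contra hi
      have hz : g₀ i = 0 := by
        by_contra hz
        exact hi (by simpa using DFinsupp.mem_support_iff.2 hz)
      apply hUbnot i hiS
      refine mem_map.2 (mem_of_superset hg₀ ?_)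
      intro h hh
      have := hh i
      rwa [hz, sub_zero] at this
    -- each projected filter is Cauchy
    have hFiC : ∀ i, @Cauchy (A i) (IsTopologicalAddGroup.rightUniformSpace (A i)) (Fi i) := by
      intro i
      refine ⟨hFine i, ?_⟩
      rw [uniformity_eq_comap_nhds_zero' (G := A i), ← Filter.map_le_iff_le_comap]
      intro s hs
      obtain ⟨V, hVo, hVs⟩ := hlin i s hs
      obtain ⟨g, hg⟩ := hsub (Function.update (fun j => ⊤) i V) (hUpd i V hVo)
      rw [mem_map]
      refine mem_of_superset
        (prod_mem_prod (Filter.image_mem_map hg) (Filter.image_mem_map hg)) ?_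
      rintro ⟨a, b⟩ ⟨⟨h₁, hh₁, rfl⟩, ⟨h₂, hh₂, rfl⟩⟩
      have h1 := hh₁ i
      have h2 := hh₂ i
      rw [Function.update_self] at h1 h2
      have h3 : h₂ i - h₁ i = (h₂ i - g i) - (h₁ i - g i) := by abel
      show h₂ i + -h₁ i ∈ s; rw [← sub_eq_add_neg]
      exact hVs (by rw [h3]; exact sub_mem h2 h1)
    -- choose limits, zero whenever possible
    have hx : ∀ i, ∃ y : A i, Fi i ≤ 𝓝 y ∧ (i ∉ S → y = 0) := by
      intro i
      by_cases hi : i ∈ S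
      · obtain ⟨y, hy⟩ := @CompleteSpace.complete _ _ (hcomp i) _ (hFiC i)
        exact ⟨y, hy, fun h => absurd hi h⟩
      · rw [hSdef, Set.mem_setOf_eq, not_not] at hi
        exact ⟨0, hi, fun _ => rfl⟩
    choose xf hxf hxf0 using hx
    set x : Π₀ i, A i := DFinsupp.mk hSfin.toFinset (fun i => xf i) with hxdef
    have hxapp : ∀ i, x i = xf i := by
      intro i
      rw [hxdef, DFinsupp.mk_apply]
      by_cases hi : i ∈ hSfin.toFinset
      · rw [dif_pos hi]
      · rw [dif_neg hi]
        exact (hxf0 i (by simpa using hi)).symm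
    refine ⟨x, ?_⟩
    have hnx : 𝓝 x = Filter.map (fun y => x + y) (𝓝 (0 : Π₀ i, A i)) := by
      have := (Homeomorph.addLeft x).map_nhds_eq (0 : Π₀ i, A i)
      simp only [Homeomorph.coe_addLeft, add_zero] at this
      exact this.symm
    have hgoal : F ≤ 𝓝 x := by
      rw [hnx]
      refine (hbasis.map (fun y => x + y)).ge_iff.2 ?_
      intro U hU
      obtain ⟨g, hg⟩ := hsub U hU
      have hgx : ∀ i, g i - x i ∈ U i := by
        intro i
        refine hcoset i (U i) (g i) (x i) ?_ ?_
        · exact mem_map.2 (mem_of_superset hg fun h hh => hh i)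
        · apply hxf i
          have hop : IsOpen {c : A i | c - x i ∈ U i} :=
            (hU i).preimage (continuous_id.sub continuous_const)
          refine hop.mem_nhds ?_
          show xf i - x i ∈ U i
          rw [hxapp i, sub_self]
          exact (U i).zero_mem
      refine mem_of_superset hg ?_
      intro h hh
      refine ⟨h - x, ?_, by show x + (h - x) = h; rw [add_comm, sub_add_cancel]⟩
      intro i
      have h3 : (h - x) i = (h i - g i) + (g i - x i) := by
        rw [DFinsupp.sub_apply]; abel
      rw [h3]
      exact add_mem (hh i) (hgx i)
    exact hgoal
end

section
/- Let A be a complete, separated topological abelian group with linear topology, and let K ⊆ A be a closed subgroup such that K, equipped with the subspace topology, has a countable basis of neighborhoods of 0. Then the quotient group A/K, equipped with the quotient topology, is separated and complete. -/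
open Filter Topology

open Uniformity Set

/-- Two cosets of comparable subgroups which intersect are nested. -/
lemma coset_nested {A : Type*} [AddCommGroup A] {H₁ H₂ : AddSubgroup A} (h : H₁ ≤ H₂)
    {x y z : A} (hz₁ : z - x ∈ H₁) (hz₂ : z - y ∈ H₂) {w : A} (hw : w - x ∈ H₁) :
    w - y ∈ H₂ := by
  have h1 : w - z ∈ H₂ := by
    have : w - z = (w - x) - (z - x) := by abel
    rw [this]; exact H₂.sub_mem (h hw) (h hz₁)
  have : w - y = (w - z) + (z - y) := by abel
  rw [this]; exact H₂.add_mem h1 hz₂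

/-- Let `A` be a complete, separated topological abelian group with linear
topology, and let `K ⊆ A` be a closed subgroup such that `K`, equipped with the subspace
topology, has a countable basis of neighborhoods of `0`.  Then the quotient group `A ⧸ K`,
equipped with the quotient topology, is separated and complete. -/
theorem statement2 {A : Type*} [AddCommGroup A] [TopologicalSpace A] [IsTopologicalAddGroup A]
    (hlin : HasLinearTopology A) [T2Space A] (hcomp : IsCompleteTAG A)
    (K : AddSubgroup A) (hK : IsClosed (K : Set A))
    (hKcount : (nhds (0 : K)).IsCountablyGenerated) :
    T2Space (A ⧸ K) ∧ IsCompleteTAG (A ⧸ K) := by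
  classical
  have hT2 : T2Space (A ⧸ K) := by
    haveI : IsClosed (K : Set A) := hK
    infer_instance
  refine ⟨hT2, ?_⟩
  letI uA : UniformSpace A := IsTopologicalAddGroup.rightUniformSpace A
  haveI hUA : IsUniformAddGroup A := isUniformAddGroup_of_addCommGroup
  haveI : CompleteSpace A := hcomp
  letI uQ : UniformSpace (A ⧸ K) := IsTopologicalAddGroup.rightUniformSpace (A ⧸ K)
  haveI hUQ : IsUniformAddGroup (A ⧸ K) := isUniformAddGroup_of_addCommGroup
  show CompleteSpace (A ⧸ K)
  -- notation
  set π : A →+ A ⧸ K := QuotientAddGroup.mk' K with hπ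
  have hπsurj : Function.Surjective π := QuotientAddGroup.mk'_surjective K
  have hπcont : Continuous π := continuous_quot_mk
  have hπopen : IsOpenMap π := QuotientAddGroup.isOpenMap_coe
  -- membership in images of subgroups
  have hmem : ∀ (V : AddSubgroup A) (w : A), w ∈ V ⊔ K ↔ π w ∈ AddSubgroup.map π V := by
    intro V w
    rw [show V ⊔ K = AddSubgroup.comap π (AddSubgroup.map π V) from by
      rw [AddSubgroup.comap_map_eq, hπ, QuotientAddGroup.ker_mk']]
    exact Iff.rfl
  have hmapopen : ∀ V : AddSubgroup A, IsOpen (V : Set A) →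
      IsOpen ((AddSubgroup.map π V : AddSubgroup (A ⧸ K)) : Set (A ⧸ K)) := by
    intro V hV
    have : ((AddSubgroup.map π V : AddSubgroup (A ⧸ K)) : Set (A ⧸ K)) = π '' V := by
      ext y; simp [AddSubgroup.mem_map]
    rw [this]; exact hπopen _ hV
  -- basis of neighborhoods of zero in the quotient
  have hbasisQ : ∀ s ∈ 𝓝 (0 : A ⧸ K), ∃ V : AddSubgroup A, IsOpen (V : Set A) ∧
      ((AddSubgroup.map π V : AddSubgroup (A ⧸ K)) : Set (A ⧸ K)) ⊆ s := by
    intro s hs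
    have h0 : (π : A → A ⧸ K) ⁻¹' s ∈ 𝓝 (0 : A) := by
      have := hπcont.continuousAt (x := (0 : A))
      rw [ContinuousAt, map_zero] at this
      exact this hs
    obtain ⟨V, hVo, hVs⟩ := hlin _ h0
    refine ⟨V, hVo, ?_⟩
    rintro y hy
    rw [SetLike.mem_coe, AddSubgroup.mem_map] at hy
    obtain ⟨v, hv, rfl⟩ := hy
    exact hVs hv
  refine ⟨fun {F} hF => ?_⟩
  haveI hFne : F.NeBot := hF.1
  -- Step A: choose a coset of each open subgroup belonging to `F`
  have exists_a : ∀ V : AddSubgroup A, IsOpen (V : Set A) →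
      ∃ a : A, {y : A ⧸ K | y - π a ∈ AddSubgroup.map π V} ∈ F := by
    intro V hV
    have hent : {p : (A ⧸ K) × (A ⧸ K) | p.2 - p.1 ∈ AddSubgroup.map π V} ∈ 𝓤 (A ⧸ K) := by
      rw [uniformity_eq_comap_nhds_zero (A ⧸ K)]
      exact preimage_mem_comap ((hmapopen V hV).mem_nhds (zero_mem _))
    obtain ⟨S, hSF, T, hTF, hST⟩ := Filter.mem_prod_iff.mp (hF.2 hent)
    have hST' : S ∩ T ∈ F := inter_mem hSF hTF
    obtain ⟨y₀, hy₀⟩ := hFne.nonempty_of_mem hST'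
    obtain ⟨a, ha⟩ := hπsurj y₀
    refine ⟨a, mem_of_superset hST' fun y hy => ?_⟩
    have := hST (Set.mk_mem_prod hy₀.1 hy.2)
    simpa [ha] using this
  set OS := {V : AddSubgroup A // IsOpen (V : Set A)} with hOS
  have exists_a' : ∀ V : OS, ∃ a : A, {y : A ⧸ K | y - π a ∈ AddSubgroup.map π V.1} ∈ F :=
    fun V => exists_a V.1 V.2
  choose a ha using exists_a'
  set D : OS → Set A := fun V => {z : A | z - a V ∈ V.1 ⊔ K} with hD
  have hDpre : ∀ V : OS, D V = (π : A → A ⧸ K) ⁻¹' {y : A ⧸ K | y - π (a V) ∈ AddSubgroup.map π V.1} := by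
    intro V; ext z
    simp only [hD, Set.mem_setOf_eq, Set.mem_preimage]
    rw [hmem V.1, map_sub]
  have hDF : ∀ V : OS, (D V).Nonempty := by
    intro V
    obtain ⟨y, hy⟩ := hFne.nonempty_of_mem (ha V)
    obtain ⟨z, hz⟩ := hπsurj y
    exact ⟨z, by rw [hDpre]; simpa [hz] using hy⟩
  have haD : ∀ V : OS, a V ∈ D V := by
    intro V; simp only [hD, Set.mem_setOf_eq, sub_self]; exact zero_mem _
  have hDsub : ∀ V W : OS, V.1 ≤ W.1 → D V ⊆ D W := by
    intro V W hVW
    have hsup : V.1 ⊔ K ≤ W.1 ⊔ K := sup_le_sup_right hVW K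
    have hint : (D V ∩ D W).Nonempty := by
      obtain ⟨y, hy⟩ := hFne.nonempty_of_mem (inter_mem (ha V) (ha W))
      obtain ⟨z, hz⟩ := hπsurj y
      refine ⟨z, ?_, ?_⟩
      · rw [hDpre V]; simpa [hz] using hy.1
      · rw [hDpre W]; simpa [hz] using hy.2
    obtain ⟨z, hzV, hzW⟩ := hint
    intro w hw
    exact coset_nested hsup hzV hzW hw
  -- Step B: a decreasing sequence of open subgroups controlling `K`
  haveI := hKcount
  obtain ⟨s, hs⟩ := (𝓝 (0 : K)).exists_antitone_basis
  have exV : ∀ n : ℕ, ∃ V : AddSubgroup A, IsOpen (V : Set A) ∧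
      ((Subtype.val : K → A) ⁻¹' (V : Set A)) ⊆ s n := by
    intro n
    have h1 : s n ∈ 𝓝 (0 : K) := hs.1.mem_of_mem trivial
    rw [nhds_subtype_eq_comap] at h1
    obtain ⟨t, ht, hts⟩ := Filter.mem_comap.mp h1
    obtain ⟨V, hVo, hVt⟩ := hlin t ht
    exact ⟨V, hVo, fun k hk => hts (hVt hk)⟩
  choose V' hV'o hV's using exV
  set U : ℕ → AddSubgroup A := fun n => Nat.rec (V' 0) (fun k Uk => Uk ⊓ V' (k + 1)) n with hU
  have hUsucc : ∀ n, U (n + 1) = U n ⊓ V' (n + 1) := fun n => rfl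
  have hUo : ∀ n, IsOpen (U n : Set A) := by
    intro n; induction n with
    | zero => exact hV'o 0
    | succ k ih =>
      rw [hUsucc]
      have : ((U k ⊓ V' (k + 1) : AddSubgroup A) : Set A) = (U k : Set A) ∩ V' (k + 1) := rfl
      rw [this]; exact ih.inter (hV'o (k + 1))
  have hUanti : ∀ m n, m ≤ n → U n ≤ U m := by
    intro m n h
    induction h with
    | refl => exact le_rfl
    | step h ih => exact le_trans (by rw [hUsucc]; exact inf_le_left) ih
  have hUV' : ∀ n, U n ≤ V' n := by
    intro n; cases n with
    | zero => exact le_rfl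
    | succ k => rw [hUsucc]; exact inf_le_right
  have hUK : ∀ S ∈ 𝓝 (0 : A), ∃ n, ∀ z : A, z ∈ U n → z ∈ K → z ∈ S := by
    intro S hS
    have h1 : ((Subtype.val : K → A) ⁻¹' S) ∈ 𝓝 (0 : K) := by
      rw [nhds_subtype_eq_comap]; exact preimage_mem_comap hS
    obtain ⟨n, -, hn⟩ := hs.1.mem_iff.mp h1
    refine ⟨n, fun z hz hzK => ?_⟩
    have : (⟨z, hzK⟩ : K) ∈ (Subtype.val : K → A) ⁻¹' (V' n : Set A) := hUV' n hz
    exact hn (hV's n this)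
  set oU : ℕ → OS := fun n => ⟨U n, hUo n⟩ with hoU
  -- Step C: a sequence of approximate lifts
  have step : ∀ n (x : A), x ∈ D (oU n) → ∃ y : A, y ∈ D (oU (n + 1)) ∧ y - x ∈ U n := by
    intro n x hx
    have hsub : D (oU (n + 1)) ⊆ D (oU n) := hDsub _ _ (hUanti n (n + 1) (Nat.le_succ n))
    have h1 : a (oU (n + 1)) ∈ D (oU n) := hsub (haD _)
    have h2 : a (oU (n + 1)) - x ∈ U n ⊔ K := by
      have hx' : x - a (oU n) ∈ U n ⊔ K := hx
      have h1' : a (oU (n + 1)) - a (oU n) ∈ U n ⊔ K := h1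
      have : a (oU (n + 1)) - x = (a (oU (n + 1)) - a (oU n)) - (x - a (oU n)) := by abel
      rw [this]; exact AddSubgroup.sub_mem _ h1' hx'
    obtain ⟨u, hu, k, hk, huk⟩ := AddSubgroup.mem_sup.mp h2
    refine ⟨x + u, ?_, by simpa using hu⟩
    show (x + u) - a (oU (n + 1)) ∈ U (n + 1) ⊔ K
    have h5 : a (oU (n + 1)) = u + k + x := sub_eq_iff_eq_add.mp huk.symm
    have : (x + u) - a (oU (n + 1)) = -k := by rw [h5]; abel
    rw [this]
    exact AddSubgroup.neg_mem _ (le_sup_right (a := U (n + 1)) hk)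
  set b : ∀ n : ℕ, {x : A // x ∈ D (oU n)} := fun n =>
    Nat.rec ⟨a (oU 0), haD (oU 0)⟩
      (fun k xk => ⟨Classical.choose (step k xk.1 xk.2),
        (Classical.choose_spec (step k xk.1 xk.2)).1⟩) n with hb
  have hbstep : ∀ n, (b (n + 1)).1 - (b n).1 ∈ U n := fun n =>
    (Classical.choose_spec (step n (b n).1 (b n).2)).2
  have hbmono : ∀ m n, m ≤ n → (b n).1 - (b m).1 ∈ U m := by
    intro m n h
    induction h with
    | refl => simpa using AddSubgroup.zero_mem (U m)
    | @step k h ih =>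
      have h1 : (b (k + 1)).1 - (b k).1 ∈ U m := hUanti m k h (hbstep k)
      have : (b (k + 1)).1 - (b m).1 = ((b (k + 1)).1 - (b k).1) + ((b k).1 - (b m).1) := by abel
      rw [this]; exact AddSubgroup.add_mem _ h1 ih
  -- Step D: the auxiliary Cauchy filter on A
  set B : ℕ × OS → Set A := fun p => {z : A | z - (b p.1).1 ∈ U p.1} ∩ D p.2 with hB
  have hBne : ∀ p, (B p).Nonempty := by
    rintro ⟨n, V⟩
    set W : OS := ⟨U n ⊓ V.1, (hUo n).inter V.2⟩ with hW
    obtain ⟨z, hz⟩ := hDF W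
    have hzn : z ∈ D (oU n) := hDsub W (oU n) inf_le_left hz
    have hzV : z ∈ D V := hDsub W V inf_le_right hz
    -- z - b n ∈ U n ⊔ K
    have h1 : z - (b n).1 ∈ U n ⊔ K := by
      have h2 : z - a (oU n) ∈ U n ⊔ K := hzn
      have h3 : (b n).1 - a (oU n) ∈ U n ⊔ K := (b n).2
      have : z - (b n).1 = (z - a (oU n)) - ((b n).1 - a (oU n)) := by abel
      rw [this]; exact AddSubgroup.sub_mem _ h2 h3
    obtain ⟨u, hu, k, hk, huk⟩ := AddSubgroup.mem_sup.mp h1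
    refine ⟨(b n).1 + u, by simpa using hu, ?_⟩
    show ((b n).1 + u) - a V ∈ V.1 ⊔ K
    have hzV' : z - a V ∈ V.1 ⊔ K := hzV
    have : ((b n).1 + u) - a V = (z - a V) - k := by
      have h4 : z = u + k + (b n).1 := sub_eq_iff_eq_add.mp huk.symm
      rw [h4]; abel
    rw [this]
    exact AddSubgroup.sub_mem _ hzV' (le_sup_right (a := V.1) hk)
  have hBdir : ∀ p q : ℕ × OS, ∃ r, B r ⊆ B p ∧ B r ⊆ B q := by
    rintro ⟨n, V⟩ ⟨m, W⟩
    refine ⟨(max n m, ⟨V.1 ⊓ W.1, V.2.inter W.2⟩), ?_, ?_⟩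
    · rintro z ⟨hz1, hz2⟩
      refine ⟨?_, hDsub _ V inf_le_left hz2⟩
      have h1 : z - (b (max n m)).1 ∈ U n := hUanti n _ (le_max_left n m) hz1
      have h2 : (b (max n m)).1 - (b n).1 ∈ U n := hbmono n _ (le_max_left n m)
      show z - (b n).1 ∈ U n
      have : z - (b n).1 = (z - (b (max n m)).1) + ((b (max n m)).1 - (b n).1) := by abel
      rw [this]; exact AddSubgroup.add_mem _ h1 h2
    · rintro z ⟨hz1, hz2⟩
      refine ⟨?_, hDsub _ W inf_le_right hz2⟩
      have h1 : z - (b (max n m)).1 ∈ U m := hUanti m _ (le_max_right n m) hz1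
      have h2 : (b (max n m)).1 - (b m).1 ∈ U m := hbmono m _ (le_max_right n m)
      show z - (b m).1 ∈ U m
      have : z - (b m).1 = (z - (b (max n m)).1) + ((b (max n m)).1 - (b m).1) := by abel
      rw [this]; exact AddSubgroup.add_mem _ h1 h2
  set G : Filter A := ⨅ p : ℕ × OS, 𝓟 (B p) with hG
  have hdir : Directed (· ≥ ·) (fun p : ℕ × OS => 𝓟 (B p)) := by
    intro p q
    obtain ⟨r, h1, h2⟩ := hBdir p q
    exact ⟨r, principal_mono.mpr h1, principal_mono.mpr h2⟩
  haveI : Nonempty (ℕ × OS) := ⟨(0, oU 0)⟩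
  have hGmem : ∀ t : Set A, t ∈ G ↔ ∃ p, B p ⊆ t := by
    intro t
    rw [hG, Filter.mem_iInf_of_directed hdir]
    simp [Filter.mem_principal]
  haveI hGne : G.NeBot := by
    rw [hG]
    exact iInf_neBot_of_directed hdir fun p => Filter.principal_neBot_iff.mpr (hBne p)
  have hGcauchy : Cauchy G := by
    refine ⟨hGne, ?_⟩
    rw [uniformity_eq_comap_nhds_zero A, ← Filter.map_le_iff_le_comap]
    intro t ht
    obtain ⟨V, hVo, hVt⟩ := hlin t ht
    obtain ⟨n, hn⟩ := hUK (V : Set A) (hVo.mem_nhds (zero_mem _))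
    set W : OS := ⟨V ⊓ U n, hVo.inter (hUo n)⟩ with hW
    have hsmall : ∀ x ∈ B (n, W), ∀ y ∈ B (n, W), y - x ∈ V := by
      rintro x ⟨hx1, hx2⟩ y ⟨hy1, hy2⟩
      have hd1 : y - x ∈ U n := by
        have : y - x = (y - (b n).1) - (x - (b n).1) := by abel
        rw [this]; exact AddSubgroup.sub_mem _ hy1 hx1
      have hd2 : y - x ∈ (V ⊓ U n) ⊔ K := by
        have hx2' : x - a W ∈ (V ⊓ U n) ⊔ K := hx2
        have hy2' : y - a W ∈ (V ⊓ U n) ⊔ K := hy2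
        have : y - x = (y - a W) - (x - a W) := by abel
        rw [this]; exact AddSubgroup.sub_mem _ hy2' hx2'
      obtain ⟨w, hw, k, hk, hwk⟩ := AddSubgroup.mem_sup.mp hd2
      have h4 : y - x = w + k := hwk.symm
      have hkU : k ∈ U n := by
        have h5 : k = (y - x) - w := by rw [h4]; abel
        rw [h5]; exact AddSubgroup.sub_mem _ hd1 hw.2
      have hkV : k ∈ V := hn k hkU hk
      rw [h4]; exact AddSubgroup.add_mem _ hw.1 hkV
    have hBmem : B (n, W) ∈ G := (hGmem _).mpr ⟨(n, W), subset_rfl⟩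
    rw [Filter.mem_map]
    refine Filter.mem_of_superset (Filter.prod_mem_prod hBmem hBmem) ?_
    rintro ⟨x, y⟩ ⟨hx, hy⟩
    exact hVt (hsmall x hx y hy)
  obtain ⟨x, hx⟩ := CompleteSpace.complete hGcauchy
  -- Step E: x lies in every D V
  have hxD : ∀ V : OS, x ∈ D V := by
    intro V
    have hDG : D V ∈ G := (hGmem _).mpr ⟨(0, V), fun z hz => hz.2⟩
    have hclosed : IsClosed (D V) := by
      have : D V = (fun z : A => z - a V) ⁻¹' ((V.1 ⊔ K : AddSubgroup A) : Set A) := rfl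
      rw [this]
      have hVKopen : IsOpen ((V.1 ⊔ K : AddSubgroup A) : Set A) :=
        AddSubgroup.isOpen_mono le_sup_left V.2
      exact (AddSubgroup.isClosed_of_isOpen _ hVKopen).preimage
        (continuous_id.sub continuous_const)
    rw [← hclosed.closure_eq]
    rw [mem_closure_iff_nhds]
    intro t ht
    have h1 : t ∩ D V ∈ G := inter_mem (hx ht) hDG
    exact hGne.nonempty_of_mem h1
  -- Step F: F converges to π x
  refine ⟨π x, Filter.le_def.mpr fun t ht => ?_⟩
  rw [← nhds_translation_sub (π x)] at ht
  obtain ⟨r, hr, hrt⟩ := Filter.mem_comap.mp ht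
  obtain ⟨V, hVo, hVr⟩ := hbasisQ r hr
  set V' : OS := ⟨V, hVo⟩ with hV'
  refine Filter.mem_of_superset (ha V') fun y hy => ?_
  have hxa : π x - π (a V') ∈ AddSubgroup.map π V := by
    rw [← map_sub, ← hmem]
    exact hxD V'
  have : y - π x ∈ AddSubgroup.map π V := by
    have hy' : y - π (a V') ∈ AddSubgroup.map π V := hy
    have h2 : y - π x = (y - π (a V')) - (π x - π (a V')) := by abel
    rw [h2]; exact AddSubgroup.sub_mem _ hy' hxa
  exact hrt (hVr this)
end

section
/- Let (A_i)_{i∈I} be a family of topological abelian groups with linear topology, and equip the product ∏_{i∈I} A_i with the box topology. (a) If every A_i is separated, then ∏_{i∈I} A_i is separated. (b) If every A_i is complete, then ∏_{i∈I} A_i is complete. -/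
open Filter Topology Uniformity

theorem statement3' {I : Type*} {A : I → Type*} [∀ i, AddCommGroup (A i)]
    [∀ i, TopologicalSpace (A i)] [∀ i, IsTopologicalAddGroup (A i)]
    (hlin : ∀ i, ∀ s ∈ nhds (0 : A i), ∃ U : AddSubgroup (A i), IsOpen (U : Set (A i)) ∧ (U : Set (A i)) ⊆ s)
    (τ : TopologicalSpace (∀ i, A i))
    (hgrp : @IsTopologicalAddGroup (∀ i, A i) τ _)
    (hbasis : (@nhds _ τ 0).HasBasis
      (fun U : ∀ i, AddSubgroup (A i) => ∀ i, IsOpen (U i : Set (A i)))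
      (fun U => {f : ∀ i, A i | ∀ i, f i ∈ U i})) :
    ((∀ i, T2Space (A i)) → @T2Space (∀ i, A i) τ) ∧
    ((∀ i, (@CompleteSpace (A i) (IsTopologicalAddGroup.rightUniformSpace (A i)))) →
      @CompleteSpace (∀ i, A i) (@IsTopologicalAddGroup.rightUniformSpace _ _ τ hgrp)) := by
  classical
  letI := τ
  haveI := hgrp
  -- basic subgroups are neighborhoods of 0
  have hmem : ∀ U : ∀ i, AddSubgroup (A i), (∀ i, IsOpen (U i : Set (A i))) →
      {f : ∀ i, A i | ∀ i, f i ∈ U i} ∈ 𝓝 (0 : ∀ i, A i) :=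
    fun U hU => hbasis.mem_of_mem hU
  constructor
  · intro ht2
    apply IsTopologicalAddGroup.t2Space_of_zero_sep
    intro x hx
    have : ∃ i, x i ≠ 0 := by
      by_contra h
      push_neg at h
      exact hx (funext h)
    obtain ⟨i, hi⟩ := this
    -- {x i}ᶜ is a nbhd of 0 in A i
    have h1 : ({x i}ᶜ : Set (A i)) ∈ 𝓝 (0 : A i) :=
      (isOpen_compl_singleton).mem_nhds (by simpa using (Ne.symm hi))
    obtain ⟨W, hWo, hWs⟩ := hlin i _ h1
    refine ⟨{f : ∀ i, A i | ∀ j, f j ∈ Function.update (fun j => (⊤ : AddSubgroup (A j))) i W j},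
      hmem _ ?_, ?_⟩
    · intro j
      rcases eq_or_ne j i with rfl | hj
      · simpa using hWo
      · simp [Function.update_of_ne hj]
    · intro hxmem
      have := hxmem i
      rw [Function.update_self] at this
      exact hWs this (by rfl)
  · intro hcomp
    letI : UniformSpace (∀ i, A i) := IsTopologicalAddGroup.rightUniformSpace _
    letI : ∀ i, UniformSpace (A i) := fun i => IsTopologicalAddGroup.rightUniformSpace (A i)
    haveI : ∀ i, CompleteSpace (A i) := hcomp
    constructor
    intro F hF
    obtain ⟨hne, hle⟩ := hF
    have hU : 𝓤 (∀ i, A i) = comap (fun p : (∀ i, A i) × (∀ i, A i) => p.2 - p.1) (𝓝 0) :=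
      by rw [uniformity_eq_comap_nhds_zero']; simp only [sub_eq_add_neg]
    have hUi : ∀ i, 𝓤 (A i) = comap (fun p : A i × A i => p.2 - p.1) (𝓝 0) :=
      fun i => by rw [uniformity_eq_comap_nhds_zero']; simp only [sub_eq_add_neg]
    rw [hU] at hle
    -- Cauchy condition restated
    have hcau : ∀ U : ∀ i, AddSubgroup (A i), (∀ i, IsOpen (U i : Set (A i))) →
        ∃ S ∈ F, ∀ f ∈ S, ∀ g ∈ S, ∀ i, g i - f i ∈ U i := by
      intro U hUo
      have : {p : (∀ i, A i) × (∀ i, A i) | ∀ i, (p.2 - p.1) i ∈ U i} ∈ F ×ˢ F :=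
        hle (preimage_mem_comap (hmem U hUo))
      rw [mem_prod_iff] at this
      obtain ⟨S₁, hS₁, S₂, hS₂, hS⟩ := this
      refine ⟨S₁ ∩ S₂, inter_mem hS₁ hS₂, fun f hf g hg i => ?_⟩
      have := hS (Set.mk_mem_prod hf.1 hg.2)
      exact this i
    -- each projected filter is Cauchy
    have hproj : ∀ i, Cauchy (F.map (fun f : ∀ i, A i => f i)) := by
      intro i
      refine ⟨hne.map _, ?_⟩
      rw [hUi i]
      rw [← map_le_iff_le_comap, prod_map_map_eq, map_map]
      intro t ht
      rw [mem_map]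
      obtain ⟨W, hWo, hWs⟩ := hlin i _ ht
      set U : ∀ j, AddSubgroup (A j) := Function.update (fun j => (⊤ : AddSubgroup (A j))) i W
      have hUo : ∀ j, IsOpen ((U j : Set (A j))) := by
        intro j
        rcases eq_or_ne j i with rfl | hj
        · simpa [U] using hWo
        · simp [U, Function.update_of_ne hj]
      obtain ⟨S, hSF, hS⟩ := hcau U hUo
      have : S ×ˢ S ⊆ (fun p : (∀ i, A i) × (∀ i, A i) => ((p.1 i, p.2 i) : A i × A i)) ⁻¹'
          {p : A i × A i | p.2 - p.1 ∈ t} := by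
        rintro ⟨f, g⟩ ⟨hf, hg⟩
        have := hS f hf g hg i
        simp only [U, Function.update_self] at this
        exact hWs this
      exact mem_of_superset (prod_mem_prod hSF hSF) this
    -- limits
    have hx : ∀ i, ∃ x : A i, F.map (fun f : ∀ i, A i => f i) ≤ 𝓝 x := fun i =>
      CompleteSpace.complete (hproj i)
    choose x hxle using hx
    refine ⟨x, ?_⟩
    have hnx : 𝓝 x = map (fun f => x + f) (𝓝 0) := (map_add_left_nhds_zero x).symm
    rw [hnx]
    rw [((hbasis.map _).ge_iff)]
    rintro U hUo
    obtain ⟨S, hSF, hS⟩ := hcau U hUo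
    -- for each i, pick g in S with g i close to x i
    have hsub : S ⊆ (fun f => x + f) '' {f : ∀ i, A i | ∀ i, f i ∈ U i} := by
      intro f hf
      refine ⟨f - x, fun i => ?_, by ext j; simp⟩
      -- need f i - x i ∈ U i
      have hTi : {g : ∀ i, A i | g i - x i ∈ U i} ∈ F := by
        have h1 : (x i + ·) '' (U i : Set (A i)) ∈ 𝓝 (x i) := by
          rw [← map_add_left_nhds_zero (x i)]
          exact image_mem_map ((hUo i).mem_nhds (AddSubgroup.zero_mem _))
        have := hxle i h1
        rw [mem_map] at this
        refine mem_of_superset this ?_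
        rintro g hg
        obtain ⟨u, hu, hgu⟩ := hg
        simp only [Set.mem_setOf_eq]
        have hgu' : x i + u = g i := hgu
        rw [← hgu']
        simpa using hu
      haveI := hne
      have hne' : (S ∩ {g : ∀ i, A i | g i - x i ∈ U i}).Nonempty :=
        Filter.nonempty_of_mem (inter_mem hSF hTi)
      obtain ⟨g, hgS, hgi⟩ := hne'
      have h2 : g i - f i ∈ U i := hS f hf g hgS i
      have : f i - x i = (g i - x i) - (g i - f i) := by abel
      simp only [Pi.sub_apply]
      rw [this]
      exact (U i).sub_mem hgi h2
    exact mem_of_superset hSF hsub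

/-- Let `(A i)_{i ∈ I}` be a family of topological abelian groups with linear
topology and equip the product `∏_{i ∈ I} A i` with the box topology `τ`, i.e. the group topology
in which the subgroups `∏ᵢ Uᵢ`, with each `Uᵢ ⊆ A i` an open subgroup, form a basis of
neighborhoods of `0`.
(a) If every `A i` is separated then so is the product.
(b) If every `A i` is complete then so is the product. -/
theorem statement3 {I : Type*} {A : I → Type*} [∀ i, AddCommGroup (A i)]
    [∀ i, TopologicalSpace (A i)] [∀ i, IsTopologicalAddGroup (A i)]
    (hlin : ∀ i, HasLinearTopology (A i))
    (τ : TopologicalSpace (∀ i, A i))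
    (hgrp : @IsTopologicalAddGroup (∀ i, A i) τ _)
    (hbasis : (@nhds _ τ 0).HasBasis
      (fun U : ∀ i, AddSubgroup (A i) => ∀ i, IsOpen (U i : Set (A i)))
      (fun U => {f : ∀ i, A i | ∀ i, f i ∈ U i})) :
    ((∀ i, T2Space (A i)) → @T2Space (∀ i, A i) τ) ∧
    ((∀ i, IsCompleteTAG (A i)) →
      @CompleteSpace (∀ i, A i) (@IsTopologicalAddGroup.rightUniformSpace _ _ τ hgrp)) :=
  statement3' hlin τ hgrp hbasis
end

section
/- For any family (A_i)_{i∈I} of topological abelian groups with linear topology, the product ∏_{i∈I} A_i equipped with the modified box topology is separated and complete. -/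
open Filter Topology

/-- For any family `(A i)_{i ∈ I}` of topological abelian groups with linear
topology, the product `∏_{i ∈ I} A i` equipped with the modified box topology — the group
topology in which the subgroups `∏_{j ∈ J} {0} × ∏_{l ∉ J} U l`, for `J ⊆ I` finite and each
`U l ⊆ A l` an open subgroup, form a basis of neighborhoods of `0` — is separated and complete. -/
theorem statement4 {I : Type*} {A : I → Type*} [∀ i, AddCommGroup (A i)]
    [∀ i, TopologicalSpace (A i)] [∀ i, IsTopologicalAddGroup (A i)]
    (hlin : ∀ i, HasLinearTopology (A i))
    (τ : TopologicalSpace (∀ i, A i))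
    (hgrp : @IsTopologicalAddGroup (∀ i, A i) τ _)
    (hbasis : (@nhds _ τ 0).HasBasis
      (fun JU : Finset I × (∀ i, AddSubgroup (A i)) => ∀ i, IsOpen (JU.2 i : Set (A i)))
      (fun JU => {f : ∀ i, A i | (∀ j ∈ JU.1, f j = 0) ∧ ∀ i ∉ JU.1, f i ∈ JU.2 i})) :
    @T2Space (∀ i, A i) τ ∧
    @CompleteSpace (∀ i, A i) (@IsTopologicalAddGroup.rightUniformSpace _ _ τ hgrp) := by
  classical
  letI : TopologicalSpace (∀ i, A i) := τ
  haveI : IsTopologicalAddGroup (∀ i, A i) := hgrp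
  constructor
  · -- T2
    apply IsTopologicalAddGroup.t2Space_of_zero_sep
    intro x hx
    obtain ⟨i, hi⟩ : ∃ i, x i ≠ 0 := by
      by_contra h
      push_neg at h
      exact hx (funext h)
    refine ⟨{f : ∀ i, A i | (∀ j ∈ ({i} : Finset I), f j = 0) ∧
        ∀ k ∉ ({i} : Finset I), f k ∈ (⊤ : AddSubgroup (A k))}, ?_, ?_⟩
    · exact hbasis.mem_of_mem (i := (({i} : Finset I), fun k => (⊤ : AddSubgroup (A k)))) (fun k => by simpa using isOpen_univ)
    · intro hmem
      exact hi (hmem.1 i (Finset.mem_singleton_self i))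
  · -- completeness
    letI : UniformSpace (∀ i, A i) := IsTopologicalAddGroup.rightUniformSpace _
    constructor
    intro F hF
    haveI : F.NeBot := hF.1
    have key : ∀ V ∈ 𝓝 (0 : ∀ i, A i), ∃ S ∈ F, ∀ f ∈ S, ∀ g ∈ S, g - f ∈ V := by
      intro V hV
      have h1 : {p : (∀ i, A i) × (∀ i, A i) | p.2 - p.1 ∈ V} ∈ F ×ˢ F :=
        hF.2 (by
          rw [show {p : (∀ i, A i) × (∀ i, A i) | p.2 - p.1 ∈ V} = (fun p : (∀ i, A i) × (∀ i, A i) => p.2 + -p.1) ⁻¹' V from by ext; simp [sub_eq_add_neg]]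
          exact preimage_mem_comap hV)
      rcases mem_prod_iff.1 h1 with ⟨S₁, hS₁, S₂, hS₂, hsub⟩
      exact ⟨S₁ ∩ S₂, inter_mem hS₁ hS₂,
        fun f hf g hg => hsub (Set.mk_mem_prod hf.1 hg.2)⟩
    have hsets : ∀ i : I, ∃ S ∈ F, ∀ f ∈ S, ∀ g ∈ S, (g : ∀ i, A i) i = f i := by
      intro i
      obtain ⟨S, hS, h⟩ := key _ (hbasis.mem_of_mem
        (i := (({i} : Finset I), fun k => (⊤ : AddSubgroup (A k))))
        (fun k => by simpa using isOpen_univ))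
      refine ⟨S, hS, fun f hf g hg => ?_⟩
      have := (h f hf g hg).1 i (Finset.mem_singleton_self i)
      simpa [sub_eq_zero] using this
    choose S hSF hSconst using hsets
    have hSne : ∀ i, (S i).Nonempty := fun i => Filter.nonempty_of_mem (hSF i)
    choose c hc using hSne
    set x : ∀ i, A i := fun i => c i i with hxdef
    refine ⟨x, ?_⟩
    rw [← nhds_translation_sub x]
    refine Filter.map_le_iff_le_comap.mp ?_
    rw [hbasis.ge_iff]
    rintro ⟨J, U⟩ hU
    obtain ⟨T, hTF, hT⟩ := key _ (hbasis.mem_of_mem (i := (J, U)) hU)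
    refine mem_map.2 (mem_of_superset hTF ?_)
    intro f hf
    have hxcoord : ∀ i, ∀ g ∈ T ∩ S i, (g : ∀ i, A i) i = x i := by
      intro i g hg
      exact hSconst i (c i) (hc i) g hg.2
    constructor
    · intro j hj
      obtain ⟨g, hg⟩ := Filter.nonempty_of_mem (inter_mem hTF (hSF j))
      have h1 : f - g ∈ _ := hT g hg.1 f hf
      have h2 : f j = g j := by
        have := h1.1 j hj
        simpa [sub_eq_zero] using this
      simp [h2, hxcoord j g hg, sub_eq_zero]
    · intro i hi
      obtain ⟨g, hg⟩ := Filter.nonempty_of_mem (inter_mem hTF (hSF i))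
      have h1 := (hT g hg.1 f hf).2 i hi
      have h2 : (f - x) i = (f - g) i := by
        simp [hxcoord i g hg]
      show (f - x) i ∈ U i
      rw [h2]
      exact h1
end

section
/- Let (A_i)_{i∈I} be a family of separated topological abelian groups with linear topology. Then the direct sum ⊕_{i∈I} A_i equipped with the modified coproduct topology is separated and complete. -/
open Filter Topology

/-- Let `(A i)_{i ∈ I}` be a family of separated topological abelian groups with
linear topology.  Then the direct sum `⊕_{i ∈ I} A i` (formalized as `Π₀ i, A i`) equipped with
the modified coproduct topology — the group topology in which the subgroups
`⊕_{j ∈ J} {0} ⊕ ⊕_{l ∉ J} U l`, for `J ⊆ I` finite and each `U l ⊆ A l` an open subgroup, form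
a basis of neighborhoods of `0` — is separated and complete. -/
theorem statement6 {I : Type*} {A : I → Type*} [∀ i, AddCommGroup (A i)]
    [∀ i, TopologicalSpace (A i)] [∀ i, IsTopologicalAddGroup (A i)]
    (hlin : ∀ i, HasLinearTopology (A i)) (hsep : ∀ i, T2Space (A i))
    (τ : TopologicalSpace (Π₀ i, A i))
    (hgrp : @IsTopologicalAddGroup (Π₀ i, A i) τ _)
    (hbasis : (@nhds _ τ 0).HasBasis
      (fun JU : Finset I × (∀ i, AddSubgroup (A i)) => ∀ i, IsOpen (JU.2 i : Set (A i)))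
      (fun JU => {f : Π₀ i, A i | (∀ j ∈ JU.1, f j = 0) ∧ ∀ i ∉ JU.1, f i ∈ JU.2 i})) :
    @T2Space (Π₀ i, A i) τ ∧
    @CompleteSpace (Π₀ i, A i) (@IsTopologicalAddGroup.rightUniformSpace _ _ τ hgrp) := by
  classical
  letI : TopologicalSpace (Π₀ i, A i) := τ
  haveI : IsTopologicalAddGroup (Π₀ i, A i) := hgrp
  constructor
  · -- T2
    apply IsTopologicalAddGroup.t2Space_of_zero_sep
    intro x hx
    obtain ⟨i, hi⟩ : ∃ i, x i ≠ 0 := by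
      by_contra h
      push_neg at h
      exact hx (DFinsupp.ext h)
    refine ⟨_, hbasis.mem_of_mem (i := ⟨{i}, fun _ => ⊤⟩) (fun j => by
      simp), ?_⟩
    intro hmem
    exact hi (hmem.1 i (Finset.mem_singleton_self i))
  · -- complete
    letI : UniformSpace (Π₀ i, A i) := IsTopologicalAddGroup.rightUniformSpace _
    haveI : IsUniformAddGroup (Π₀ i, A i) := isUniformAddGroup_of_addCommGroup
    constructor
    intro F hF
    haveI hne : F.NeBot := hF.1
    have key : ∀ s ∈ 𝓝 (0 : Π₀ i, A i), ∃ t ∈ F, ∀ f ∈ t, ∀ g ∈ t, f - g ∈ s := by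
      intro s hs
      have h1 : {p : (Π₀ i, A i) × (Π₀ i, A i) | p.2 - p.1 ∈ s} ∈
          uniformity (Π₀ i, A i) := by
        rw [uniformity_eq_comap_nhds_zero]
        exact preimage_mem_comap hs
      have h2 := hF.2 h1
      rw [Filter.mem_prod_iff] at h2
      obtain ⟨t₁, ht₁, t₂, ht₂, hsub⟩ := h2
      refine ⟨t₁ ∩ t₂, inter_mem ht₁ ht₂, fun f hf g hg => ?_⟩
      exact hsub (Set.mk_mem_prod hg.1 hf.2)
    -- Step 1: each coordinate is eventually constant
    have step1 : ∀ i, ∃ a : A i, ∃ t ∈ F, ∀ f ∈ t, f i = a := by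
      intro i
      obtain ⟨t, htF, ht⟩ := key _ (hbasis.mem_of_mem (i := ⟨{i}, fun _ => ⊤⟩)
        (fun j => by simp))
      obtain ⟨f₀, hf₀⟩ := Filter.nonempty_of_mem htF
      refine ⟨f₀ i, t, htF, fun f hf => ?_⟩
      have h := (ht f hf f₀ hf₀).1 i (Finset.mem_singleton_self i)
      rw [DFinsupp.sub_apply, sub_eq_zero] at h
      exact h
    choose a t htF ht using step1
    -- choose open subgroups avoiding nonzero a i
    have hV : ∀ i, ∃ V : AddSubgroup (A i), IsOpen (V : Set (A i)) ∧ (a i ≠ 0 → a i ∉ V) := by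
      intro i
      by_cases h : a i = 0
      · exact ⟨⊤, by simp, fun h' => absurd h h'⟩
      · obtain ⟨V, hVopen, hVsub⟩ := hlin i {a i}ᶜ
          (isOpen_compl_singleton.mem_nhds (by simpa using Ne.symm h))
        exact ⟨V, hVopen, fun _ hmem => (hVsub hmem) rfl⟩
    choose V hVopen hVavoid using hV
    -- Step 2: a has finite support
    obtain ⟨t₀, ht₀F, ht₀⟩ := key _ (hbasis.mem_of_mem (i := ⟨∅, V⟩) hVopen)
    obtain ⟨f₀, hf₀⟩ := Filter.nonempty_of_mem ht₀F
    have hsupp : ∀ i, a i ≠ 0 → f₀ i ≠ 0 := by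
      intro i hai hfi
      obtain ⟨g, hg⟩ := Filter.nonempty_of_mem (inter_mem ht₀F (htF i))
      have h1 := ht₀ g hg.1 f₀ hf₀
      have h2 : (g - f₀) i ∈ V i := h1.2 i (Finset.notMem_empty i)
      rw [DFinsupp.sub_apply, ht i g hg.2, hfi, sub_zero] at h2
      exact hVavoid i hai h2
    -- build the limit
    let b : Π₀ i, A i := DFinsupp.mk f₀.support fun i => a i.1
    have hb : ∀ i, b i = a i := by
      intro i
      by_cases h : i ∈ f₀.support
      · simp [b, DFinsupp.mk_apply, h]
      · have ha0 : a i = 0 := by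
          by_contra hai
          exact h (DFinsupp.mem_support_iff.mpr (hsupp i hai))
        simp [b, DFinsupp.mk_apply, h, ha0]
    refine ⟨b, ?_⟩
    have htend : Tendsto (fun f : Π₀ i, A i => f - b) F (𝓝 0) := by
      rw [hbasis.tendsto_right_iff]
      rintro ⟨J, U⟩ hU
      obtain ⟨s, hsF, hs⟩ := key _ (hbasis.mem_of_mem (i := ⟨J, U⟩) hU)
      have hs' : s ∩ ⋂ j ∈ J, t j ∈ F :=
        inter_mem hsF ((Filter.biInter_finset_mem J).mpr fun j _ => htF j)
      filter_upwards [hs'] with f hf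
      constructor
      · intro j hj
        rw [DFinsupp.sub_apply, hb j, sub_eq_zero]
        exact ht j f (Set.mem_iInter₂.mp hf.2 j hj)
      · intro i hi
        obtain ⟨g, hg⟩ := Filter.nonempty_of_mem (inter_mem hsF (htF i))
        have h1 := (hs f hf.1 g hg.1).2 i hi
        rw [DFinsupp.sub_apply] at h1
        rw [DFinsupp.sub_apply, hb i, ← ht i g hg.2]
        exact h1
    rw [← nhds_translation_sub b]
    exact map_le_iff_le_comap.mp htend
end

section
/- Let Q be a separated topological abelian group with linear topology and let I be an infinite set. Equip A = ⊕_{i∈I} Q (the group of finitely supported I-indexed families in Q) with the modified coproduct topology, and let Σ : A → Q be the summation homomorphism sending a finitely supported family (q_i)_{i∈I} to Σ_{i∈I} q_i. Then A is a complete, separated topological abelian group, and Σ is a surjective, continuous, open group homomorphism. Consequently, Q with its given topology is the quotient of the complete, separated group A by the closed subgroup ker(Σ), with the quotient topology. -/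
open Filter Topology

/-- Let `Q` be a separated topological abelian group with linear topology and
`I` an infinite set.  Equip the direct sum `A = ⊕_{i ∈ I} Q` (formalized as `Π₀ _ : I, Q`) with
the modified coproduct topology `τ` — the group topology whose basic neighborhoods of `0` are
the subgroups `⊕_{j ∈ J} {0} ⊕ ⊕_{l ∉ J} U l`, for `J ⊆ I` finite and `U l ⊆ Q` open subgroups —
and let `Σ : A → Q` be the summation homomorphism.  Then `A` is complete and separated, and `Σ`
is a surjective, continuous, open group homomorphism; consequently `Q` with its given topology is
the topological quotient of the complete separated group `A` by the closed subgroup `ker Σ`. -/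
theorem statement7 {I : Type*} [Infinite I] [DecidableEq I] {Q : Type*} [AddCommGroup Q]
    [TopologicalSpace Q] [IsTopologicalAddGroup Q] [T2Space Q]
    (hQ : HasLinearTopology Q)
    (τ : TopologicalSpace (Π₀ _ : I, Q))
    (hgrp : @IsTopologicalAddGroup (Π₀ _ : I, Q) τ _)
    (hbasis : (@nhds _ τ 0).HasBasis
      (fun JU : Finset I × (I → AddSubgroup Q) => ∀ i, IsOpen (JU.2 i : Set Q))
      (fun JU => {f : Π₀ _ : I, Q | (∀ j ∈ JU.1, f j = 0) ∧ ∀ i ∉ JU.1, f i ∈ JU.2 i}))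
    (S : (Π₀ _ : I, Q) →+ Q)
    (hS : S = DFinsupp.sumAddHom fun _ : I => AddMonoidHom.id Q) :
    (@T2Space (Π₀ _ : I, Q) τ ∧
      @CompleteSpace (Π₀ _ : I, Q) (@IsTopologicalAddGroup.rightUniformSpace _ _ τ hgrp)) ∧
    (Function.Surjective S ∧ @Continuous _ _ τ _ S ∧ @IsOpenMap _ _ τ _ S) ∧
    @IsClosed (Π₀ _ : I, Q) τ {f | S f = 0} := by
  classical
  letI : TopologicalSpace (Π₀ _ : I, Q) := τ
  haveI : IsTopologicalAddGroup (Π₀ _ : I, Q) := hgrp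
  have htop : ∀ i : I, IsOpen ((⊤ : AddSubgroup Q) : Set Q) := by
    intro i; rw [AddSubgroup.coe_top]; exact isOpen_univ
  -- T2
  have hT2 : T2Space (Π₀ _ : I, Q) := by
    apply IsTopologicalAddGroup.t2Space_of_zero_sep
    intro f hf
    have hj : ∃ j, f j ≠ 0 := by
      by_contra h
      push_neg at h
      exact hf (by ext j; simp [h j])
    obtain ⟨j, hj⟩ := hj
    refine ⟨_, hbasis.mem_of_mem (i := ({j}, fun _ => ⊤)) htop, ?_⟩
    intro hmem
    exact hj (hmem.1 j (Finset.mem_singleton_self j))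
  -- summation lands in subgroups
  have hSsum : ∀ (f : Π₀ _ : I, Q) (U : AddSubgroup Q), (∀ i, f i ∈ U) → S f ∈ U := by
    intro f U h
    rw [hS, DFinsupp.sumAddHom_apply]
    simp only [DFinsupp.sum, AddMonoidHom.id_apply]
    exact AddSubgroup.sum_mem U fun i _ => h i
  -- surjectivity
  have hsurj : Function.Surjective S := by
    intro x
    refine ⟨DFinsupp.single (Classical.arbitrary I) x, ?_⟩
    rw [hS]
    simpa using DFinsupp.sumAddHom_single (fun _ : I => AddMonoidHom.id Q) (Classical.arbitrary I) x
  -- continuity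
  have hcont : Continuous S := by
    apply continuous_of_continuousAt_zero S
    rw [ContinuousAt, map_zero]
    intro s hs
    obtain ⟨U, hUo, hUs⟩ := hQ s hs
    rw [Filter.mem_map]
    refine mem_of_superset (hbasis.mem_of_mem (i := (∅, fun _ => U)) (fun _ => hUo)) ?_
    intro f hf
    exact hUs (hSsum f U fun i => hf.2 i (Finset.notMem_empty i))
  -- openness
  have hopen0 : (𝓝 (0 : Q)) ≤ map S (𝓝 0) := by
    refine (hbasis.map S).ge_iff.mpr ?_
    rintro ⟨J, U⟩ hU
    obtain ⟨i₀, hi₀⟩ := Infinite.exists_notMem_finset J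
    refine mem_of_superset ((hU i₀).mem_nhds (AddSubgroup.zero_mem _)) ?_
    intro x hx
    refine ⟨DFinsupp.single i₀ x, ⟨?_, ?_⟩, ?_⟩
    · intro j hj
      exact DFinsupp.single_eq_of_ne (fun h => hi₀ (h ▸ hj))
    · intro i hi
      by_cases h : i₀ = i
      · subst h; rw [DFinsupp.single_eq_same]; exact hx
      · rw [DFinsupp.single_eq_of_ne (Ne.symm h)]; exact AddSubgroup.zero_mem _
    · rw [hS]
      simpa using DFinsupp.sumAddHom_single (fun _ : I => AddMonoidHom.id Q) i₀ x
  have hopenmap : IsOpenMap S := by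
    apply IsOpenMap.of_nhds_le
    intro a
    calc 𝓝 (S a) = map (fun y => S a + y) (𝓝 0) := (map_add_left_nhds_zero _).symm
      _ ≤ map (fun y => S a + y) (map S (𝓝 0)) := map_mono hopen0
      _ = map S (map (fun x => a + x) (𝓝 0)) := by
          rw [Filter.map_map, Filter.map_map]
          congr 1
          funext x
          simp [map_add]
      _ = map S (𝓝 a) := by rw [map_add_left_nhds_zero]
  -- completeness
  have hcomp : @CompleteSpace (Π₀ _ : I, Q) (@IsTopologicalAddGroup.rightUniformSpace _ _ τ hgrp) := by
    letI uA : UniformSpace (Π₀ _ : I, Q) := @IsTopologicalAddGroup.rightUniformSpace _ _ τ hgrp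
    refine ⟨fun {F} hF => ?_⟩
    have hne : F.NeBot := hF.1
    have hFle : F ×ˢ F ≤ comap (fun p : (Π₀ _ : I, Q) × (Π₀ _ : I, Q) => p.2 - p.1) (@nhds _ τ 0) := by
      have h := hF.2
      rw [uniformity_eq_comap_nhds_zero'] at h
      simpa only [sub_eq_add_neg] using h
    have hC : ∀ (J : Finset I) (U : I → AddSubgroup Q), (∀ i, IsOpen (U i : Set Q)) →
        ∃ B ∈ F, ∀ f ∈ B, ∀ g ∈ B,
          (∀ j ∈ J, (g : Π₀ _ : I, Q) j = f j) ∧ ∀ i ∉ J, g i - f i ∈ U i := by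
      intro J U hU
      have hV := hbasis.mem_of_mem (i := (J, U)) hU
      have hp := hFle (preimage_mem_comap hV)
      obtain ⟨B₁, hB₁, B₂, hB₂, hsub⟩ := Filter.mem_prod_iff.mp hp
      refine ⟨B₁ ∩ B₂, inter_mem hB₁ hB₂, ?_⟩
      intro f hf g hg
      have hm := hsub (Set.mk_mem_prod hf.1 hg.2)
      refine ⟨fun j hj => ?_, fun i hi => ?_⟩
      · have h2 := hm.1 j hj
        rwa [DFinsupp.sub_apply, sub_eq_zero] at h2
      · have h2 := hm.2 i hi
        rwa [DFinsupp.sub_apply] at h2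
    -- coordinatewise eventual constancy
    have hcoord : ∀ j : I, ∃ B ∈ F, ∀ f ∈ B, ∀ g ∈ B, (g : Π₀ _ : I, Q) j = f j := by
      intro j
      obtain ⟨B, hB, h⟩ := hC {j} (fun _ => ⊤) htop
      exact ⟨B, hB, fun f hf g hg => (h f hf g hg).1 j (Finset.mem_singleton_self j)⟩
    choose B hBF hBc using hcoord
    have hBne : ∀ j, (B j).Nonempty := fun j => nonempty_of_mem (hBF j)
    choose e he using hBne
    set q : I → Q := fun j => e j j with hqdef
    have hq : ∀ j, ∀ f ∈ B j, (f : Π₀ _ : I, Q) j = q j := fun j f hf => hBc j (e j) (he j) f hf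
    -- q has finite support
    have hW : ∀ j : I, ∃ W : AddSubgroup Q, IsOpen (W : Set Q) ∧ (q j ≠ 0 → q j ∉ W) := by
      intro j
      by_cases h : q j = 0
      · exact ⟨⊤, htop j, fun h' => absurd h h'⟩
      · obtain ⟨W, hWo, hWs⟩ := hQ {q j}ᶜ (compl_singleton_mem_nhds (Ne.symm h))
        exact ⟨W, hWo, fun _ hmem => (hWs hmem) rfl⟩
    choose W hWo hWn using hW
    obtain ⟨B0, hB0F, hB0⟩ := hC ∅ W hWo
    obtain ⟨f1, hf1⟩ := nonempty_of_mem hB0F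
    have hsupp : ∀ j, q j ≠ 0 → j ∈ f1.support := by
      intro j hj
      by_contra hns
      have hf1j : f1 j = 0 := DFinsupp.notMem_support_iff.mp hns
      obtain ⟨g, hgB0, hgBj⟩ := nonempty_of_mem (inter_mem hB0F (hBF j))
      have h1 := (hB0 f1 hf1 g hgB0).2 j (Finset.notMem_empty j)
      rw [hq j g hgBj, hf1j, sub_zero] at h1
      exact hWn j hj h1
    let f₀ : Π₀ _ : I, Q := DFinsupp.mk f1.support (fun j => q j.1)
    have hf₀ : ∀ j, f₀ j = q j := by
      intro j
      rw [DFinsupp.mk_apply]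
      split_ifs with h
      · rfl
      · exact (not_not.mp ((hsupp j).mt h)).symm
    refine ⟨f₀, ?_⟩
    show F ≤ @nhds _ τ f₀
    rw [← nhds_translation_sub f₀, ← Filter.map_le_iff_le_comap]
    refine hbasis.ge_iff.mpr ?_
    rintro ⟨J, U⟩ hU
    rw [Filter.mem_map]
    obtain ⟨Bb, hBbF, hBb⟩ := hC J U hU
    have hmem1 : Bb ∩ ⋂ j ∈ J, B j ∈ F :=
      inter_mem hBbF ((biInter_mem J.finite_toSet).mpr fun j _ => hBF j)
    obtain ⟨g, hg⟩ := nonempty_of_mem hmem1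
    set T : Finset I := (g - f₀).support with hTdef
    obtain ⟨B2, hB2F, hB2⟩ := hC (J ∪ T) U hU
    have hmem2 : Bb ∩ B2 ∩ ⋂ j ∈ (J ∪ T), B j ∈ F :=
      inter_mem (inter_mem hBbF hB2F) ((biInter_mem (J ∪ T).finite_toSet).mpr fun j _ => hBF j)
    obtain ⟨g2, hg2⟩ := nonempty_of_mem hmem2
    have hg2q : ∀ j ∈ J ∪ T, (g2 : Π₀ _ : I, Q) j = q j :=
      fun j hj => hq j g2 (Set.mem_iInter₂.mp hg2.2 j hj)
    have hgq : ∀ j ∈ J, (g : Π₀ _ : I, Q) j = q j :=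
      fun j hj => hq j g (Set.mem_iInter₂.mp hg.2 j hj)
    have hgT : ∀ i ∉ T, (g : Π₀ _ : I, Q) i = f₀ i := by
      intro i hi
      have h0 : (g - f₀) i = 0 := DFinsupp.notMem_support_iff.mp hi
      rwa [DFinsupp.sub_apply, sub_eq_zero] at h0
    refine mem_of_superset hB2F ?_
    intro f hf
    have hfg2 := hB2 g2 hg2.1.2 f hf
    have hg2g := hBb g hg.1 g2 hg2.1.1
    refine ⟨fun j hj => ?_, fun i hi => ?_⟩
    · rw [DFinsupp.sub_apply, sub_eq_zero, hfg2.1 j (Finset.mem_union_left _ hj),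
        hg2q j (Finset.mem_union_left _ hj), ← hf₀ j]
    · by_cases hiT : i ∈ T
      · have h1 : (f : Π₀ _ : I, Q) i = g2 i := hfg2.1 i (Finset.mem_union_right _ hiT)
        have h2 : (g2 : Π₀ _ : I, Q) i = f₀ i := by
          rw [hg2q i (Finset.mem_union_right _ hiT), hf₀ i]
        rw [DFinsupp.sub_apply, h1, h2, sub_self]
        exact AddSubgroup.zero_mem _
      · have hnJT : i ∉ J ∪ T := Finset.notMem_union.mpr ⟨hi, hiT⟩
        have e1 := hfg2.2 i hnJT
        have e2 := hg2g.2 i hi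
        have e3 := hgT i hiT
        have hcalc : (f : Π₀ _ : I, Q) i - f₀ i = (f i - g2 i) + (g2 i - g i) := by
          rw [← e3]; abel
        rw [DFinsupp.sub_apply, hcalc]
        exact AddSubgroup.add_mem _ e1 e2
  -- kernel closed
  have hker : IsClosed {f : Π₀ _ : I, Q | S f = 0} := by
    have : {f : Π₀ _ : I, Q | S f = 0} = S ⁻¹' {0} := rfl
    rw [this]
    exact isClosed_singleton.preimage hcont
  exact ⟨⟨hT2, hcomp⟩, ⟨hsurj, hcont, hopenmap⟩, hker⟩
end

section
/- Let k be a field with the discrete topology and let V be a complete, separated topological k-vector space with linear topology. Then V has a countable basis of neighborhoods of 0 if and only if there exists a sequence (V_n)_{n∈ℕ} of k-vector spaces, each equipped with the discrete topology, and an isomorphism of topological vector spaces (a k-linear homeomorphism) between V and the product ∏_{n∈ℕ} V_n equipped with the product topology. -/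
open Filter Topology

/-- A topological `k`-vector space has *linear topology* if the open `k`-subspaces form a basis
of neighborhoods of zero. -/
def HasLinearTopologyMod (k V : Type*) [Semiring k] [AddCommMonoid V] [Module k V]
    [TopologicalSpace V] : Prop :=
  ∀ s ∈ nhds (0 : V), ∃ U : Submodule k V, IsOpen (U : Set V) ∧ (U : Set V) ⊆ s

universe u v

/-- The key construction: from a countable decreasing basis of open submodules, build the
product decomposition. -/
theorem key8 {k : Type v} {V : Type u} [Field k] [AddCommGroup V] [Module k V]
    [TopologicalSpace V] [IsTopologicalAddGroup V] [T2Space V] (hcomp : IsCompleteTAG V)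
    (U : ℕ → Submodule k V) (hUopen : ∀ n, IsOpen (U n : Set V))
    (hU0 : U 0 = ⊤) (hUsucc : ∀ n, U (n + 1) ≤ U n)
    (hUbasis : ∀ s ∈ nhds (0 : V), ∃ n, (U n : Set V) ⊆ s) :
    ∃ (W : ℕ → Type u) (iA : ∀ n, AddCommGroup (W n)),
      letI := iA
      ∃ iM : ∀ n, Module k (W n),
        letI := iM
        letI : ∀ n, TopologicalSpace (W n) := fun _ => ⊥
        Nonempty (V ≃L[k] ∀ n, W n) := by
  classical
  have hUle : ∀ {m n : ℕ}, m ≤ n → U n ≤ U m := fun {m n} h =>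
    antitone_nat_of_succ_le hUsucc h
  -- choose complements `C n` of `U (n+1)` inside `U n`
  have hCex : ∀ n : ℕ, ∃ C : Submodule k V,
      C ≤ U n ∧ C ⊔ U (n + 1) = U n ∧ Disjoint C (U (n + 1)) := by
    intro n
    obtain ⟨C', hC'⟩ := Submodule.exists_isCompl ((U (n + 1)).comap (U n).subtype)
    refine ⟨C'.map (U n).subtype, Submodule.map_subtype_le _ _, ?_, ?_⟩
    · have h1 : Submodule.map (U n).subtype ((U (n + 1)).comap (U n).subtype)
          = U n ⊓ U (n + 1) := Submodule.map_comap_subtype _ _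
      have h2 : U n ⊓ U (n + 1) = U (n + 1) := inf_eq_right.2 (hUsucc n)
      calc C'.map (U n).subtype ⊔ U (n + 1)
          = C'.map (U n).subtype
              ⊔ Submodule.map (U n).subtype ((U (n + 1)).comap (U n).subtype) := by
            rw [h1, h2]
        _ = Submodule.map (U n).subtype (C' ⊔ (U (n + 1)).comap (U n).subtype) :=
            (Submodule.map_sup _ _ _).symm
        _ = Submodule.map (U n).subtype ⊤ := by rw [sup_comm, hC'.sup_eq_top]
        _ = U n := by rw [Submodule.map_top, Submodule.range_subtype]
    · rw [disjoint_iff_inf_le]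
      rintro x ⟨hx1, hx2⟩
      obtain ⟨y, hy, rfl⟩ := Submodule.mem_map.1 hx1
      have hy2 : y ∈ (U (n + 1)).comap (U n).subtype := hx2
      have : y ∈ C' ⊓ (U (n + 1)).comap (U n).subtype := ⟨hy, hy2⟩
      rw [inf_comm, hC'.inf_eq_bot] at this
      rw [Submodule.mem_bot] at this
      rw [this]
      simp
  choose C hCle hCsup hCdisj using hCex
  choose D hD using fun n => Submodule.exists_isCompl (U n)
  -- `C n` is complemented by `D n ⊔ U (n+1)` in all of `V`
  have hcompl : ∀ n, IsCompl (C n) (D n ⊔ U (n + 1)) := by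
    intro n
    constructor
    · rw [disjoint_iff_inf_le]
      rintro x ⟨hxC, hxDU⟩
      obtain ⟨d, hd, u, hu, rfl⟩ := Submodule.mem_sup.1 hxDU
      have hdUn : d ∈ U n := by
        have h : d = (d + u) - u := by abel
        rw [h]
        exact Submodule.sub_mem _ (hCle n hxC) (hUsucc n hu)
      have hd0 : d = 0 := by
        have := (hD n).disjoint.le_bot (⟨hdUn, hd⟩ : d ∈ U n ⊓ D n)
        simpa using this
      have hxu : d + u = u := by rw [hd0, zero_add]
      have : d + u ∈ C n ⊓ U (n + 1) := ⟨hxC, by rw [hxu]; exact hu⟩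
      rw [(hCdisj n).eq_bot] at this
      exact this
    · rw [codisjoint_iff]
      calc C n ⊔ (D n ⊔ U (n + 1)) = (C n ⊔ U (n + 1)) ⊔ D n := by
            rw [sup_comm (D n) (U (n + 1)), ← sup_assoc]
        _ = U n ⊔ D n := by rw [hCsup n]
        _ = ⊤ := codisjoint_iff.1 (hD n).codisjoint
  -- the projections
  let P : ℕ → V →ₗ[k] V := fun n =>
    (C n).subtype ∘ₗ Submodule.linearProjOfIsCompl (C n) (D n ⊔ U (n + 1)) (hcompl n)
  have hPmem : ∀ n x, P n x ∈ C n := fun n x =>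
    (Submodule.linearProjOfIsCompl (C n) (D n ⊔ U (n + 1)) (hcompl n) x).2
  have hPleft : ∀ n x, x ∈ C n → P n x = x := fun n x hx =>
    congrArg Subtype.val (Submodule.linearProjOfIsCompl_apply_left (hcompl n) ⟨x, hx⟩)
  have hPright : ∀ n x, x ∈ U (n + 1) → P n x = 0 := fun n x hx =>
    congrArg Subtype.val <|
      Submodule.linearProjOfIsCompl_apply_right' (hcompl n) (x := x) (Submodule.mem_sup_right hx)
  -- the remainder sequence
  let r : V → ℕ → V := fun v n => Nat.rec (motive := fun _ => V) v (fun m x => x - P m x) n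
  have hr0 : ∀ v, r v 0 = v := fun _ => rfl
  have hrsucc : ∀ v n, r v (n + 1) = r v n - P n (r v n) := fun _ _ => rfl
  have hrU : ∀ v n, r v n ∈ U n := by
    intro v n
    induction n with
    | zero => rw [hr0, hU0]; trivial
    | succ n ih =>
      rw [← hCsup n] at ih
      obtain ⟨c, hc, u, hu, hcu⟩ := Submodule.mem_sup.1 ih
      have hP : P n (r v n) = c := by
        rw [← hcu, map_add, hPleft n c hc, hPright n u hu, add_zero]
      rw [hrsucc, hP, ← hcu, add_sub_cancel_left]
      exact hu
  have hradd : ∀ v w n, r (v + w) n = r v n + r w n := by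
    intro v w n
    induction n with
    | zero => rfl
    | succ n ih => rw [hrsucc, hrsucc, hrsucc, ih, map_add]; abel
  have hrsmul : ∀ (a : k) (v : V) (n : ℕ), r (a • v) n = a • r v n := by
    intro a v n
    induction n with
    | zero => rfl
    | succ n ih => rw [hrsucc, hrsucc, ih, map_smul, smul_sub]
  have hrsum : ∀ v n, r v n = v - ∑ m ∈ Finset.range n, P m (r v m) := by
    intro v n
    induction n with
    | zero => simp [hr0]
    | succ n ih => rw [hrsucc, Finset.sum_range_succ, ih]; abel
  have hrconst : ∀ v m, v ∈ U m → ∀ n, n ≤ m → r v n = v := by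
    intro v m hv n hn
    induction n with
    | zero => rfl
    | succ n ih =>
      have hn' : n ≤ m := Nat.le_of_succ_le hn
      rw [hrsucc, ih hn', hPright n v (hUle hn hv), sub_zero]
  -- the coordinate maps
  let ψ : ℕ → V →ₗ[k] V := fun n =>
    { toFun := fun v => P n (r v n)
      map_add' := fun v w => by rw [hradd, map_add]
      map_smul' := fun a v => by rw [hrsmul, map_smul]; rfl }
  have hψ : ∀ n v, ψ n v = P n (r v n) := fun _ _ => rfl
  have hkeropen : ∀ n, IsOpen ((LinearMap.ker (ψ n) : Submodule k V) : Set V) := by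
    intro n
    refine Submodule.isOpen_mono (U := U (n + 1)) ?_ (hUopen (n + 1))
    intro x hx
    rw [LinearMap.mem_ker, hψ, hrconst x (n + 1) hx n (Nat.le_succ n), hPright n x hx]
  -- the candidate isomorphism
  let φ : V →ₗ[k] ∀ n, ↥(C n) :=
    { toFun := fun v n => ⟨ψ n v, hψ n v ▸ hPmem n (r v n)⟩
      map_add' := fun v w => funext fun n => Subtype.ext (map_add (ψ n) v w)
      map_smul' := fun a v => funext fun n => Subtype.ext (map_smul (ψ n) a v) }
  have hφ : ∀ v n, ((φ v n : V)) = ψ n v := fun _ _ => rfl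
  have hbasisU : (nhds (0 : V)).HasBasis (fun _ : ℕ => True) (fun n => (U n : Set V)) :=
    ⟨fun t => ⟨fun ht => (hUbasis t ht).imp (fun n hn => ⟨trivial, hn⟩),
      fun ⟨i, _, hi⟩ => mem_of_superset ((hUopen i).mem_nhds (U i).zero_mem) hi⟩⟩
  -- injectivity
  have hinj : Function.Injective φ := by
    refine (injective_iff_map_eq_zero φ).2 fun v hv => ?_
    have hw : ∀ n, ψ n v = 0 := fun n => by
      have h1 := congrFun hv n
      exact congrArg Subtype.val h1
    have hrv : ∀ n, r v n = v := by
      intro n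
      induction n with
      | zero => rfl
      | succ n ih =>
        have : P n (r v n) = 0 := by rw [← hψ, hw n]
        rw [hrsucc, this, sub_zero, ih]
    by_contra hv0
    obtain ⟨n, hn⟩ := hUbasis _ (compl_singleton_mem_nhds (Ne.symm hv0))
    exact hn (hrv n ▸ hrU v n) rfl
  -- surjectivity
  have hsurj : Function.Surjective φ := by
    intro c
    set s : ℕ → V := fun N => ∑ m ∈ Finset.range N, (c m : V) with hs
    have hdiff : ∀ {i n : ℕ}, i ≤ n → s n - s i ∈ U i := by
      intro i n hin
      have h : s n - s i = ∑ m ∈ Finset.Ico i n, (c m : V) :=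
        (Finset.sum_Ico_eq_sub _ hin).symm
      rw [h]
      exact Submodule.sum_mem _ fun m hm =>
        hUle (Finset.mem_Ico.1 hm).1 (hCle m (c m).2)
    obtain ⟨v, htail⟩ : ∃ v : V, ∀ i, v - s i ∈ U i := by
      letI : UniformSpace V := IsTopologicalAddGroup.rightUniformSpace V
      haveI : IsUniformAddGroup V := isUniformAddGroup_of_addCommGroup
      haveI : CompleteSpace V := hcomp
      have hUnif : (uniformity V).HasBasis (fun _ : ℕ => True)
          (fun i => {p : V × V | p.2 - p.1 ∈ U i}) := by
        rw [uniformity_eq_comap_nhds_zero V]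
        exact hbasisU.comap _
      have hcauchy : CauchySeq s := by
        refine hUnif.cauchySeq_iff.2 fun i _ => ⟨i, fun m hm n hn => ?_⟩
        show s n - s m ∈ U i
        have h := Submodule.sub_mem (U i) (hdiff hn) (hdiff hm)
        simpa using h
      obtain ⟨v, hv⟩ := cauchySeq_tendsto_of_complete hcauchy
      refine ⟨v, fun i => ?_⟩
      have hcl : IsClosed ((U i : Set V)) :=
        (U i).toAddSubgroup.isClosed_of_isOpen (hUopen i)
      refine hcl.mem_of_tendsto (hv.sub_const (s i)) ?_
      filter_upwards [Filter.eventually_ge_atTop i] with n hn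
      exact hdiff hn
    have hPn : ∀ n, P n (v - s n) = c n := by
      intro n
      have hsucc : s (n + 1) = s n + (c n : V) := Finset.sum_range_succ _ n
      have hdec : v - s n = (c n : V) + (v - s (n + 1)) := by rw [hsucc]; abel
      rw [hdec, map_add, hPleft n _ (c n).2, hPright n _ (htail (n + 1)), add_zero]
    have hkey : ∀ n, r v n = v - s n := by
      intro n
      induction n with
      | zero => simp [hr0, hs]
      | succ n ih =>
        have hsucc : s (n + 1) = s n + (c n : V) := Finset.sum_range_succ _ n
        rw [hrsucc, ih, hPn n, hsucc]
        abel
    refine ⟨v, funext fun n => Subtype.ext ?_⟩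
    show ψ n v = (c n : V)
    rw [hψ, hkey n, hPn n]
  refine ⟨fun n => ↥(C n), fun n => inferInstance, fun n => inferInstance, ?_⟩
  letI : ∀ n, TopologicalSpace ↥(C n) := fun _ => ⊥
  haveI : ∀ n, DiscreteTopology ↥(C n) := fun n => ⟨rfl⟩
  -- continuity of `φ`
  have hcont : Continuous (φ : V → ∀ n, ↥(C n)) := by
    refine continuous_pi fun n => ?_
    refine continuous_discrete_rng.2 fun x => ?_
    rcases Set.eq_empty_or_nonempty ((fun v => φ v n) ⁻¹' {x}) with h | ⟨v₀, hv₀⟩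
    · rw [h]; exact isOpen_empty
    · have hv₀x : φ v₀ n = x := hv₀
      have hv₀' : ψ n v₀ = (x : V) := by
        rw [← hφ v₀ n, hv₀x]
      have hset : (fun v => φ v n) ⁻¹' {x}
          = (fun v => v - v₀) ⁻¹' (LinearMap.ker (ψ n) : Set V) := by
        ext v
        simp only [Set.mem_preimage, Set.mem_singleton_iff, SetLike.mem_coe, LinearMap.mem_ker,
          map_sub]
        constructor
        · intro h
          have : ψ n v = (x : V) := by rw [← hφ v n, h]
          rw [this, hv₀', sub_self]
        · intro h
          have : ψ n v = ψ n v₀ := by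
            have := sub_eq_zero.1 h
            exact this
          apply Subtype.ext
          rw [hφ v n, this, ← hφ v₀ n, hv₀x]
      rw [hset]
      exact (hkeropen n).preimage (continuous_id.sub continuous_const)
  -- the linear equivalence and continuity of its inverse
  let e : V ≃ₗ[k] ∀ n, ↥(C n) := LinearEquiv.ofBijective φ ⟨hinj, hsurj⟩
  haveI : ∀ n, IsTopologicalAddGroup ↥(C n) := fun n =>
    { continuous_add := continuous_of_discreteTopology
      continuous_neg := continuous_of_discreteTopology }
  have hconte : Continuous (e.symm : (∀ n, ↥(C n)) → V) := by
    have h0 : ContinuousAt (e.symm : (∀ n, ↥(C n)) →ₗ[k] V) 0 := by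
      rw [ContinuousAt, map_zero]
      rw [hbasisU.tendsto_right_iff]
      intro m _
      have hopen : IsOpen {c : ∀ n, ↥(C n) | ∀ i < m, c i = 0} := by
        have h : {c : ∀ n, ↥(C n) | ∀ i < m, c i = 0}
            = ⋂ i ∈ Finset.range m, (fun c : ∀ n, ↥(C n) => c i) ⁻¹' {0} := by
          ext c
          simp [Finset.mem_range]
        rw [h]
        exact isOpen_biInter_finset fun i _ =>
          (isOpen_discrete _).preimage (continuous_apply i)
      have hmem : {c : ∀ n, ↥(C n) | ∀ i < m, c i = 0} ∈ nhds (0 : ∀ n, ↥(C n)) :=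
        hopen.mem_nhds (by simp)
      filter_upwards [hmem] with c hc
      set w : V := e.symm c with hw
      have hφw : ∀ i, ψ i w = (c i : V) := fun i => by
        have h1 : φ w = c := e.apply_symm_apply c
        rw [← hφ w i, h1]
      have hrw : r w m = w := by
        rw [hrsum]
        have hz : ∀ i ∈ Finset.range m, P i (r w i) = 0 := fun i hi => by
          rw [← hψ, hφw i, hc i (Finset.mem_range.1 hi), Submodule.coe_zero]
        rw [Finset.sum_eq_zero hz, sub_zero]
      have hwmem : w ∈ U m := by
        have h2 := hrU w m
        rwa [hrw] at h2
      exact hwmem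
    have := continuous_of_continuousAt_zero (e.symm : (∀ n, ↥(C n)) →ₗ[k] V) h0
    exact this
  exact ⟨{ e with continuous_toFun := hcont, continuous_invFun := hconte }⟩

/-- Let `k` be a field with the discrete topology and let `V` be a complete,
separated topological `k`-vector space with linear topology.  Then `V` has a countable basis of
neighborhoods of `0` if and only if there is a sequence `(W n)_{n ∈ ℕ}` of `k`-vector spaces,
each equipped with the discrete topology, and a `k`-linear homeomorphism between `V` and the
product `∏ n, W n` with the product topology. -/
theorem statement8 {k : Type v} {V : Type u} [Field k] [TopologicalSpace k] [DiscreteTopology k]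
    [AddCommGroup V] [Module k V] [TopologicalSpace V] [IsTopologicalAddGroup V]
    [ContinuousSMul k V]
    (hlin : HasLinearTopologyMod k V) [T2Space V] (hcomp : IsCompleteTAG V) :
    (nhds (0 : V)).IsCountablyGenerated ↔
      ∃ (W : ℕ → Type u) (iA : ∀ n, AddCommGroup (W n)),
        letI := iA
        ∃ iM : ∀ n, Module k (W n),
          letI := iM
          letI : ∀ n, TopologicalSpace (W n) := fun _ => ⊥
          Nonempty (V ≃L[k] ∀ n, W n) := by
  constructor
  · intro hcg
    obtain ⟨x, hx⟩ := (nhds (0 : V)).exists_antitone_basis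
    choose U' hU'open hU'sub using fun n => hlin (x n) (hx.toHasBasis.mem_of_mem trivial)
    set U : ℕ → Submodule k V :=
      fun n => Nat.rec (motive := fun _ => Submodule k V) ⊤ (fun m S => S ⊓ U' m) n with hU
    have hUsucc : ∀ n, U (n + 1) ≤ U n := fun n => inf_le_left
    have hUopen : ∀ n, IsOpen (U n : Set V) := by
      intro n
      induction n with
      | zero =>
        have h : (U 0 : Set V) = Set.univ := rfl
        rw [h]
        exact isOpen_univ
      | succ n ih =>
        have h : (U (n + 1) : Set V) = (U n : Set V) ∩ (U' n : Set V) := rfl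
        rw [h]
        exact ih.inter (hU'open n)
    have hUbasis : ∀ s ∈ nhds (0 : V), ∃ n, (U n : Set V) ⊆ s := by
      intro s hs
      obtain ⟨n, -, hn⟩ := hx.toHasBasis.mem_iff.1 hs
      refine ⟨n + 1, ?_⟩
      intro y hy
      exact hn (hU'sub n (inf_le_right (a := U n) hy))
    exact key8 hcomp U hUopen rfl hUsucc hUbasis
  · rintro ⟨W, iA, iM, ⟨e⟩⟩
    letI := iA
    letI := iM
    letI : ∀ n, TopologicalSpace (W n) := fun _ => ⊥
    haveI : ∀ n, DiscreteTopology (W n) := fun n => ⟨rfl⟩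
    haveI : (nhds (e 0)).IsCountablyGenerated := by
      haveI : ∀ n, FirstCountableTopology (W n) := fun n => inferInstance
      infer_instance
    have h : nhds (0 : V) = Filter.comap e.toHomeomorph (nhds (e.toHomeomorph 0)) := by
      rw [Homeomorph.comap_nhds_eq, Homeomorph.symm_apply_apply]
    rw [h]
    exact Filter.comap.isCountablyGenerated _ _
end

section
/- Let k be a field with the discrete topology, let V be a topological k-vector space with linear topology, and let U ⊆ V be a k-subspace equipped with the subspace topology. Let W be a complete, separated topological k-vector space with linear topology having a countable basis of neighborhoods of 0. Then every continuous k-linear map f : U → W extends to a continuous k-linear map g : V → W, i.e., g restricted to U equals f. -/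
open Filter Topology
open Submodule

/-- Algebraic extension step. -/
theorem stepLemma9 {k V W : Type*} [Field k] [AddCommGroup V] [Module k V]
    [AddCommGroup W] [Module k W]
    (U V' : Submodule k V) (W' : Submodule k W) (f : U →ₗ[k] W)
    (hf : ∀ x : U, (x : V) ∈ V' → f x ∈ W') (prev : V →ₗ[k] W)
    (hprev : ∀ u : U, prev u = f u) :
    ∃ next : V →ₗ[k] W, (∀ u : U, next u = f u) ∧ (∀ v ∈ V', next v ∈ W') ∧
      (∀ v : V, next v - prev v ∈ V'.map prev) := by
  -- complement D of U ⊓ V' inside V'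
  obtain ⟨D₀, hD₀⟩ := Submodule.exists_isCompl ((U ⊓ V').comap V'.subtype)
  set D : Submodule k V := D₀.map V'.subtype with hD
  have hDle : D ≤ V' := by
    rw [hD]; rintro x ⟨y, -, rfl⟩; exact y.2
  have hsupD : (U ⊓ V') ⊔ D = V' := by
    have h1 : ((U ⊓ V').comap V'.subtype).map V'.subtype = U ⊓ V' := by
      rw [Submodule.map_comap_subtype, inf_eq_right.2 inf_le_right]
    calc (U ⊓ V') ⊔ D = (((U ⊓ V').comap V'.subtype) ⊔ D₀).map V'.subtype := by
          rw [Submodule.map_sup, h1]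
      _ = V' := by rw [codisjoint_iff.1 hD₀.codisjoint, Submodule.map_top,
          Submodule.range_subtype]
  have hdisjD : Disjoint (U ⊓ V') D := by
    rw [Submodule.disjoint_def]
    rintro x hx ⟨y, hy, rfl⟩
    have : y ∈ (U ⊓ V').comap V'.subtype := hx
    have := Submodule.disjoint_def.1 hD₀.disjoint y this hy
    simp [this]
  -- complement C of U ⊔ V' in V
  obtain ⟨C, hC⟩ := Submodule.exists_isCompl (U ⊔ V')
  -- IsCompl U (D ⊔ C)
  have hUD : U ⊔ D = U ⊔ V' := by
    apply le_antisymm (sup_le le_sup_left (hDle.trans le_sup_right))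
    refine sup_le le_sup_left ?_
    rw [← hsupD]
    exact sup_le (inf_le_left.trans le_sup_left) le_sup_right
  have hcompl : IsCompl U (D ⊔ C) := by
    constructor
    · rw [Submodule.disjoint_def]
      intro x hxU hxDC
      obtain ⟨d, hd, c, hc', rfl⟩ := Submodule.mem_sup.1 hxDC
      have h1 : d + c ∈ U ⊔ V' := (le_sup_left : U ≤ U ⊔ V') hxU
      have h2 : d ∈ U ⊔ V' := (le_sup_right : V' ≤ U ⊔ V') (hDle hd)
      have hcUV : c ∈ U ⊔ V' := by
        have := Submodule.sub_mem _ h1 h2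
        simpa using this
      have hc0 : c = 0 := Submodule.disjoint_def.1 hC.disjoint c hcUV hc'
      subst hc0
      have hdU : d ∈ U ⊓ V' := ⟨by simpa using hxU, hDle hd⟩
      have hd0 : d = 0 := Submodule.disjoint_def.1 hdisjD d hdU hd
      simp [hd0]
    · rw [codisjoint_iff, ← sup_assoc, hUD, codisjoint_iff.1 hC.codisjoint]
  -- the two projections
  set piU : V →ₗ[k] U := U.projectionOnto (D ⊔ C) hcompl with hpiU
  set piC : V →ₗ[k] C := C.projectionOnto (U ⊔ V') hC.symm with hpiC
  refine ⟨f ∘ₗ piU + prev ∘ₗ C.subtype ∘ₗ piC, ?_, ?_, ?_⟩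
  · intro u
    have h1 : piU (u : V) = u := Submodule.projectionOnto_apply_left hcompl u
    have h2 : piC (u : V) = 0 :=
      Submodule.projectionOnto_apply_of_mem_right hC.symm ((le_sup_left : U ≤ U ⊔ V') u.2)
    simp [h1, h2]
  · intro v hv
    obtain ⟨a, ha, d, hd, rfl⟩ := Submodule.mem_sup.1 (hsupD ▸ hv)
    have h2 : piC (a + d) = 0 :=
      Submodule.projectionOnto_apply_of_mem_right hC.symm
        ((le_sup_right : V' ≤ U ⊔ V') hv)
    have h3 : piU a = ⟨a, ha.1⟩ :=
      Submodule.projectionOnto_apply_left hcompl ⟨a, ha.1⟩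
    have h4 : piU d = 0 :=
      Submodule.projectionOnto_apply_of_mem_right hcompl ((le_sup_left : D ≤ D ⊔ C) hd)
    have : piU (a + d) = ⟨a, ha.1⟩ := by rw [map_add, h3, h4, add_zero]
    simp only [LinearMap.add_apply, LinearMap.comp_apply, h2, map_zero, add_zero, this]
    exact hf _ ha.2
  · intro v
    -- decompose v = u + d + c
    have hv : v ∈ U ⊔ (D ⊔ C) := by rw [codisjoint_iff.1 hcompl.codisjoint]; trivial
    obtain ⟨u, hu, w, hw, rfl⟩ := Submodule.mem_sup.1 hv
    obtain ⟨d, hd, c, hc', rfl⟩ := Submodule.mem_sup.1 hw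
    have h1 : piU (u + (d + c)) = ⟨u, hu⟩ := by
      rw [map_add, Submodule.projectionOnto_apply_left hcompl ⟨u, hu⟩,
        Submodule.projectionOnto_apply_of_mem_right hcompl hw, add_zero]
    have h2 : piC (u + (d + c)) = ⟨c, hc'⟩ := by
      rw [show u + (d + c) = (u + d) + c by abel, map_add,
        Submodule.projectionOnto_apply_of_mem_right hC.symm (x := u + d)
          (hUD ▸ Submodule.add_mem _ ((le_sup_left : U ≤ U ⊔ D) hu)
            ((le_sup_right : D ≤ U ⊔ D) hd)),
        Submodule.projectionOnto_apply_left hC.symm ⟨c, hc'⟩, zero_add]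
    simp only [LinearMap.add_apply, LinearMap.comp_apply, h1, h2]
    have : f ⟨u, hu⟩ + prev c - prev (u + (d + c)) = prev (-d) := by
      rw [← hprev ⟨u, hu⟩]
      simp only [map_add, map_neg]
      abel
    rw [show (Submodule.subtype C) ⟨c, hc'⟩ = c from rfl, this]
    exact Submodule.mem_map_of_mem (Submodule.neg_mem _ (hDle hd))

theorem limitAux9 {k V W : Type*} [Field k] [AddCommGroup V] [Module k V] [TopologicalSpace V]
    [IsTopologicalAddGroup V]
    [AddCommGroup W] [Module k W] [UniformSpace W] [IsUniformAddGroup W] [CompleteSpace W]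
    [T2Space W] [ContinuousConstSMul k W]
    (U : Submodule k V) (f : U →ₗ[k] W)
    (Vseq : ℕ → Submodule k V) (Wseq : ℕ → Submodule k W)
    (hVopen : ∀ n, IsOpen (Vseq n : Set V))
    (hWclosed : ∀ n, IsClosed (Wseq n : Set W))
    (hWbasis : ∀ t ∈ nhds (0 : W), ∃ n, (Wseq n : Set W) ⊆ t)
    (g : ℕ → (V →ₗ[k] W))
    (hgf : ∀ n (u : U), g n (u : V) = f u)
    (hdiff2 : ∀ N n, N ≤ n → ∀ v : V, g n v - g N v ∈ Wseq N)
    (hgV : ∀ n, ∀ v ∈ Vseq n, g n v ∈ Wseq n) :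
    ∃ G : V →L[k] W, ∀ u : U, G (u : V) = f u := by
  have hcauchy : ∀ v : V, ∃ w : W, Tendsto (fun n => g n v) atTop (nhds w) := by
    intro v
    have hc : CauchySeq fun n => g n v := by
      apply cauchySeq_of_controlled (fun N => {p : W × W | p.2 - p.1 ∈ Wseq N})
      · intro t ht
        rw [uniformity_eq_comap_nhds_zero W] at ht
        obtain ⟨r, hr, hrt⟩ := Filter.mem_comap.1 ht
        obtain ⟨N, hN⟩ := hWbasis r hr
        exact ⟨N, fun p hp => hrt (hN hp)⟩
      · intro N m n hm hn
        have h1 := hdiff2 N m hm v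
        have h2 := hdiff2 N n hn v
        have h3 : g n v - g m v = (g n v - g N v) - (g m v - g N v) := by abel
        show g n v - g m v ∈ Wseq N
        rw [h3]; exact sub_mem h2 h1
    exact cauchySeq_tendsto_of_complete hc
  choose glim hglim using hcauchy
  have hadd : ∀ v v', glim (v + v') = glim v + glim v' := by
    intro v v'
    have h1 : Tendsto (fun n => g n v + g n v') atTop (nhds (glim v + glim v')) :=
      (hglim v).add (hglim v')
    have h2 : (fun n => g n (v + v')) = fun n => g n v + g n v' := by
      funext n; exact map_add _ _ _
    exact tendsto_nhds_unique (hglim (v + v')) (h2 ▸ h1)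
  have hsmul : ∀ (c : k) (v : V), glim (c • v) = c • glim v := by
    intro c v
    have h1 : Tendsto (fun n => c • g n v) atTop (nhds (c • glim v)) := (hglim v).const_smul c
    have h2 : (fun n => g n (c • v)) = fun n => c • g n v := by
      funext n; exact map_smul _ _ _
    exact tendsto_nhds_unique (hglim (c • v)) (h2 ▸ h1)
  set G : V →ₗ[k] W :=
    { toFun := glim, map_add' := hadd, map_smul' := hsmul } with hGdef
  have hGf : ∀ u : U, G (u : V) = f u := by
    intro u
    have h2 : (fun n => g n (u : V)) = fun _ => f u := funext fun n => hgf n u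
    exact tendsto_nhds_unique (hglim (u : V)) (h2 ▸ tendsto_const_nhds)
  have hGV : ∀ N, ∀ v ∈ Vseq N, G v ∈ Wseq N := by
    intro N v hv
    have hev : ∀ n ≥ N, g n v ∈ (Wseq N : Set W) := by
      intro n hn
      have h1 := hdiff2 N n hn v
      have h0 := hgV N v hv
      have h3 : g n v = (g n v - g N v) + g N v := by abel
      rw [h3]; exact add_mem h1 h0
    exact (hWclosed N).mem_of_tendsto (hglim v) (eventually_atTop.2 ⟨N, hev⟩)
  have hGcont : Continuous G := by
    apply continuous_of_continuousAt_zero G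
    unfold ContinuousAt
    rw [map_zero]
    intro s hs
    obtain ⟨N, hN⟩ := hWbasis s hs
    exact Filter.mem_map.2 (Filter.mem_of_superset ((hVopen N).mem_nhds (zero_mem _))
      fun v hv => hN (hGV N v hv))
  exact ⟨⟨G, hGcont⟩, hGf⟩



/-- Let `k` be a field with the discrete topology, `V` a topological `k`-vector
space with linear topology, `U ⊆ V` a subspace with the subspace topology, and `W` a complete,
separated topological `k`-vector space with linear topology having a countable basis of
neighborhoods of `0`.  Then every continuous `k`-linear map `f : U → W` extends to a continuous
`k`-linear map `g : V → W`. -/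
theorem statement9 {k V W : Type*} [Field k] [TopologicalSpace k] [DiscreteTopology k]
    [AddCommGroup V] [Module k V] [TopologicalSpace V] [IsTopologicalAddGroup V]
    [ContinuousSMul k V] (hV : HasLinearTopologyMod k V)
    [AddCommGroup W] [Module k W] [TopologicalSpace W] [IsTopologicalAddGroup W]
    [ContinuousSMul k W] (hW : HasLinearTopologyMod k W)
    [T2Space W] (hWcomp : IsCompleteTAG W) (hWcount : (nhds (0 : W)).IsCountablyGenerated)
    (U : Submodule k V) (f : U →L[k] W) :
    ∃ g : V →L[k] W, ∀ u : U, g (u : V) = f u := by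
  classical
  set fl : U →ₗ[k] W := (f : U →ₗ[k] W) with hfl
  -- Step 1: antitone basis of open submodules of W
  obtain ⟨s, hs⟩ := (nhds (0 : W)).exists_antitone_basis
  have hsmem : ∀ n, s n ∈ nhds (0 : W) := fun n => hs.toHasBasis.mem_of_mem trivial
  choose B hBopen hBsub using fun n => hW (s n) (hsmem n)
  set Wseq : ℕ → Submodule k W :=
    fun n => Nat.rec (B 0) (fun m acc => acc ⊓ B (m + 1)) n with hWseq
  have hWseq_succ : ∀ n, Wseq (n + 1) = Wseq n ⊓ B (n + 1) := fun n => rfl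
  have hWopen : ∀ n, IsOpen (Wseq n : Set W) := by
    intro n
    induction n with
    | zero => exact hBopen 0
    | succ m ih =>
        rw [hWseq_succ]
        exact ih.inter (hBopen (m + 1))
  have hWleB : ∀ n, Wseq n ≤ B n := by
    intro n
    cases n with
    | zero => exact le_rfl
    | succ m => exact inf_le_right
  have hWanti : Antitone Wseq := antitone_nat_of_succ_le fun n => by
    rw [hWseq_succ]; exact inf_le_left
  have hWbasis : ∀ t ∈ nhds (0 : W), ∃ n, (Wseq n : Set W) ⊆ t := by
    intro t ht
    obtain ⟨n, -, hn⟩ := hs.toHasBasis.mem_iff.1 ht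
    exact ⟨n, fun x hx => hn (hBsub n (hWleB n hx))⟩
  have hWclosed : ∀ n, IsClosed (Wseq n : Set W) :=
    fun n => (Wseq n).toAddSubgroup.isClosed_of_isOpen (hWopen n)
  -- Step 2: open submodules of V adapted to f
  have hA : ∀ n, ∃ A : Submodule k V, IsOpen (A : Set V) ∧
      ∀ x : U, (x : V) ∈ A → fl x ∈ Wseq n := by
    intro n
    have h0 : (Wseq n : Set W) ∈ nhds (0 : W) := (hWopen n).mem_nhds (zero_mem _)
    have h1 : (fl ⁻¹' (Wseq n)) ∈ nhds (0 : U) := by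
      have := f.continuous.continuousAt (x := (0 : U))
      rw [ContinuousAt, map_zero] at this
      exact this h0
    rw [nhds_subtype_eq_comap] at h1
    obtain ⟨t, ht, hsub⟩ := Filter.mem_comap.1 h1
    obtain ⟨A, hAopen, hAsub⟩ := hV t (by simpa using ht)
    exact ⟨A, hAopen, fun x hx => hsub (hAsub hx)⟩
  choose A hAopen hAf using hA
  set Vseq : ℕ → Submodule k V :=
    fun n => Nat.rec (A 0) (fun m acc => acc ⊓ A (m + 1)) n with hVseq
  have hVseq_succ : ∀ n, Vseq (n + 1) = Vseq n ⊓ A (n + 1) := fun n => rfl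
  have hVopen : ∀ n, IsOpen (Vseq n : Set V) := by
    intro n
    induction n with
    | zero => exact hAopen 0
    | succ m ih => rw [hVseq_succ]; exact ih.inter (hAopen (m + 1))
  have hVleA : ∀ n, Vseq n ≤ A n := by
    intro n
    cases n with
    | zero => exact le_rfl
    | succ m => exact inf_le_right
  have hVanti : Antitone Vseq := antitone_nat_of_succ_le fun n => by
    rw [hVseq_succ]; exact inf_le_left
  have hVf : ∀ n (x : U), (x : V) ∈ Vseq n → fl x ∈ Wseq n :=
    fun n x hx => hAf n x (hVleA n hx)
  -- Step 3: sequence of algebraic extensions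
  obtain ⟨F, hF⟩ := LinearMap.exists_extend fl
  have hF' : ∀ u : U, F (u : V) = fl u := fun u => DFunLike.congr_fun hF u
  have step' : ∀ (n : ℕ) (prev : V →ₗ[k] W), ∃ g : V →ₗ[k] W,
      ((∀ u : U, prev (u : V) = fl u) →
        (∀ u : U, g (u : V) = fl u) ∧ (∀ v ∈ Vseq n, g v ∈ Wseq n) ∧
        (∀ v : V, g v - prev v ∈ (Vseq n).map prev)) := by
    intro n prev
    by_cases hp : ∀ u : U, prev (u : V) = fl u
    · obtain ⟨g, h1, h2, h3⟩ := stepLemma9 U (Vseq n) (Wseq n) fl (hVf n) prev hp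
      exact ⟨g, fun _ => ⟨h1, h2, h3⟩⟩
    · exact ⟨0, fun h => absurd h hp⟩
  choose Φ hΦ using step'
  set g : ℕ → (V →ₗ[k] W) :=
    fun n => Nat.rec (Φ 0 F) (fun m gm => Φ (m + 1) gm) n with hg
  have hg_succ : ∀ n, g (n + 1) = Φ (n + 1) (g n) := fun n => rfl
  have hgf : ∀ n (u : U), g n (u : V) = fl u := by
    intro n
    induction n with
    | zero => exact (hΦ 0 F hF').1
    | succ m ih => rw [hg_succ]; exact (hΦ (m + 1) (g m) ih).1
  have hgV : ∀ n, ∀ v ∈ Vseq n, g n v ∈ Wseq n := by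
    intro n
    cases n with
    | zero => exact (hΦ 0 F hF').2.1
    | succ m => rw [hg_succ]; exact (hΦ (m + 1) (g m) (hgf m)).2.1
  have hgdiff : ∀ n (v : V), g (n + 1) v - g n v ∈ (Vseq (n + 1)).map (g n) := by
    intro n v
    rw [hg_succ]
    exact (hΦ (n + 1) (g n) (hgf n)).2.2 v
  have hdiff2 : ∀ N n, N ≤ n → ∀ v : V, g n v - g N v ∈ Wseq N := by
    intro N n hNn
    induction n with
    | zero =>
        intro v
        have : N = 0 := Nat.le_zero.1 hNn
        subst this
        simp
    | succ m ih =>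
        intro v
        rcases Nat.lt_or_ge N (m + 1) with h | h
        · have hNm : N ≤ m := Nat.lt_succ_iff.1 h
          have h1 := ih hNm v
          obtain ⟨x, hx, heq⟩ := hgdiff m v
          have h2 : g (m + 1) v - g m v ∈ Wseq N := by
            rw [← heq]
            exact hWanti hNm (hgV m x (hVanti (Nat.le_succ m) hx))
          have h3 : g (m + 1) v - g N v = (g (m + 1) v - g m v) + (g m v - g N v) := by abel
          rw [h3]; exact add_mem h2 h1
        · have : N = m + 1 := le_antisymm hNn h
          subst this
          simp
  -- Step 4: pass to the limit using completeness
  letI : UniformSpace W := IsTopologicalAddGroup.rightUniformSpace W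
  haveI hUAG : IsUniformAddGroup W := isUniformAddGroup_of_addCommGroup
  haveI hCS : CompleteSpace W := hWcomp
  obtain ⟨G, hG⟩ := limitAux9 U fl Vseq Wseq hVopen hWclosed hWbasis g hgf hdiff2 hgV
  exact ⟨G, hG⟩
end

section
/- Let k be a field with the discrete topology, let V be a topological k-vector space with linear topology, and let U ⊆ V be a k-subspace which, equipped with the subspace topology, is complete, separated, and has a countable basis of neighborhoods of 0. Then there exists a topological k-vector space W with linear topology and an isomorphism of topological vector spaces (a k-linear homeomorphism) V ≅ U × W (product topology) under which the inclusion U → V corresponds to the map u ↦ (u, 0). Equivalently, there exists a continuous k-linear retraction r : V → U with r(u) = u for all u ∈ U. -/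
open Filter Topology

theorem step_aux' {k V : Type*} [Field k] [AddCommGroup V] [Module k V]
    (U : Submodule k V) (W Wp : Submodule k V) (hWW : W ≤ Wp) (g : V →ₗ[k] ↥U)
    (hg0 : ∀ w ∈ Wp, g w = 0) (hg1 : ∀ u : ↥U, g ↑u - u ∈ Wp.comap U.subtype) :
    ∃ f : V →ₗ[k] ↥U, (∀ w ∈ W, f w = 0) ∧ (∀ u : ↥U, f ↑u - u ∈ W.comap U.subtype) ∧
      ∀ v : V, f v - g v ∈ Wp.comap U.subtype := by
  classical
  set α : ↥U →ₗ[k] V ⧸ W := W.mkQ.comp U.subtype with hα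
  have hker : LinearMap.ker α = W.comap U.subtype := by
    rw [hα, LinearMap.ker_comp, Submodule.ker_mkQ]
  obtain ⟨s, hs⟩ := LinearMap.exists_rightInverse_of_surjective
      (W.comap U.subtype).mkQ (Submodule.range_mkQ _)
  set e := LinearMap.quotKerEquivRange α with he
  set ψ : ↥(LinearMap.range α) →ₗ[k] ↥U :=
    s.comp (((Submodule.quotEquivOfEq _ _ hker).toLinearMap).comp e.symm.toLinearMap) with hψ
  obtain ⟨Ψ, hΨ⟩ := LinearMap.exists_extend ψ
  have key : ∀ u : ↥U, Ψ (α u) = s ((W.comap U.subtype).mkQ u) := by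
    intro u
    have h1 : α u ∈ LinearMap.range α := LinearMap.mem_range_self α u
    have h2 : Ψ (α u) = ψ ⟨α u, h1⟩ := by
      have := congrArg (fun (m : ↥(LinearMap.range α) →ₗ[k] ↥U) => m ⟨α u, h1⟩) hΨ
      simpa using this
    have h3 : e.symm ⟨α u, h1⟩ = Submodule.Quotient.mk u := by
      apply e.injective
      rw [LinearEquiv.apply_symm_apply]
      exact Subtype.ext (LinearMap.quotKerEquivRange_apply_mk α u).symm
    rw [h2, hψ]
    simp only [LinearMap.comp_apply, LinearEquiv.coe_coe, h3]
    rw [Submodule.quotEquivOfEq_mk, Submodule.mkQ_apply]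
  have key2 : ∀ u : ↥U, Ψ (α u) - u ∈ W.comap U.subtype := by
    intro u
    have h4 : (W.comap U.subtype).mkQ (Ψ (α u) - u) = 0 := by
      rw [map_sub, key u]
      have h5 := congrArg (fun (m : (↥U ⧸ W.comap U.subtype) →ₗ[k] (↥U ⧸ W.comap U.subtype))
        => m ((W.comap U.subtype).mkQ u)) hs
      simp only [LinearMap.comp_apply, LinearMap.id_apply] at h5
      rw [h5, sub_self]
    rwa [Submodule.mkQ_apply, Submodule.Quotient.mk_eq_zero] at h4
  obtain ⟨C, hC⟩ := Submodule.exists_isCompl (U ⊔ W)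
  set π : V →ₗ[k] V := (U ⊔ W).subtype.comp ((U ⊔ W).projectionOnto C hC) with hπ
  have hπS : ∀ x (hx : x ∈ U ⊔ W), π x = x := by
    intro x hx
    have h6 := Submodule.linearProjOfIsCompl_apply_left hC ⟨x, hx⟩
    rw [hπ]
    simp only [LinearMap.comp_apply]
    rw [show ((U ⊔ W).projectionOnto C hC) x
        = ((U ⊔ W).projectionOnto C hC) ((⟨x, hx⟩ : ↥(U ⊔ W)) : V) from rfl, h6]
    rfl
  have hπmem : ∀ v, π v ∈ U ⊔ W := fun v => ((U ⊔ W).projectionOnto C hC v).2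
  set f : V →ₗ[k] ↥U := (Ψ.comp W.mkQ).comp π + g.comp (LinearMap.id - π) with hf
  refine ⟨f, ?_, ?_, ?_⟩
  · intro w hw
    have h1 : π w = w := hπS w (le_sup_right (a := U) hw)
    have h2 : W.mkQ w = 0 := by rw [Submodule.mkQ_apply, Submodule.Quotient.mk_eq_zero]; exact hw
    simp [hf, LinearMap.add_apply, LinearMap.comp_apply, LinearMap.sub_apply, h1, h2]
  · intro u
    have h1 : π (↑u) = ↑u := hπS _ (le_sup_left (b := W) u.2)
    have h2 : f ↑u = Ψ (α u) := by
      simp [hf, LinearMap.add_apply, LinearMap.comp_apply, LinearMap.sub_apply, h1, hα]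
    rw [h2]; exact key2 u
  · intro v
    have hsub : ∀ x, x ∈ U ⊔ W → Ψ (W.mkQ x) - g x ∈ Wp.comap U.subtype := by
      intro x hx
      obtain ⟨u, hu, w, hw, rfl⟩ := Submodule.mem_sup.mp hx
      have hw0 : W.mkQ w = 0 := by rw [Submodule.mkQ_apply, Submodule.Quotient.mk_eq_zero]; exact hw
      have hgw : g w = 0 := hg0 w (hWW hw)
      have e1 : Ψ (W.mkQ (u + w)) - g (u + w)
          = (Ψ (α ⟨u, hu⟩) - ⟨u, hu⟩) - (g ((⟨u, hu⟩ : ↥U) : V) - ⟨u, hu⟩) := by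
        simp only [map_add, hw0, hgw, map_zero, add_zero]
        rw [show W.mkQ u = α ⟨u, hu⟩ from rfl]
        abel
      rw [e1]
      exact sub_mem (Submodule.comap_mono hWW (key2 ⟨u, hu⟩)) (hg1 ⟨u, hu⟩)
    have e2 : f v - g v = Ψ (W.mkQ (π v)) - g (π v) := by
      simp only [hf, LinearMap.add_apply, LinearMap.comp_apply, LinearMap.sub_apply,
        LinearMap.id_apply, map_sub]
      abel
    rw [e2]; exact hsub _ (hπmem v)

/-- Let `k` be a field with the discrete topology, `V` a topological
`k`-vector space with linear topology, and `U ⊆ V` a `k`-subspace which, with the subspace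
topology, is complete, separated, and has a countable basis of neighborhoods of `0`.  Then `U`
splits off topologically: equivalently (as stated), there is a continuous `k`-linear retraction
`r : V → U` with `r u = u` for all `u ∈ U`. -/
theorem statement10 {k V : Type*} [Field k] [TopologicalSpace k] [DiscreteTopology k]
    [AddCommGroup V] [Module k V] [TopologicalSpace V] [IsTopologicalAddGroup V]
    [ContinuousSMul k V] (hV : HasLinearTopologyMod k V)
    (U : Submodule k V) [T2Space U] (hUcomp : IsCompleteTAG U)
    (hUcount : (nhds (0 : U)).IsCountablyGenerated) :
    ∃ r : V →L[k] U, ∀ u : U, r (u : V) = u := by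
  classical
  obtain ⟨sb, hsb⟩ := exists_antitone_basis (𝓝 (0 : U))
  have hpick : ∀ n : ℕ, ∃ O : Submodule k V, IsOpen (O : Set V) ∧
      ((Subtype.val ⁻¹' (O : Set V) : Set U) ⊆ sb n) := by
    intro n
    have h1 : sb n ∈ 𝓝 (0 : U) := hsb.mem n
    rw [nhds_subtype] at h1
    obtain ⟨t, ht, hts⟩ := h1
    obtain ⟨O, hO, hOt⟩ := hV t (by simpa using ht)
    exact ⟨O, hO, Set.Subset.trans (fun x hx => Set.preimage_mono hOt hx) hts⟩
  choose O hOopen hOsub using hpick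
  -- decreasing sequence of open submodules
  let Vs : ℕ → Submodule k V := fun n => Nat.rec (O 0) (fun m ih => ih ⊓ O (m + 1)) n
  have hVsopen : ∀ n, IsOpen (SetLike.coe (Vs n)) := by
    intro n
    induction n with
    | zero => exact hOopen 0
    | succ m ih =>
      have : SetLike.coe (Vs (m + 1)) = SetLike.coe (Vs m) ∩ (O (m + 1) : Set V) := rfl
      rw [this]; exact ih.inter (hOopen (m + 1))
  have hVsle : ∀ n, Vs n ≤ O n := by
    intro n
    cases n with
    | zero => exact le_rfl
    | succ m => exact inf_le_right
  have hVssucc : ∀ n, Vs (n + 1) ≤ Vs n := fun n => inf_le_left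
  have hVsanti : ∀ {m n : ℕ}, n ≤ m → Vs m ≤ Vs n := by
    intro m n h
    exact antitone_nat_of_succ_le hVssucc h
  let N : ℕ → Submodule k ↥U := fun n => (Vs n).comap U.subtype
  have hNcoe : ∀ n, SetLike.coe (N n) = Subtype.val ⁻¹' SetLike.coe (Vs n) := fun n => rfl
  have hNopen : ∀ n, IsOpen (SetLike.coe (N n)) := fun n =>
    (hVsopen n).preimage continuous_subtype_val
  have hNanti : ∀ {m n : ℕ}, n ≤ m → N m ≤ N n := fun h => Submodule.comap_mono (hVsanti h)
  have hNnhds : ∀ n, SetLike.coe (N n) ∈ 𝓝 (0 : ↥U) := fun n =>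
    (hNopen n).mem_nhds (Submodule.zero_mem _)
  have hNbasis : ∀ t ∈ 𝓝 (0 : ↥U), ∃ n, SetLike.coe (N n) ⊆ t := by
    intro t ht
    obtain ⟨n, -, hn⟩ := hsb.1.mem_iff.mp ht
    refine ⟨n, fun x hx => hn (hOsub n ?_)⟩
    exact Set.preimage_mono (hVsle n) hx
  have hzero : ∀ x : ↥U, (∀ n, x ∈ N n) → x = 0 := by
    intro x hx
    have h1 : Tendsto (fun _ : ℕ => x) atTop (𝓝 (0 : ↥U)) := by
      intro t ht
      obtain ⟨n, hn⟩ := hNbasis t ht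
      exact Filter.mem_map.2 (Filter.univ_mem' (fun m => hn (hx n)))
    exact tendsto_nhds_unique tendsto_const_nhds h1
  -- construct the compatible sequence of linear maps
  have hbase : ∃ f : V →ₗ[k] ↥U, (∀ w ∈ Vs 0, f w = 0) ∧ (∀ u : ↥U, f ↑u - u ∈ N 0) := by
    obtain ⟨f, a, b, -⟩ := step_aux' U (Vs 0) ⊤ le_top 0
      (by intro w _; rfl) (by intro u; simp)
    exact ⟨f, a, b⟩
  have hstep : ∀ n (g : V →ₗ[k] ↥U), (∀ w ∈ Vs n, g w = 0) → (∀ u : ↥U, g ↑u - u ∈ N n) →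
      ∃ f : V →ₗ[k] ↥U, (∀ w ∈ Vs (n + 1), f w = 0) ∧ (∀ u : ↥U, f ↑u - u ∈ N (n + 1)) ∧
        ∀ v : V, f v - g v ∈ N n := by
    intro n g h0 h1
    exact step_aux' U (Vs (n + 1)) (Vs n) (hVssucc n) g h0 h1
  let F : ∀ n : ℕ, {f : V →ₗ[k] ↥U // (∀ w ∈ Vs n, f w = 0) ∧ (∀ u : ↥U, f ↑u - u ∈ N n)} :=
    fun n => Nat.rec ⟨hbase.choose, hbase.choose_spec⟩
      (fun m ih => ⟨(hstep m ih.1 ih.2.1 ih.2.2).choose,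
        (hstep m ih.1 ih.2.1 ih.2.2).choose_spec.1,
        (hstep m ih.1 ih.2.1 ih.2.2).choose_spec.2.1⟩) n
  let f : ℕ → V →ₗ[k] ↥U := fun n => (F n).1
  have hf0 : ∀ n, ∀ w ∈ Vs n, f n w = 0 := fun n => (F n).2.1
  have hfu : ∀ n (u : ↥U), f n ↑u - u ∈ N n := fun n => (F n).2.2
  have hfsucc : ∀ n v, f (n + 1) v - f n v ∈ N n := fun n v =>
    (hstep n (F n).1 (F n).2.1 (F n).2.2).choose_spec.2.2 v
  have hftel : ∀ n m, n ≤ m → ∀ v, f m v - f n v ∈ N n := by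
    intro n m h
    induction m, h using Nat.le_induction with
    | base => intro v; simp only [sub_self]; exact (N n).zero_mem
    | succ m hm ih =>
      intro v
      have e : f (m + 1) v - f n v = (f (m + 1) v - f m v) + (f m v - f n v) := by abel
      rw [e]
      exact add_mem (hNanti hm (hfsucc m v)) (ih v)
  -- convergence
  have hconv : ∀ v : V, ∃ u : ↥U, Tendsto (fun n => f n v) atTop (𝓝 u) := by
    intro v
    letI uU : UniformSpace ↥U := IsTopologicalAddGroup.rightUniformSpace ↥U
    haveI : IsUniformAddGroup ↥U := isUniformAddGroup_of_addCommGroup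
    haveI : CompleteSpace ↥U := hUcomp
    have hcs : CauchySeq (fun n => f n v) := by
      rw [cauchySeq_iff_tendsto, uniformity_eq_comap_nhds_zero, tendsto_comap_iff]
      intro t ht
      obtain ⟨n, hn⟩ := hNbasis t ht
      refine Filter.mem_map.2 (Filter.mem_of_superset (Filter.mem_atTop (n, n)) ?_)
      rintro ⟨a, b⟩ hab
      have ha : n ≤ a := hab.1
      have hb : n ≤ b := hab.2
      have e : f b v - f a v = (f b v - f n v) - (f a v - f n v) := by abel
      have : f b v - f a v ∈ N n := by
        rw [e]; exact sub_mem (hftel n b hb v) (hftel n a ha v)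
      exact hn this
    exact cauchySeq_tendsto_of_complete hcs
  choose r hr using hconv
  -- the limit retraction
  have hrN : ∀ (v : V) (n : ℕ), r v - f n v ∈ N n := by
    intro v n
    have hcl : IsClosed (SetLike.coe (N n)) :=
      AddSubgroup.isClosed_of_isOpen ((N n).toAddSubgroup) (hNopen n)
    have ht : Tendsto (fun m => f m v - f n v) atTop (𝓝 (r v - f n v)) :=
      (hr v).sub_const _
    exact hcl.mem_of_tendsto ht
      (Filter.eventually_atTop.2 ⟨n, fun m hm => hftel n m hm v⟩)
  have hadd : ∀ v w : V, r (v + w) = r v + r w := by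
    intro v w
    have hmem : ∀ n, r (v + w) - (r v + r w) ∈ N n := by
      intro n
      have e : r (v + w) - (r v + r w)
          = (r (v + w) - f n (v + w)) - (r v - f n v) - (r w - f n w) := by
        rw [map_add]; abel
      rw [e]
      exact sub_mem (sub_mem (hrN (v + w) n) (hrN v n)) (hrN w n)
    have := hzero _ hmem
    exact sub_eq_zero.mp this
  have hsmul : ∀ (c : k) (v : V), r (c • v) = c • r v := by
    intro c v
    have hmem : ∀ n, r (c • v) - c • r v ∈ N n := by
      intro n
      have e : r (c • v) - c • r v
          = (r (c • v) - f n (c • v)) - c • (r v - f n v) := by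
        rw [map_smul, smul_sub]; abel
      rw [e]
      exact sub_mem (hrN (c • v) n) (Submodule.smul_mem _ c (hrN v n))
    exact sub_eq_zero.mp (hzero _ hmem)
  let rL : V →ₗ[k] ↥U := { toFun := r, map_add' := hadd, map_smul' := hsmul }
  have hcont : Continuous r := by
    apply continuous_of_continuousAt_zero rL
    unfold ContinuousAt
    have h0 : rL 0 = 0 := map_zero rL
    rw [h0]
    intro t ht
    obtain ⟨n, hn⟩ := hNbasis t ht
    refine Filter.mem_map.2 (Filter.mem_of_superset
      ((hVsopen n).mem_nhds (Submodule.zero_mem _)) ?_)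
    intro v hv
    have h1 : f n v = 0 := hf0 n v hv
    have h2 : r v ∈ N n := by
      have := hrN v n
      rwa [h1, sub_zero] at this
    exact hn h2
  refine ⟨⟨rL, hcont⟩, ?_⟩
  intro u
  have hmem : ∀ n, r ↑u - u ∈ N n := by
    intro n
    have e : r ↑u - u = (r ↑u - f n ↑u) + (f n ↑u - u) := by abel
    rw [e]
    exact add_mem (hrN (↑u) n) (hfu n u)
  exact sub_eq_zero.mp (hzero _ hmem)
end

section
/- Let C be a preadditive category with kernels, cokernels, and binary biproducts (so that all pushouts and pullbacks exist in C). Assume C is semi-abelian, i.e., for every morphism f the canonical coimage–image comparison coim(f) → im(f) is both a monomorphism and an epimorphism. Then the following are equivalent: (i) for every morphism i which is a kernel and every morphism g out of the domain of i, the pushout of i along g is a kernel (C is right quasi-abelian); (ii) for every morphism p which is a cokernel and every morphism h into the codomain of p, the pullback of p along h is a cokernel (C is left quasi-abelian). -/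
open CategoryTheory CategoryTheory.Limits

universe v u

/-- A morphism `i` is *a kernel* if it is a kernel of some morphism of the category. -/
def IsKernelMor {C : Type u} [Category.{v} C] [HasZeroMorphisms C] {X Y : C} (i : X ⟶ Y) :
    Prop :=
  ∃ (Z : C) (g : Y ⟶ Z) (w : i ≫ g = 0), Nonempty (IsLimit (KernelFork.ofι i w))

/-- A morphism `p` is *a cokernel* if it is a cokernel of some morphism of the category. -/
def IsCokernelMor {C : Type u} [Category.{v} C] [HasZeroMorphisms C] {X Y : C} (p : X ⟶ Y) :
    Prop :=
  ∃ (Z : C) (g : Z ⟶ X) (w : g ≫ p = 0), Nonempty (IsColimit (CokernelCofork.ofπ p w))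

section Helpers

variable {C : Type u} [Category.{v} C] [Preadditive C]

lemma IsKernelMor.mono {X Y : C} {i : X ⟶ Y} (h : IsKernelMor i) : Mono i := by
  obtain ⟨Z, g, w, ⟨hl⟩⟩ := h
  have := mono_of_isLimit_fork hl
  simpa using this

lemma IsCokernelMor.epi {X Y : C} {p : X ⟶ Y} (h : IsCokernelMor p) : Epi p := by
  obtain ⟨Z, g, w, ⟨hc⟩⟩ := h
  have := epi_of_isColimit_cofork hc
  simpa using this

lemma IsKernelMor.comp_iso {X Y Y' : C} {i : X ⟶ Y} (hi : IsKernelMor i) (e : Y ≅ Y') :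
    IsKernelMor (i ≫ e.hom) := by
  obtain ⟨Z, g, w, ⟨hl⟩⟩ := hi
  haveI : Mono i := by have := mono_of_isLimit_fork hl; simpa using this
  refine ⟨Z, e.inv ≫ g, by simp [w], ⟨?_⟩⟩
  refine KernelFork.IsLimit.ofι' _ _ (fun {A} k hk => ?_)
  have hk' : (k ≫ e.inv) ≫ g = 0 := by simpa using hk
  obtain ⟨l, hl'⟩ := KernelFork.IsLimit.lift' hl (k ≫ e.inv) hk'
  refine ⟨l, ?_⟩
  have : l ≫ i = k ≫ e.inv := by simpa using hl'
  rw [← Category.assoc, this, Category.assoc, e.inv_hom_id, Category.comp_id]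

lemma IsCokernelMor.iso_comp {X X' Y : C} {p : X ⟶ Y} (hp : IsCokernelMor p) (e : X' ≅ X) :
    IsCokernelMor (e.hom ≫ p) := by
  obtain ⟨Z, g, w, ⟨hc⟩⟩ := hp
  haveI : Epi p := by have := epi_of_isColimit_cofork hc; simpa using this
  refine ⟨Z, g ≫ e.inv, by simp [w], ⟨?_⟩⟩
  refine CokernelCofork.IsColimit.ofπ' _ _ (fun {A} k hk => ?_)
  have hk' : g ≫ (e.inv ≫ k) = 0 := by
    rw [← Category.assoc]
    simpa [Category.assoc] using hk
  obtain ⟨l, hl'⟩ := CokernelCofork.IsColimit.desc' hc (e.inv ≫ k) hk'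
  refine ⟨l, ?_⟩
  have : p ≫ l = e.inv ≫ k := by simpa using hl'
  rw [Category.assoc, this, ← Category.assoc, e.hom_inv_id, Category.id_comp]

lemma IsKernelMor.op {X Y : C} {i : X ⟶ Y} (hi : IsKernelMor i) : IsCokernelMor i.op := by
  obtain ⟨Z, g, w, ⟨hl⟩⟩ := hi
  haveI : Mono i := by have := mono_of_isLimit_fork hl; simpa using this
  refine ⟨Opposite.op Z, g.op, by rw [← op_comp, w, op_zero], ⟨?_⟩⟩
  refine CokernelCofork.IsColimit.ofπ' _ _ (fun {A} k hk => ?_)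
  have hk' : k.unop ≫ g = 0 := by
    have := congrArg Quiver.Hom.unop hk
    simpa using this
  obtain ⟨l, hl'⟩ := KernelFork.IsLimit.lift' hl k.unop hk'
  have hli : l ≫ i = k.unop := by simpa using hl'
  refine ⟨l.op, ?_⟩
  rw [← op_comp, hli, Quiver.Hom.op_unop]

lemma IsCokernelMor.op {X Y : C} {p : X ⟶ Y} (hp : IsCokernelMor p) : IsKernelMor p.op := by
  obtain ⟨Z, g, w, ⟨hc⟩⟩ := hp
  haveI : Epi p := by have := epi_of_isColimit_cofork hc; simpa using this
  refine ⟨Opposite.op Z, g.op, by rw [← op_comp, w, op_zero], ⟨?_⟩⟩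
  refine KernelFork.IsLimit.ofι' _ _ (fun {A} k hk => ?_)
  have hk' : g ≫ k.unop = 0 := by
    have := congrArg Quiver.Hom.unop hk
    simpa using this
  obtain ⟨l, hl'⟩ := CokernelCofork.IsColimit.desc' hc k.unop hk'
  have hli : p ≫ l = k.unop := by simpa using hl'
  refine ⟨l.op, ?_⟩
  rw [← op_comp, hli, Quiver.Hom.op_unop]

lemma IsKernelMor.unop {A B : Cᵒᵖ} {n : A ⟶ B} (hn : IsKernelMor n) : IsCokernelMor n.unop := by
  obtain ⟨Z, g, w, ⟨hl⟩⟩ := hn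
  haveI : Mono n := by have := mono_of_isLimit_fork hl; simpa using this
  refine ⟨Z.unop, g.unop, by rw [← unop_comp, w, unop_zero], ⟨?_⟩⟩
  refine CokernelCofork.IsColimit.ofπ' _ _ (fun {A₀} k hk => ?_)
  have hk' : k.op ≫ g = 0 := by
    have := congrArg Quiver.Hom.op hk
    simpa using this
  obtain ⟨l, hl'⟩ := KernelFork.IsLimit.lift' hl k.op hk'
  have hli : l ≫ n = k.op := by simpa using hl'
  refine ⟨l.unop, ?_⟩
  rw [← unop_comp, hli, Quiver.Hom.unop_op]

lemma IsCokernelMor.unop {A B : Cᵒᵖ} {n : A ⟶ B} (hn : IsCokernelMor n) : IsKernelMor n.unop := by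
  obtain ⟨Z, g, w, ⟨hc⟩⟩ := hn
  haveI : Epi n := by have := epi_of_isColimit_cofork hc; simpa using this
  refine ⟨Z.unop, g.unop, by rw [← unop_comp, w, unop_zero], ⟨?_⟩⟩
  refine KernelFork.IsLimit.ofι' _ _ (fun {A₀} k hk => ?_)
  have hk' : g ≫ k.op = 0 := by
    have := congrArg Quiver.Hom.op hk
    simpa using this
  obtain ⟨l, hl'⟩ := CokernelCofork.IsColimit.desc' hc k.op hk'
  have hli : n ≫ l = k.op := by simpa using hl'
  refine ⟨l.unop, ?_⟩
  rw [← unop_comp, hli, Quiver.Hom.unop_op]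

lemma isKernelMor_kernelι [HasKernels C] {X Y : C} (f : X ⟶ Y) : IsKernelMor (kernel.ι f) :=
  ⟨Y, f, kernel.condition f, ⟨kernelIsKernel f⟩⟩

lemma isCokernelMor_cokernelπ [HasCokernels C] {X Y : C} (f : X ⟶ Y) :
    IsCokernelMor (cokernel.π f) :=
  ⟨X, f, cokernel.condition f, ⟨cokernelIsCokernel f⟩⟩

lemma IsCokernelMor.isColimitOwnKernel [HasKernels C] {X Y : C} {p : X ⟶ Y}
    (hp : IsCokernelMor p) :
    Nonempty (IsColimit (CokernelCofork.ofπ p (kernel.condition p))) := by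
  obtain ⟨Z, g, w, ⟨hc⟩⟩ := hp
  refine ⟨?_⟩
  haveI : Epi p := by have := epi_of_isColimit_cofork hc; simpa using this
  refine CokernelCofork.IsColimit.ofπ' _ _ (fun {A} k hk => ?_)
  have hgk : g ≫ k = 0 := by
    have : g = kernel.lift p g w ≫ kernel.ι p := by rw [kernel.lift_ι]
    rw [this, Category.assoc, hk, comp_zero]
  obtain ⟨l, hl'⟩ := CokernelCofork.IsColimit.desc' hc k hgk
  exact ⟨l, by simpa using hl'⟩

lemma hasKernelsOp [HasCokernels C] : HasKernels Cᵒᵖ := by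
  constructor
  intro X Y f
  refine HasLimit.mk ⟨KernelFork.ofι (C := Cᵒᵖ) (cokernel.π f.unop).op ?_, ?_⟩
  · exact Quiver.Hom.unop_inj (by simp)
  · refine KernelFork.IsLimit.ofι _ _
      (fun {W'} g' hg' => (cokernel.desc f.unop g'.unop (by
        have := congrArg Quiver.Hom.unop hg'
        simpa using this)).op)
      (fun {W'} g' hg' => ?_) (fun {W'} g' hg' m hm => ?_)
    · rw [← op_comp, cokernel.π_desc, Quiver.Hom.op_unop]
    · have h1 : cokernel.π f.unop ≫ m.unop = g'.unop := by
        have := congrArg Quiver.Hom.unop hm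
        simpa using this
      have h2 : m.unop = cokernel.desc f.unop g'.unop (by
          have := congrArg Quiver.Hom.unop hg'
          simpa using this) := by
        apply (cancel_epi (cokernel.π f.unop)).1
        rw [h1, cokernel.π_desc]
      rw [← m.op_unop, h2]

lemma hasCokernelsOp [HasKernels C] : HasCokernels Cᵒᵖ := by
  constructor
  intro X Y f
  refine HasColimit.mk ⟨CokernelCofork.ofπ (C := Cᵒᵖ) (kernel.ι f.unop).op ?_, ?_⟩
  · exact Quiver.Hom.unop_inj (by simp)
  · refine CokernelCofork.IsColimit.ofπ _ _
      (fun {W'} g' hg' => (kernel.lift f.unop g'.unop (by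
        have := congrArg Quiver.Hom.unop hg'
        simpa using this)).op)
      (fun {W'} g' hg' => ?_) (fun {W'} g' hg' m hm => ?_)
    · rw [← op_comp, kernel.lift_ι, Quiver.Hom.op_unop]
    · have h1 : m.unop ≫ kernel.ι f.unop = g'.unop := by
        have := congrArg Quiver.Hom.unop hm
        simpa using this
      have h2 : m.unop = kernel.lift f.unop g'.unop (by
          have := congrArg Quiver.Hom.unop hg'
          simpa using this) := by
        apply (cancel_mono (kernel.ι f.unop)).1
        rw [h1, kernel.lift_ι]
      rw [← m.op_unop, h2]

lemma hasBinaryBiproductsOp [HasBinaryBiproducts C] : HasBinaryBiproducts Cᵒᵖ := by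
  haveI : HasBinaryProducts Cᵒᵖ := hasProductsOfShape_opposite _
  exact HasBinaryBiproducts.of_hasBinaryProducts

end Helpers

section Main

/-- The key direction: in a left semi-abelian preadditive category (every morphism factors as a
cokernel followed by a monomorphism) in which kernels are stable under pushout, cokernels are
stable under pullback. -/
lemma quasiMain {C : Type u} [Category.{v} C] [Preadditive C] [HasKernels C] [HasCokernels C]
    [HasBinaryBiproducts C] [HasPushouts C] [HasPullbacks C]
    (hFac : ∀ {X Y : C} (f : X ⟶ Y), ∃ (I : C) (c : X ⟶ I) (μ : I ⟶ Y),
      IsCokernelMor c ∧ Mono μ ∧ c ≫ μ = f)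
    (hrq : ∀ (A' A B' : C) (i : A' ⟶ A) (g : A' ⟶ B'),
      IsKernelMor i → IsKernelMor (pushout.inr i g))
    {A A'' B'' : C} (p : A ⟶ A'') (h : B'' ⟶ A'') (hp : IsCokernelMor p) :
    IsCokernelMor (pullback.fst h p) := by
  haveI hpe : Epi p := hp.epi
  obtain ⟨hpc⟩ := hp.isColimitOwnKernel
  -- Factor `ψ = [h, -p] : B'' ⊞ A ⟶ A''` as a cokernel followed by a mono.
  obtain ⟨Iψ, cψ, v, hcψ, hv, hfacψ⟩ := hFac (biprod.desc h (-p))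
  haveI := hv
  have hinrψ : (biprod.inr : A ⟶ B'' ⊞ A) ≫ biprod.desc h (-p) = -p := biprod.inr_desc _ _
  -- `kernel.ι p ≫ biprod.inr` is killed by `cψ`.
  have hkinr : (kernel.ι p ≫ biprod.inr) ≫ biprod.desc h (-p) = 0 := by
    rw [Category.assoc, hinrψ, Preadditive.comp_neg, kernel.condition, neg_zero]
  have h2 : (kernel.ι p ≫ biprod.inr) ≫ cψ = 0 := by
    apply zero_of_comp_mono v
    rw [Category.assoc, hfacψ]
    exact hkinr
  -- Factor `biprod.inr ≫ cψ` as cokernel followed by mono.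
  obtain ⟨If, cf, mf, hcf, hmf, hff⟩ := hFac ((biprod.inr : A ⟶ B'' ⊞ A) ≫ cψ)
  haveI := hmf
  have h3 : kernel.ι p ≫ cf = 0 := by
    apply zero_of_comp_mono mf
    rw [Category.assoc, hff, ← Category.assoc]
    exact h2
  obtain ⟨γ, hγ⟩ := CokernelCofork.IsColimit.desc' hpc cf h3
  have hγ' : p ≫ γ = cf := by simpa using hγ
  -- Lemma B: `v` is an isomorphism.
  have h4 : (γ ≫ mf) ≫ v = -(𝟙 A'') := by
    apply (cancel_epi p).1
    calc p ≫ (γ ≫ mf) ≫ v = ((p ≫ γ) ≫ mf) ≫ v := by simp [Category.assoc]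
    _ = ((biprod.inr ≫ cψ)) ≫ v := by rw [hγ', hff]
    _ = biprod.inr ≫ biprod.desc h (-p) := by rw [Category.assoc, hfacψ]
    _ = -p := hinrψ
    _ = p ≫ (-(𝟙 A'')) := by simp
  have h5 : 𝟙 Iψ + v ≫ γ ≫ mf = 0 := by
    apply (cancel_mono v).1
    rw [Preadditive.add_comp, Category.id_comp, zero_comp, Category.assoc, h4,
      Preadditive.comp_neg, Category.comp_id, add_neg_cancel]
  have h6 : v ≫ γ ≫ mf = -(𝟙 Iψ) := by
    rw [add_comm] at h5
    exact eq_neg_of_add_eq_zero_left h5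
  haveI hviso : IsIso v := by
    refine ⟨-(γ ≫ mf), ?_, ?_⟩
    · rw [Preadditive.comp_neg, h6, neg_neg]
    · rw [Preadditive.neg_comp, h4, neg_neg]
  -- `pullback.fst h p` is an epimorphism.
  have hfste : Epi (pullback.fst h p) := by
    apply Preadditive.epi_of_cancel_zero
    intro T t ht
    obtain ⟨Z₀, γ₀, w₀, ⟨hc₀⟩⟩ := hcψ
    have hγ₀ψ : γ₀ ≫ biprod.desc h (-p) = 0 := by
      rw [← hfacψ, ← Category.assoc, w₀, zero_comp]
    have hab : (γ₀ ≫ biprod.fst) ≫ h = (γ₀ ≫ biprod.snd) ≫ p := by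
      have h7 : γ₀ ≫ biprod.fst ≫ h + γ₀ ≫ biprod.snd ≫ (-p) = 0 := by
        have := hγ₀ψ
        rw [biprod.desc_eq, Preadditive.comp_add] at this
        simpa [Category.assoc] using this
      have h8 : γ₀ ≫ biprod.fst ≫ h - γ₀ ≫ biprod.snd ≫ p = 0 := by
        simpa [Preadditive.comp_neg, sub_eq_add_neg] using h7
      have := sub_eq_zero.1 h8
      simpa [Category.assoc] using this
    have hγ₀τ : γ₀ ≫ biprod.desc t 0 = 0 := by
      have hτ : (biprod.desc t 0 : B'' ⊞ A ⟶ T) = biprod.fst ≫ t := by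
        rw [biprod.desc_eq]
        simp
      have hgf : γ₀ ≫ biprod.fst =
          pullback.lift (γ₀ ≫ biprod.fst) (γ₀ ≫ biprod.snd) hab ≫ pullback.fst h p :=
        (pullback.lift_fst _ _ _).symm
      rw [hτ, ← Category.assoc, hgf, Category.assoc, ht, comp_zero]
    obtain ⟨σ, hσ⟩ := CokernelCofork.IsColimit.desc' hc₀ (biprod.desc t 0) hγ₀τ
    have hσ' : cψ ≫ σ = biprod.desc t 0 := by simpa using hσ
    have hτψ : biprod.desc h (-p) ≫ (inv v ≫ σ) = biprod.desc t 0 := by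
      rw [← hfacψ, Category.assoc, IsIso.hom_inv_id_assoc, hσ']
    have hps : p ≫ (inv v ≫ σ) = 0 := by
      have h9 : biprod.inr ≫ biprod.desc h (-p) ≫ (inv v ≫ σ) = 0 := by
        rw [hτψ, biprod.inr_desc]
      rw [← Category.assoc, hinrψ, Preadditive.neg_comp, neg_eq_zero] at h9
      exact h9
    have hs0 : (inv v ≫ σ : A'' ⟶ T) = 0 := by
      apply (cancel_epi p).1
      rw [hps, comp_zero]
    have hτ0 : (biprod.desc t 0 : B'' ⊞ A ⟶ T) = 0 := by
      rw [← hτψ, hs0, comp_zero]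
    have := congrArg (fun x => (biprod.inl : B'' ⟶ B'' ⊞ A) ≫ x) hτ0
    simpa using this
  -- The canonical map `κ : kernel p ⟶ pullback h p`.
  obtain ⟨κ, hκf, hκs⟩ : ∃ κ : kernel p ⟶ pullback h p,
      κ ≫ pullback.fst h p = 0 ∧ κ ≫ pullback.snd h p = kernel.ι p :=
    ⟨pullback.lift 0 (kernel.ι p) (by simp), pullback.lift_fst _ _ _, pullback.lift_snd _ _ _⟩
  -- `u : cokernel κ ⟶ B''` with `cokernel.π κ ≫ u = pullback.fst h p`.
  obtain ⟨u, hqu⟩ : ∃ u : cokernel κ ⟶ B'', cokernel.π κ ≫ u = pullback.fst h p :=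
    ⟨cokernel.desc κ _ hκf, cokernel.π_desc _ _ _⟩
  have hqu' : ∀ {Z : C} (w : B'' ⟶ Z), cokernel.π κ ≫ u ≫ w = pullback.fst h p ≫ w := by
    intro Z w
    rw [← Category.assoc, hqu]
  -- `m = (fst, snd) : pullback h p ⟶ B'' ⊞ A` is a kernel (of `ψ`).
  have hmψ : biprod.lift (pullback.fst h p) (pullback.snd h p) ≫ biprod.desc h (-p) = 0 := by
    rw [biprod.lift_desc, Preadditive.comp_neg, pullback.condition, add_neg_cancel]
  have hkm : IsKernelMor (biprod.lift (pullback.fst h p) (pullback.snd h p)) := by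
    refine ⟨A'', biprod.desc h (-p), hmψ, ⟨?_⟩⟩
    refine KernelFork.IsLimit.ofι _ _
      (fun {W} x hx => pullback.lift (x ≫ biprod.fst) (x ≫ biprod.snd) ?_)
      (fun {W} x hx => ?_) (fun {W} x hx m' hm' => ?_)
    · have h7 : x ≫ biprod.fst ≫ h + x ≫ biprod.snd ≫ (-p) = 0 := by
        rw [biprod.desc_eq, Preadditive.comp_add] at hx
        simpa [Category.assoc] using hx
      have h8 : (x ≫ biprod.fst) ≫ h - (x ≫ biprod.snd) ≫ p = 0 := by
        simpa [Preadditive.comp_neg, sub_eq_add_neg, Category.assoc] using h7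
      exact sub_eq_zero.1 h8
    · apply biprod.hom_ext
      · simp; exact pullback.lift_fst _ _ _
      · simp; exact pullback.lift_snd _ _ _
    · apply pullback.hom_ext
      · have := congrArg (fun z => z ≫ (biprod.fst : B'' ⊞ A ⟶ B'')) hm'
        rw [pullback.lift_fst]
        simpa [Category.assoc] using this
      · have := congrArg (fun z => z ≫ (biprod.snd : B'' ⊞ A ⟶ A)) hm'
        rw [pullback.lift_snd]
        simpa [Category.assoc] using this
  -- Push out the kernel `m` along `cokernel.π κ`.
  have hPo := hrq _ _ _ (biprod.lift (pullback.fst h p) (pullback.snd h p)) (cokernel.π κ) hkm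
  -- Identify the pushout with `B'' ⊞ A''`.
  have hkinr' : kernel.ι p ≫ (biprod.inr : A ⟶ B'' ⊞ A) =
      κ ≫ biprod.lift (pullback.fst h p) (pullback.snd h p) := by
    apply biprod.hom_ext
    · simp [hκf]
    · simp [hκs]
  have hkζ : kernel.ι p ≫ ((biprod.inr : A ⟶ B'' ⊞ A) ≫
      pushout.inl (biprod.lift (pullback.fst h p) (pullback.snd h p)) (cokernel.π κ)) = 0 := by
    rw [← Category.assoc, hkinr', Category.assoc, pushout.condition, ← Category.assoc,
      cokernel.condition, zero_comp]
  obtain ⟨χ₂, hχ₂⟩ := CokernelCofork.IsColimit.desc' hpc _ hkζ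
  have hχ₂' : p ≫ χ₂ = (biprod.inr : A ⟶ B'' ⊞ A) ≫
      pushout.inl (biprod.lift (pullback.fst h p) (pullback.snd h p)) (cokernel.π κ) := by
    simpa using hχ₂
  have hcomm : biprod.lift (pullback.fst h p) (pullback.snd h p) ≫
      biprod.desc biprod.inl (p ≫ biprod.inr) = cokernel.π κ ≫ biprod.lift u (u ≫ h) := by
    apply biprod.hom_ext <;> simp [biprod.lift_desc, hqu, hqu', pullback.condition]
  have hΦΨ : pushout.desc (biprod.desc biprod.inl (p ≫ biprod.inr)) (biprod.lift u (u ≫ h))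
        hcomm ≫
      biprod.desc ((biprod.inl : B'' ⟶ B'' ⊞ A) ≫
        pushout.inl (biprod.lift (pullback.fst h p) (pullback.snd h p)) (cokernel.π κ)) χ₂ =
      𝟙 _ := by
    apply pushout.hom_ext
    · rw [← Category.assoc, pushout.inl_desc, Category.comp_id]
      apply biprod.hom_ext'
      · rw [← Category.assoc, biprod.inl_desc, biprod.inl_desc]
      · rw [← Category.assoc, biprod.inr_desc, Category.assoc, biprod.inr_desc, hχ₂']
    · rw [← Category.assoc, pushout.inr_desc, Category.comp_id, biprod.lift_desc]
      apply (cancel_epi (cokernel.π κ)).1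
      calc cokernel.π κ ≫ (u ≫ (biprod.inl ≫
            pushout.inl (biprod.lift (pullback.fst h p) (pullback.snd h p)) (cokernel.π κ)) +
            (u ≫ h) ≫ χ₂)
          = cokernel.π κ ≫ u ≫ biprod.inl ≫
              pushout.inl (biprod.lift (pullback.fst h p) (pullback.snd h p)) (cokernel.π κ) +
            cokernel.π κ ≫ u ≫ h ≫ χ₂ := by
            simp only [Preadditive.comp_add, Category.assoc]
        _ = pullback.fst h p ≫ biprod.inl ≫
              pushout.inl (biprod.lift (pullback.fst h p) (pullback.snd h p)) (cokernel.π κ) +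
            pullback.fst h p ≫ h ≫ χ₂ := by rw [hqu', hqu']
        _ = pullback.fst h p ≫ biprod.inl ≫
              pushout.inl (biprod.lift (pullback.fst h p) (pullback.snd h p)) (cokernel.π κ) +
            pullback.snd h p ≫ p ≫ χ₂ := by
            rw [← Category.assoc (pullback.fst h p) h χ₂, pullback.condition, Category.assoc]
        _ = pullback.fst h p ≫ biprod.inl ≫
              pushout.inl (biprod.lift (pullback.fst h p) (pullback.snd h p)) (cokernel.π κ) +
            pullback.snd h p ≫ biprod.inr ≫
              pushout.inl (biprod.lift (pullback.fst h p) (pullback.snd h p)) (cokernel.π κ) := by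
            rw [hχ₂']
        _ = (pullback.fst h p ≫ biprod.inl + pullback.snd h p ≫ biprod.inr) ≫
              pushout.inl (biprod.lift (pullback.fst h p) (pullback.snd h p)) (cokernel.π κ) := by
            rw [Preadditive.add_comp, Category.assoc, Category.assoc]
        _ = biprod.lift (pullback.fst h p) (pullback.snd h p) ≫
              pushout.inl (biprod.lift (pullback.fst h p) (pullback.snd h p)) (cokernel.π κ) := by
            rw [biprod.lift_eq, Preadditive.add_comp, Category.assoc, Category.assoc]
        _ = cokernel.π κ ≫
              pushout.inr (biprod.lift (pullback.fst h p) (pullback.snd h p)) (cokernel.π κ) :=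
            pushout.condition
  have hΨΦ : biprod.desc ((biprod.inl : B'' ⟶ B'' ⊞ A) ≫
        pushout.inl (biprod.lift (pullback.fst h p) (pullback.snd h p)) (cokernel.π κ)) χ₂ ≫
      pushout.desc (biprod.desc biprod.inl (p ≫ biprod.inr)) (biprod.lift u (u ≫ h)) hcomm =
      𝟙 _ := by
    apply biprod.hom_ext'
    · rw [← Category.assoc, biprod.inl_desc, Category.assoc, pushout.inl_desc, biprod.inl_desc,
        Category.comp_id]
      rfl
    · rw [← Category.assoc, biprod.inr_desc, Category.comp_id]
      apply (cancel_epi p).1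
      rw [← Category.assoc, hχ₂', Category.assoc, pushout.inl_desc, biprod.inr_desc]
      rfl
  -- Transport the kernel property along the isomorphism.
  have hK1 : IsKernelMor (pushout.inr (biprod.lift (pullback.fst h p) (pullback.snd h p))
      (cokernel.π κ) ≫
      pushout.desc (biprod.desc biprod.inl (p ≫ biprod.inr)) (biprod.lift u (u ≫ h)) hcomm) :=
    hPo.comp_iso ⟨_, biprod.desc ((biprod.inl : B'' ⟶ B'' ⊞ A) ≫
      pushout.inl (biprod.lift (pullback.fst h p) (pullback.snd h p)) (cokernel.π κ)) χ₂,
      hΦΨ, hΨΦ⟩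
  rw [pushout.inr_desc] at hK1
  -- Shear off `h` with an automorphism of `B'' ⊞ A''`.
  have hΘ : (biprod.desc (biprod.lift (𝟙 B'') (-h)) biprod.inr : B'' ⊞ A'' ⟶ B'' ⊞ A'') ≫
      biprod.desc (biprod.lift (𝟙 B'') h) biprod.inr = 𝟙 _ := by
    apply biprod.hom_ext' <;> apply biprod.hom_ext <;>
      simp [biprod.lift_desc, Preadditive.add_comp]
  have hΘ' : (biprod.desc (biprod.lift (𝟙 B'') h) biprod.inr : B'' ⊞ A'' ⟶ B'' ⊞ A'') ≫
      biprod.desc (biprod.lift (𝟙 B'') (-h)) biprod.inr = 𝟙 _ := by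
    apply biprod.hom_ext' <;> apply biprod.hom_ext <;>
      simp [biprod.lift_desc, Preadditive.add_comp]
  have hK2 : IsKernelMor (biprod.lift u (u ≫ h) ≫
      biprod.desc (biprod.lift (𝟙 B'') (-h)) biprod.inr) :=
    hK1.comp_iso ⟨_, biprod.desc (biprod.lift (𝟙 B'') h) biprod.inr, hΘ, hΘ'⟩
  have hβΘ : biprod.lift u (u ≫ h) ≫ biprod.desc (biprod.lift (𝟙 B'') (-h)) biprod.inr =
      u ≫ biprod.inl := by
    apply biprod.hom_ext <;> simp [biprod.lift_desc]
  rw [hβΘ] at hK2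
  -- `u` is an isomorphism.
  obtain ⟨Zd, gd, wd, ⟨hld⟩⟩ := hK2
  haveI hue : Epi u := by
    haveI : Epi (cokernel.π κ ≫ u) := by rw [hqu]; exact hfste
    exact epi_of_epi (cokernel.π κ) u
  have hig : (biprod.inl : B'' ⟶ B'' ⊞ A'') ≫ gd = 0 := by
    apply (cancel_epi u).1
    rw [comp_zero, ← Category.assoc]
    exact wd
  obtain ⟨w', hw'⟩ := KernelFork.IsLimit.lift' hld biprod.inl hig
  have hw'' : w' ≫ (u ≫ (biprod.inl : B'' ⟶ B'' ⊞ A'')) = biprod.inl := by simpa using hw'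
  have hwu : w' ≫ u = 𝟙 B'' := by
    have := congrArg (fun z => z ≫ (biprod.fst : B'' ⊞ A'' ⟶ B'')) hw''
    simpa [Category.assoc] using this
  haveI hmonoU : Mono u := by
    haveI : Mono (u ≫ (biprod.inl : B'' ⟶ B'' ⊞ A'')) := by
      have := mono_of_isLimit_fork hld
      simpa using this
    exact mono_of_mono u (biprod.inl : B'' ⟶ B'' ⊞ A'')
  haveI : IsIso u := by
    refine ⟨w', ?_, hwu⟩
    apply (cancel_mono u).1
    rw [Category.assoc, hwu, Category.comp_id, Category.id_comp]
  -- Conclusion: `pullback.fst h p` is the cokernel of `κ`.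
  refine ⟨kernel p, κ, hκf, ⟨?_⟩⟩
  haveI := hfste
  refine CokernelCofork.IsColimit.ofπ' _ _ (fun {A₀} t ht => ?_)
  refine ⟨inv u ≫ cokernel.desc κ t ht, ?_⟩
  rw [← hqu, Category.assoc, IsIso.hom_inv_id_assoc, cokernel.π_desc]

end Main

/-- Let `C` be a preadditive category with kernels, cokernels and binary
biproducts (so that all pushouts and pullbacks exist).  If `C` is semi-abelian — for every
morphism `f` the coimage–image comparison is both a monomorphism and an epimorphism — then the
following are equivalent:
(i) every pushout of a kernel along any morphism is a kernel (`C` is right quasi-abelian);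
(ii) every pullback of a cokernel along any morphism is a cokernel (`C` is left quasi-abelian). -/
theorem statement12 {C : Type u} [Category.{v} C] [Preadditive C] [HasKernels C]
    [HasCokernels C] [HasBinaryBiproducts C] [HasPushouts C] [HasPullbacks C]
    (hsemi : ∀ (X Y : C) (f : X ⟶ Y),
      Mono (Abelian.coimageImageComparison f) ∧ Epi (Abelian.coimageImageComparison f)) :
    (∀ (A' A B' : C) (i : A' ⟶ A) (g : A' ⟶ B'),
        IsKernelMor i → IsKernelMor (pushout.inr i g)) ↔
    (∀ (A A'' B'' : C) (p : A ⟶ A'') (h : B'' ⟶ A''),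
        IsCokernelMor p → IsCokernelMor (pullback.fst h p)) := by
  -- Every morphism factors as a cokernel followed by a monomorphism.
  have hFacC : ∀ {X Y : C} (f : X ⟶ Y), ∃ (I : C) (c : X ⟶ I) (μ : I ⟶ Y),
      IsCokernelMor c ∧ Mono μ ∧ c ≫ μ = f := by
    intro X Y f
    haveI := (hsemi _ _ f).1
    exact ⟨Abelian.coimage f, Abelian.coimage.π f,
      Abelian.coimageImageComparison f ≫ Abelian.image.ι f,
      isCokernelMor_cokernelπ _, mono_comp _ _, Abelian.coimage_image_factorisation f⟩
  -- Every morphism factors as an epimorphism followed by a kernel.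
  have hFacC' : ∀ {X Y : C} (f : X ⟶ Y), ∃ (I : C) (e : X ⟶ I) (i : I ⟶ Y),
      Epi e ∧ IsKernelMor i ∧ e ≫ i = f := by
    intro X Y f
    haveI := (hsemi _ _ f).2
    exact ⟨Abelian.image f, Abelian.coimage.π f ≫ Abelian.coimageImageComparison f,
      Abelian.image.ι f, epi_comp _ _, isKernelMor_kernelι _,
      by rw [Category.assoc]; exact Abelian.coimage_image_factorisation f⟩
  haveI : HasKernels Cᵒᵖ := hasKernelsOp
  haveI : HasCokernels Cᵒᵖ := hasCokernelsOp
  haveI : HasBinaryBiproducts Cᵒᵖ := hasBinaryBiproductsOp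
  -- The factorization property in the opposite category.
  have hFacOp : ∀ {X Y : Cᵒᵖ} (f : X ⟶ Y), ∃ (I : Cᵒᵖ) (c : X ⟶ I) (μ : I ⟶ Y),
      IsCokernelMor c ∧ Mono μ ∧ c ≫ μ = f := by
    intro X Y f
    obtain ⟨I, e, i, he, hi, hei⟩ := hFacC' f.unop
    haveI := he
    refine ⟨Opposite.op I, i.op, e.op, hi.op, inferInstance, ?_⟩
    rw [← op_comp, hei, Quiver.Hom.op_unop]
  constructor
  · intro hrq A A'' B'' p hh hp
    exact quasiMain hFacC hrq p hh hp
  · intro hlq A' A B' i g hi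
    -- Kernels in `Cᵒᵖ` are stable under pushout.
    have hrqOp : ∀ (A₁ A₂ B₁ : Cᵒᵖ) (i' : A₁ ⟶ A₂) (g' : A₁ ⟶ B₁),
        IsKernelMor i' → IsKernelMor (pushout.inr i' g') := by
      intro A₁ A₂ B₁ i' g' hi'
      have h2 : IsCokernelMor (pullback.fst g'.unop i'.unop) :=
        hlq _ _ _ i'.unop g'.unop hi'.unop
      have h3 : IsCokernelMor ((pullbackSymmetry i'.unop g'.unop).hom ≫
          pullback.fst g'.unop i'.unop) := h2.iso_comp _
      rw [pullbackSymmetry_hom_comp_fst] at h3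
      have h4 : IsKernelMor (pullback.snd i'.unop g'.unop).op := h3.op
      have r5 := h4.comp_iso ((pullbackIsoUnopPushout i'.unop g'.unop).op.symm)
      have key2 : (pullback.snd i'.unop g'.unop).op ≫
          ((pullbackIsoUnopPushout i'.unop g'.unop).op.symm).hom = pushout.inr i' g' := by
        rw [Iso.symm_hom, Iso.op_inv, ← op_comp, pullbackIsoUnopPushout_inv_snd]
        rfl
      rw [key2] at r5
      exact r5
    have res : IsCokernelMor (pullback.fst g.op i.op) :=
      quasiMain hFacOp hrqOp i.op g.op hi.op
    have r2 : IsCokernelMor ((pullbackSymmetry i.op g.op).hom ≫ pullback.fst g.op i.op) :=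
      res.iso_comp _
    rw [pullbackSymmetry_hom_comp_fst] at r2
    have r3 : IsKernelMor (pullback.snd i.op g.op).unop := r2.unop
    have r5 := r3.comp_iso (pushoutIsoUnopPullback i g).symm
    have key3 : (pullback.snd i.op g.op).unop ≫ ((pushoutIsoUnopPullback i g).symm).hom =
        pushout.inr i g := by
      rw [Iso.symm_hom, ← pushoutIsoUnopPullback_inr_hom, Category.assoc, Iso.hom_inv_id,
        Category.comp_id]
    rw [key3] at r5
    exact r5
end

section
/- Let (A_n)_{n∈ℕ} be a sequence of topological abelian groups with linear topology such that for every n the closure of {0} in A_n is not an open subset (equivalently, the maximal separated quotient A_n/closure({0}) is not discrete). Then the direct sum ⊕_{n∈ℕ} A_n, equipped with the coproduct topology, does not have a countable basis of neighborhoods of 0; that is, the neighborhood filter of 0 is not countably generated. -/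
open Filter Topology

/-- Let `(A n)_{n ∈ ℕ}` be a sequence of topological abelian groups with linear
topology such that for every `n` the closure of `{0}` in `A n` is not open (equivalently, the
maximal separated quotient of `A n` is not discrete).  Then the direct sum `⊕_{n ∈ ℕ} A n`
(formalized as `Π₀ n, A n`), equipped with the coproduct topology `τ` (the group topology whose
basic neighborhoods of `0` are the subgroups `⊕ₙ Uₙ` with each `Uₙ ⊆ A n` an open subgroup),
does not have a countable basis of neighborhoods of `0`: the neighborhood filter of `0` is not
countably generated. -/
theorem statement13 {A : ℕ → Type*} [∀ n, AddCommGroup (A n)]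
    [∀ n, TopologicalSpace (A n)] [∀ n, IsTopologicalAddGroup (A n)]
    (hlin : ∀ n, HasLinearTopology (A n))
    (hnd : ∀ n, ¬ IsOpen (closure ({0} : Set (A n))))
    (τ : TopologicalSpace (Π₀ n, A n))
    (hgrp : @IsTopologicalAddGroup (Π₀ n, A n) τ _)
    (hbasis : (@nhds _ τ 0).HasBasis
      (fun U : ∀ n, AddSubgroup (A n) => ∀ n, IsOpen (U n : Set (A n)))
      (fun U => {f : Π₀ n, A n | ∀ n, f n ∈ U n})) :
    ¬ (@nhds _ τ 0).IsCountablyGenerated := by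

  intro hcg
  -- Key: every open subgroup properly contains another open subgroup
  have key : ∀ n (U : AddSubgroup (A n)), IsOpen (U : Set (A n)) →
      ∃ V : AddSubgroup (A n), IsOpen (V : Set (A n)) ∧ ∃ x ∈ U, x ∉ V := by
    intro n U hU
    by_contra h
    push_neg at h
    apply hnd n
    have hsub : (U : Set (A n)) ⊆ closure ({0} : Set (A n)) := by
      intro x hx
      rw [mem_closure_iff]
      intro o ho hxo
      have h1 : (0 : A n) ∈ (fun y => x + y) ⁻¹' o := by simpa using hxo
      have h2 : IsOpen ((fun y => x + y) ⁻¹' o) := ho.preimage (continuous_add_left x)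
      obtain ⟨V, hV, hVs⟩ := hlin n _ (h2.mem_nhds h1)
      have hxV : x ∈ V := h V hV x hx
      have : x + -x ∈ o := hVs (V.neg_mem hxV)
      exact ⟨0, by simpa using this, rfl⟩
    have hclosed : IsClosed (U : Set (A n)) := U.isClosed_of_isOpen hU
    have : closure ({0} : Set (A n)) = (U : Set (A n)) :=
      subset_antisymm (closure_minimal (by simpa using U.zero_mem) hclosed) hsub
    rw [this]; exact hU
  haveI := hcg
  obtain ⟨S, hS⟩ := (@nhds _ τ 0).exists_antitone_basis
  choose U hUopen hUsub using fun k => hbasis.mem_iff.mp (hS.toHasBasis.mem_of_mem (i := k) trivial)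
  choose V hVopen x hxU hxV using fun n => key n (U n n) (hUopen n n)
  have hT : {f : Π₀ n, A n | ∀ n, f n ∈ V n} ∈ @nhds _ τ 0 :=
    hbasis.mem_of_mem hVopen
  obtain ⟨k, -, hsub⟩ := hS.toHasBasis.mem_iff.mp hT
  have hf : (DFinsupp.single k (x k) : Π₀ n, A n) ∈ {f : Π₀ n, A n | ∀ n, f n ∈ U k n} := by
    intro n
    by_cases hn : k = n
    · subst hn; simpa using hxU k
    · rw [DFinsupp.single_eq_of_ne (Ne.symm hn)]; exact (U k n).zero_mem
  have : (DFinsupp.single k (x k) : Π₀ n, A n) k ∈ V k := hsub (hUsub k hf) k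
  rw [DFinsupp.single_eq_same] at this
  exact hxV k this
end

section
/- Let Q be a separated topological abelian group with linear topology, let I be a set, and equip A = ⊕_{i∈I} Q with the modified coproduct topology. Then every family (a_x)_{x∈X} of elements of A that converges to zero has finite support: the set {x ∈ X : a_x ≠ 0} is finite. -/
open Filter Topology

/-- Let `Q` be a separated topological abelian group with linear topology, let
`I` be a set, and equip `A = ⊕_{i ∈ I} Q` (formalized as `Π₀ _ : I, Q`) with the modified
coproduct topology `τ` — the group topology whose basic neighborhoods of `0` are the subgroups
`⊕_{j ∈ J} {0} ⊕ ⊕_{l ∉ J} U l` with `J ⊆ I` finite and `U l ⊆ Q` open subgroups.  Then every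
family `(a x)_{x ∈ X}` of elements of `A` converging to zero (meaning: for every `τ`-open
subgroup `U` of `A`, the set `{x | a x ∉ U}` is finite) has finite support:
`{x | a x ≠ 0}` is finite. -/
theorem statement14 {I : Type*} {Q : Type*} [AddCommGroup Q]
    [TopologicalSpace Q] [IsTopologicalAddGroup Q] [T2Space Q]
    (hQ : HasLinearTopology Q)
    (τ : TopologicalSpace (Π₀ _ : I, Q))
    (hgrp : @IsTopologicalAddGroup (Π₀ _ : I, Q) τ _)
    (hbasis : (@nhds _ τ 0).HasBasis
      (fun JU : Finset I × (I → AddSubgroup Q) => ∀ i, IsOpen (JU.2 i : Set Q))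
      (fun JU => {f : Π₀ _ : I, Q | (∀ j ∈ JU.1, f j = 0) ∧ ∀ i ∉ JU.1, f i ∈ JU.2 i}))
    {X : Type*} (a : X → (Π₀ _ : I, Q))
    (hconv : ∀ U : AddSubgroup (Π₀ _ : I, Q), @IsOpen _ τ (U : Set (Π₀ _ : I, Q)) →
      {x | a x ∉ U}.Finite) :
    {x | a x ≠ 0}.Finite := by
  classical
  letI := τ
  letI := hgrp
  by_contra hfin
  rw [← Set.not_infinite, not_not] at hfin
  -- Each coordinate set is finite
  have hSi : ∀ i : I, {x | a x i ≠ 0}.Finite := by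
    intro i
    set B : AddSubgroup (Π₀ _ : I, Q) := (DFinsupp.evalAddMonoidHom i).ker with hBdef
    have hmem : (B : Set (Π₀ _ : I, Q)) ∈ @nhds _ τ 0 := by
      rw [hbasis.mem_iff]
      refine ⟨({i}, fun _ => ⊤), fun _ => by simp [isOpen_univ], ?_⟩
      intro f hf
      have := hf.1 i (Finset.mem_singleton_self i)
      exact (this : DFinsupp.evalAddMonoidHom i f = 0)
    have hopen : IsOpen (B : Set (Π₀ _ : I, Q)) := AddSubgroup.isOpen_of_mem_nhds B hmem
    refine (hconv B hopen).subset fun x hx => ?_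
    intro hmem2
    exact hx (hmem2 : a x i = 0)
  -- separation: nonzero elements avoid some open subgroup
  have hsep : ∀ b : Q, b ≠ 0 → ∃ V : AddSubgroup Q, IsOpen (V : Set Q) ∧ b ∉ V := by
    intro b hb
    obtain ⟨V, hV, hsub⟩ := hQ {b}ᶜ (compl_singleton_mem_nhds (Ne.symm hb))
    exact ⟨V, hV, fun h => hsub h rfl⟩
  -- key existence
  have exkey : ∀ (E : Finset X) (F : Finset I), ∃ x, a x ≠ 0 ∧ x ∉ E ∧ ∀ i ∈ F, a x i = 0 := by
    intro E F
    have hfin2 : ((E : Set X) ∪ ⋃ i ∈ F, {x | a x i ≠ 0}).Finite :=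
      (E.finite_toSet).union (Set.Finite.biUnion F.finite_toSet fun i _ => hSi i)
    obtain ⟨x, hx⟩ := (hfin.diff hfin2).nonempty
    refine ⟨x, hx.1, ?_, ?_⟩
    · intro h; exact hx.2 (Or.inl h)
    · intro i hi
      by_contra h
      exact hx.2 (Or.inr (Set.mem_biUnion hi h))
  choose pick hp1 hp2 hp3 using exkey
  -- recursive state
  set st : ℕ → Finset X × Finset I := fun n =>
    Nat.rec (∅, ∅) (fun _ p =>
      (insert (pick p.1 p.2) p.1, p.2 ∪ (a (pick p.1 p.2)).support)) n with hst
  set g : ℕ → X := fun n => pick (st n).1 (st n).2 with hg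
  have hstsucc : ∀ n, st (n + 1) =
      (insert (g n) (st n).1, (st n).2 ∪ (a (g n)).support) := fun n => rfl
  have hmono : ∀ m n, m ≤ n → (st m).1 ⊆ (st n).1 ∧ (st m).2 ⊆ (st n).2 := by
    intro m n hmn
    induction n, hmn using Nat.le_induction with
    | base => exact ⟨subset_rfl, subset_rfl⟩
    | succ n hmn ih =>
      rw [hstsucc]
      exact ⟨ih.1.trans (Finset.subset_insert _ _), ih.2.trans Finset.subset_union_left⟩
  have hgne : ∀ n, a (g n) ≠ 0 := fun n => hp1 _ _
  have hgmem : ∀ k n, k < n → g k ∈ (st n).1 := by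
    intro k n hkn
    have h1 : g k ∈ (st (k + 1)).1 := by rw [hstsucc]; exact Finset.mem_insert_self _ _
    exact (hmono _ _ hkn).1 h1
  have hginj : Function.Injective g := by
    intro m n hmn
    by_contra hne
    rcases Nat.lt_or_ge m n with h | h
    · have h0 := hgmem m n h; rw [hmn] at h0; exact hp2 (st n).1 (st n).2 h0
    · have h' : n < m := lt_of_le_of_ne h (Ne.symm hne)
      have h0 := hgmem n m h'; rw [← hmn] at h0; exact hp2 (st m).1 (st m).2 h0
  have hdisj : ∀ k n, k < n → ∀ i, a (g k) i ≠ 0 → a (g n) i = 0 := by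
    intro k n hkn i hi
    have h1 : i ∈ (st (k + 1)).2 := by
      rw [hstsucc]
      exact Finset.mem_union_right _ (DFinsupp.mem_support_iff.2 hi)
    exact hp3 (st n).1 (st n).2 i ((hmono _ _ hkn).2 h1)
  -- pick witnessing coordinates
  have hexi : ∀ n, ∃ i, a (g n) i ≠ 0 := by
    intro n
    by_contra h
    push_neg at h
    exact hgne n (DFinsupp.ext h)
  choose idx hidx using hexi
  have hidxinj : Function.Injective idx := by
    intro m n hmn
    by_contra hne
    rcases Nat.lt_or_ge m n with h | h
    · have h0 := hdisj m n h (idx m) (hidx m); rw [hmn] at h0; exact hidx n h0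
    · have h' : n < m := lt_of_le_of_ne h (Ne.symm hne)
      have h0 := hdisj n m h' (idx n) (hidx n); rw [← hmn] at h0; exact hidx m h0
  choose V hVopen hVnm using fun n => hsep _ (hidx n)
  set U : I → AddSubgroup Q := fun j => if h : ∃ n, idx n = j then V h.choose else ⊤ with hU
  have hUj : ∀ j, U j = if h : ∃ n, idx n = j then V h.choose else ⊤ := fun _ => rfl
  have hUopen : ∀ j, IsOpen (U j : Set Q) := by
    intro j
    by_cases h : ∃ n, idx n = j
    · rw [hUj j, dif_pos h]; exact hVopen _
    · rw [hUj j, dif_neg h, AddSubgroup.coe_top]; exact isOpen_univ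
  set B : AddSubgroup (Π₀ _ : I, Q) :=
    ⨅ j, AddSubgroup.comap (DFinsupp.evalAddMonoidHom j) (U j) with hB
  have hBmem : ∀ f : Π₀ _ : I, Q, f ∈ B ↔ ∀ j, f j ∈ U j := by
    intro f
    have heval : ∀ (f : Π₀ _ : I, Q) j, DFinsupp.evalAddMonoidHom j f = f j := fun _ _ => rfl
    simp [hB, AddSubgroup.mem_iInf, AddSubgroup.mem_comap, heval]
  have hmem : (B : Set (Π₀ _ : I, Q)) ∈ @nhds _ τ 0 := by
    rw [hbasis.mem_iff]
    refine ⟨(∅, U), hUopen, ?_⟩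
    intro f hf
    exact (hBmem f).2 fun j => hf.2 j (Finset.notMem_empty j)
  have hopen : IsOpen (B : Set (Π₀ _ : I, Q)) := AddSubgroup.isOpen_of_mem_nhds B hmem
  have hfinB := hconv B hopen
  -- but g n is in the complement for all n
  have hgnotin : ∀ n, a (g n) ∉ B := by
    intro n
    rw [hBmem]
    push_neg
    refine ⟨idx n, ?_⟩
    have hex : ∃ m, idx m = idx n := ⟨n, rfl⟩
    have hch : hex.choose = n := hidxinj hex.choose_spec
    rw [hUj (idx n)]
    simp only [dif_pos hex, hch]
    exact hVnm n
  have : Set.range g ⊆ {x | a x ∉ B} := by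
    rintro _ ⟨n, rfl⟩; exact hgnotin n
  exact (Set.infinite_range_of_injective hginj) (hfinB.subset this)
end

section
/- Let A be a complete, separated topological abelian group with linear topology, and let K ⊆ A be a closed subgroup such that K, with the subspace topology, has a countable basis of neighborhoods of 0. Let π : A → A/K be the projection onto the quotient group equipped with the quotient topology, and let X be any set. Then every family (c_x)_{x∈X} of elements of A/K that converges to zero lifts to a family converging to zero in A: there exists a family (a_x)_{x∈X} of elements of A converging to zero with π(a_x) = c_x for all x ∈ X. -/
open Filter Topology

/-- A family `(a x)_{x ∈ X}` of elements of a topological abelian group with linear topology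
converges to zero if for every open subgroup `U` the set `{x | a x ∉ U}` is finite. -/
def ConvergesToZero {A : Type*} [AddCommGroup A] [TopologicalSpace A] {X : Type*}
    (a : X → A) : Prop :=
  ∀ U : AddSubgroup A, IsOpen (U : Set A) → {x | a x ∉ U}.Finite

/-- Let `A` be a complete, separated topological abelian group with linear
topology, let `K ⊆ A` be a closed subgroup which, with the subspace topology, has a countable
basis of neighborhoods of `0`, let `π : A → A ⧸ K` be the projection onto the quotient with the
quotient topology, and let `X` be a set.  Then every family `(c x)_{x ∈ X}` of elements of
`A ⧸ K` converging to zero lifts to a family converging to zero in `A`. -/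
theorem statement15 {A : Type*} [AddCommGroup A] [TopologicalSpace A] [IsTopologicalAddGroup A]
    (hlin : HasLinearTopology A) [T2Space A] (hcomp : IsCompleteTAG A)
    (K : AddSubgroup A) (hK : IsClosed (K : Set A))
    (hKcount : (nhds (0 : K)).IsCountablyGenerated)
    {X : Type*} (c : X → A ⧸ K) (hc : ConvergesToZero c) :
    ∃ a : X → A, ConvergesToZero a ∧ ∀ x, (QuotientAddGroup.mk (a x) : A ⧸ K) = c x := by
  classical
  letI : UniformSpace A := IsTopologicalAddGroup.rightUniformSpace A
  haveI : IsUniformAddGroup A := isUniformAddGroup_of_addCommGroup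
  haveI : CompleteSpace A := hcomp
  haveI := hKcount
  obtain ⟨s, hsb⟩ := (nhds (0 : K)).exists_antitone_basis
  -- Step 1: for each `n` an open subgroup of `A` whose trace on `K` is inside `s n`.
  have step1 : ∀ n : ℕ, ∃ Wn : AddSubgroup A, IsOpen (Wn : Set A) ∧
      ∀ k : K, (k : A) ∈ Wn → k ∈ s n := by
    intro n
    have hn : s n ∈ 𝓝 (0 : K) := hsb.toHasBasis.mem_of_mem trivial
    rw [show (0 : K) = ⟨(0 : A), K.zero_mem⟩ from rfl, nhds_subtype_eq_comap] at hn
    obtain ⟨t, ht, hts⟩ := Filter.mem_comap.mp hn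
    obtain ⟨Wn, hWo, hWt⟩ := hlin t ht
    exact ⟨Wn, hWo, fun k hk => hts (hWt hk)⟩
  choose W hWo hWs using step1
  -- a decreasing sequence of open subgroups
  obtain ⟨U, hU0, hUsucc⟩ : ∃ U : ℕ → AddSubgroup A, U 0 = ⊤ ∧ ∀ n, U (n + 1) = U n ⊓ W n :=
    ⟨fun n => Nat.rec ⊤ (fun m Um => Um ⊓ W m) n, rfl, fun _ => rfl⟩
  have hUopen : ∀ n, IsOpen (U n : Set A) := by
    intro n
    induction n with
    | zero => rw [hU0]; simp only [AddSubgroup.coe_top]; exact isOpen_univ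
    | succ m ih =>
        rw [hUsucc]
        simp only [AddSubgroup.coe_inf]
        exact ih.inter (hWo m)
  have hUanti : Antitone U := antitone_nat_of_succ_le fun n => by
    rw [hUsucc]; exact inf_le_left
  -- key property: every open subgroup of `A` contains `U n ∩ K` for some `n`
  have hkey : ∀ V : AddSubgroup A, IsOpen (V : Set A) →
      ∃ n, ∀ b : A, b ∈ U n → b ∈ K → b ∈ V := by
    intro V hV
    have h0 : Subtype.val ⁻¹' (V : Set A) ∈ 𝓝 (0 : K) := by
      rw [show (0 : K) = ⟨(0 : A), K.zero_mem⟩ from rfl, nhds_subtype_eq_comap]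
      exact Filter.preimage_mem_comap (hV.mem_nhds V.zero_mem)
    obtain ⟨n, -, hn⟩ := hsb.toHasBasis.mem_iff.mp h0
    refine ⟨n + 1, fun b hb hbK => ?_⟩
    have hbW : b ∈ W n := ((hUsucc n ▸ hb : b ∈ U n ⊓ W n)).2
    exact hn (hWs n ⟨b, hbK⟩ hbW)
  -- liftability predicate
  set L : X → ℕ → Prop :=
    fun x n => ∃ d ∈ U n, (QuotientAddGroup.mk d : A ⧸ K) = c x with hLdef
  have hL0 : ∀ x, L x 0 := by
    intro x
    obtain ⟨d, hd⟩ := QuotientAddGroup.mk_surjective (c x)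
    exact ⟨d, hU0 ▸ AddSubgroup.mem_top d, hd⟩
  have hLanti : ∀ x, ∀ {m n : ℕ}, m ≤ n → L x n → L x m := by
    rintro x m n hmn ⟨d, hd, hdc⟩
    exact ⟨d, hUanti hmn hd, hdc⟩
  -- main construction of the lift, elementwise
  have main : ∀ x, ∃ a : A, (QuotientAddGroup.mk a : A ⧸ K) = c x ∧
      ∀ n, L x n → a ∈ U n := by
    intro x
    by_cases hx : ∀ n, L x n
    · choose b hbU hbc using hx
      have hcauchy : CauchySeq b := by
        rw [cauchySeq_iff_tendsto, uniformity_eq_comap_nhds_zero A, tendsto_comap_iff,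
          Filter.tendsto_def]
        intro V hV
        obtain ⟨V', hV'o, hV's⟩ := hlin V hV
        obtain ⟨n, hn⟩ := hkey V' hV'o
        rw [Filter.mem_atTop_sets]
        refine ⟨(n, n), fun p hp => ?_⟩
        have h1 : b p.1 ∈ U n := hUanti hp.1 (hbU p.1)
        have h2 : b p.2 ∈ U n := hUanti hp.2 (hbU p.2)
        have hKd : b p.2 - b p.1 ∈ K := by
          rw [← QuotientAddGroup.eq_iff_sub_mem, hbc p.2, hbc p.1]
        exact hV's (hn _ (sub_mem h2 h1) hKd)
      obtain ⟨a, ha⟩ := cauchySeq_tendsto_of_complete hcauchy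
      refine ⟨a, ?_, fun n _ => ?_⟩
      · have hmem : ∀ m, b m - b 0 ∈ K := fun m => by
          rw [← QuotientAddGroup.eq_iff_sub_mem, hbc m, hbc 0]
        have htd : Tendsto (fun m => b m - b 0) atTop (𝓝 (a - b 0)) := ha.sub_const _
        have haK : a - b 0 ∈ K := hK.mem_of_tendsto htd (Filter.Eventually.of_forall hmem)
        rw [← hbc 0]
        exact QuotientAddGroup.eq_iff_sub_mem.mpr haK
      · have hclosed : IsClosed (U n : Set A) := (U n).isClosed_of_isOpen (hUopen n)
        refine hclosed.mem_of_tendsto ha ?_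
        filter_upwards [Filter.eventually_ge_atTop n] with m hm
        exact hUanti hm (hbU m)
    · push_neg at hx
      have hN0 : Nat.find hx ≠ 0 := by
        intro h
        exact (h ▸ Nat.find_spec hx) (hL0 x)
      obtain ⟨M, hM⟩ : ∃ M, Nat.find hx = M + 1 := Nat.exists_eq_succ_of_ne_zero hN0
      have hLM : L x M := by
        by_contra h
        have : Nat.find hx ≤ M := Nat.find_le h
        omega
      obtain ⟨a, haU, hac⟩ := hLM
      refine ⟨a, hac, fun n hLn => ?_⟩
      have hnM : n ≤ M := by
        by_contra h
        push_neg at h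
        exact Nat.find_spec hx (hLanti x (by omega) hLn)
      exact hUanti hnM haU
  choose a hamk haU using main
  refine ⟨a, ?_, hamk⟩
  intro V hVopen
  obtain ⟨n, hn⟩ := hkey V hVopen
  set Q : AddSubgroup (A ⧸ K) := AddSubgroup.map (QuotientAddGroup.mk' K) (V ⊓ U n) with hQ
  have hQopen : IsOpen (Q : Set (A ⧸ K)) := by
    have h1 : (Q : Set (A ⧸ K)) =
        (QuotientAddGroup.mk : A → A ⧸ K) '' ((V : Set A) ∩ (U n : Set A)) := by
      rw [hQ, AddSubgroup.coe_map, ← AddSubgroup.coe_inf]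
      rfl
    rw [h1]
    exact QuotientAddGroup.isOpenMap_coe _ (hVopen.inter (hUopen n))
  have hsubset : {x | a x ∉ V} ⊆ {x | c x ∉ Q} := by
    intro x hx hcx
    obtain ⟨w, hw, hwc⟩ := AddSubgroup.mem_map.mp hcx
    have hwV : w ∈ V := hw.1
    have hwU : w ∈ U n := hw.2
    have hwc' : (QuotientAddGroup.mk w : A ⧸ K) = c x := hwc
    have haUn : a x ∈ U n := haU x n ⟨w, hwU, hwc'⟩
    have hdiff : a x - w ∈ K := by
      rw [← QuotientAddGroup.eq_iff_sub_mem, hamk x, hwc']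
    have hmemV : a x - w ∈ V := hn _ (sub_mem haUn hwU) hdiff
    exact hx (by simpa using add_mem hmemV hwV)
  exact (hc Q hQopen).subset hsubset
end

section
/- Let k be a field with the discrete topology, and let p : U → C and q : V → D be open, surjective, continuous k-linear maps between topological k-vector spaces with linear topology. Then the induced k-linear map p ⊗ q : U ⊗_k V → C ⊗_k D is surjective, and it is continuous and open with respect to each of the three tensor product topologies: as a map U ⊗^* V → C ⊗^* D, as a map U ⊗^λ V → C ⊗^λ D, and as a map U ⊗^! V → C ⊗^! D. -/
open Filter Topology TensorProduct

section TensorTopologies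

variable {k U V : Type*} [CommRing k] [AddCommGroup U] [Module k U]
  [AddCommGroup V] [Module k V] [TopologicalSpace U] [TopologicalSpace V]

/-- `S·T`: the image of `S ⊗ T` in `U ⊗[k] V`, i.e. the span of the elementary tensors
`s ⊗ₜ t` with `s ∈ S`, `t ∈ T`. -/
def tensorImage (S : Submodule k U) (T : Submodule k V) : Submodule k (U ⊗[k] V) :=
  Submodule.span k {w | ∃ s ∈ S, ∃ t ∈ T, w = s ⊗ₜ[k] t}

/-- The condition for a subspace `E ⊆ U ⊗ V` to be a basic neighborhood of `0` in the
`*`-topology. -/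
def StarCond (E : Submodule k (U ⊗[k] V)) : Prop :=
  (∃ (P : Submodule k U) (Q : Submodule k V), IsOpen (P : Set U) ∧ IsOpen (Q : Set V) ∧
      tensorImage P Q ≤ E) ∧
  (∀ u : U, ∃ Q : Submodule k V, IsOpen (Q : Set V) ∧ ∀ q ∈ Q, u ⊗ₜ[k] q ∈ E) ∧
  (∀ v : V, ∃ P : Submodule k U, IsOpen (P : Set U) ∧ ∀ p ∈ P, p ⊗ₜ[k] v ∈ E)

/-- The condition for a subspace `E ⊆ U ⊗ V` to be a basic neighborhood of `0` in the
`λ`-topology. -/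
def LambdaCond (E : Submodule k (U ⊗[k] V)) : Prop :=
  (∃ P : Submodule k U, IsOpen (P : Set U) ∧ tensorImage P (⊤ : Submodule k V) ≤ E) ∧
  (∀ u : U, ∃ Q : Submodule k V, IsOpen (Q : Set V) ∧ ∀ q ∈ Q, u ⊗ₜ[k] q ∈ E)

/-- `τ` is the `*`-topology on `U ⊗[k] V`: a group topology in which the subspaces satisfying
`StarCond` form a basis of neighborhoods of `0`. -/
def IsStarTopology (τ : TopologicalSpace (U ⊗[k] V)) : Prop :=
  @IsTopologicalAddGroup (U ⊗[k] V) τ _ ∧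
  (@nhds _ τ 0).HasBasis (fun E : Submodule k (U ⊗[k] V) => StarCond E)
    (fun E => (E : Set (U ⊗[k] V)))

/-- `τ` is the `λ`-topology on `U ⊗[k] V`. -/
def IsLambdaTopology (τ : TopologicalSpace (U ⊗[k] V)) : Prop :=
  @IsTopologicalAddGroup (U ⊗[k] V) τ _ ∧
  (@nhds _ τ 0).HasBasis (fun E : Submodule k (U ⊗[k] V) => LambdaCond E)
    (fun E => (E : Set (U ⊗[k] V)))

/-- `τ` is the `!`-topology on `U ⊗[k] V`: a group topology in which the subspaces
`P·V + U·Q`, with `P ⊆ U` and `Q ⊆ V` open subspaces, form a basis of neighborhoods of `0`. -/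
def IsShriekTopology (τ : TopologicalSpace (U ⊗[k] V)) : Prop :=
  @IsTopologicalAddGroup (U ⊗[k] V) τ _ ∧
  (@nhds _ τ 0).HasBasis
    (fun PQ : Submodule k U × Submodule k V =>
      IsOpen (PQ.1 : Set U) ∧ IsOpen (PQ.2 : Set V))
    (fun PQ => ((tensorImage PQ.1 (⊤ : Submodule k V) ⊔
      tensorImage (⊤ : Submodule k U) PQ.2 : Submodule k (U ⊗[k] V)) : Set (U ⊗[k] V)))

end TensorTopologies

section Aux

variable {k U V C D : Type*} [CommRing k]
  [AddCommGroup U] [Module k U] [TopologicalSpace U]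
  [AddCommGroup V] [Module k V] [TopologicalSpace V]
  [AddCommGroup C] [Module k C] [TopologicalSpace C]
  [AddCommGroup D] [Module k D] [TopologicalSpace D]
  (p : U →ₗ[k] C) (q : V →ₗ[k] D)

lemma tensorImage_le_comap {S : Submodule k U} {T : Submodule k V}
    {S' : Submodule k C} {T' : Submodule k D}
    (hS : S ≤ S'.comap p) (hT : T ≤ T'.comap q) :
    tensorImage S T ≤ (tensorImage S' T').comap (TensorProduct.map p q) := by
  rw [tensorImage, Submodule.span_le]
  rintro _ ⟨s, hs, t, ht, rfl⟩
  simp only [SetLike.mem_coe, Submodule.mem_comap, TensorProduct.map_tmul]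
  exact Submodule.subset_span ⟨p s, hS hs, q t, hT ht, rfl⟩

lemma tensorImage_map_le (S : Submodule k U) (T : Submodule k V) :
    tensorImage (S.map p) (T.map q) ≤ (tensorImage S T).map (TensorProduct.map p q) := by
  rw [tensorImage, Submodule.span_le]
  rintro _ ⟨_, ⟨s, hs, rfl⟩, _, ⟨t, ht, rfl⟩, rfl⟩
  exact ⟨s ⊗ₜ t, Submodule.subset_span ⟨s, hs, t, ht, rfl⟩, by simp⟩

variable {p q}

lemma starCond_comap (hpc : Continuous p) (hqc : Continuous q)
    {E' : Submodule k (C ⊗[k] D)} (h : StarCond E') :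
    StarCond (E'.comap (TensorProduct.map p q)) := by
  obtain ⟨⟨P', Q', hP', hQ', hle⟩, h2, h3⟩ := h
  refine ⟨⟨P'.comap p, Q'.comap q, hP'.preimage hpc, hQ'.preimage hqc,
    (tensorImage_le_comap p q le_rfl le_rfl).trans (Submodule.comap_mono hle)⟩, ?_, ?_⟩
  · intro u
    obtain ⟨Q', hQ', hq'⟩ := h2 (p u)
    refine ⟨Q'.comap q, hQ'.preimage hqc, fun v hv => ?_⟩
    simpa only [Submodule.mem_comap, TensorProduct.map_tmul] using hq' (q v) hv
  · intro v
    obtain ⟨P', hP', hp'⟩ := h3 (q v)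
    refine ⟨P'.comap p, hP'.preimage hpc, fun u hu => ?_⟩
    simpa only [Submodule.mem_comap, TensorProduct.map_tmul] using hp' (p u) hu

lemma starCond_map (hpo : IsOpenMap p) (hqo : IsOpenMap q)
    (hps : Function.Surjective p) (hqs : Function.Surjective q)
    {E : Submodule k (U ⊗[k] V)} (h : StarCond E) :
    StarCond (E.map (TensorProduct.map p q)) := by
  obtain ⟨⟨P, Q, hP, hQ, hle⟩, h2, h3⟩ := h
  refine ⟨⟨P.map p, Q.map q, by rw [Submodule.map_coe]; exact hpo _ hP,
    by rw [Submodule.map_coe]; exact hqo _ hQ,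
    (tensorImage_map_le p q P Q).trans (Submodule.map_mono hle)⟩, ?_, ?_⟩
  · intro c
    obtain ⟨u, rfl⟩ := hps c
    obtain ⟨Q, hQ, hq'⟩ := h2 u
    refine ⟨Q.map q, by rw [Submodule.map_coe]; exact hqo _ hQ, fun d hd => ?_⟩
    obtain ⟨v, hv, rfl⟩ := Submodule.mem_map.mp hd
    rw [← TensorProduct.map_tmul]
    exact Submodule.mem_map_of_mem (hq' v hv)
  · intro d
    obtain ⟨v, rfl⟩ := hqs d
    obtain ⟨P, hP, hp'⟩ := h3 v
    refine ⟨P.map p, by rw [Submodule.map_coe]; exact hpo _ hP, fun c hc => ?_⟩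
    obtain ⟨u, hu, rfl⟩ := Submodule.mem_map.mp hc
    rw [← TensorProduct.map_tmul]
    exact Submodule.mem_map_of_mem (hp' u hu)

lemma lambdaCond_comap (hpc : Continuous p) (hqc : Continuous q)
    {E' : Submodule k (C ⊗[k] D)} (h : LambdaCond E') :
    LambdaCond (E'.comap (TensorProduct.map p q)) := by
  obtain ⟨⟨P', hP', hle⟩, h2⟩ := h
  refine ⟨⟨P'.comap p, hP'.preimage hpc,
    (tensorImage_le_comap p q le_rfl (by simp)).trans (Submodule.comap_mono hle)⟩, ?_⟩
  intro u
  obtain ⟨Q', hQ', hq'⟩ := h2 (p u)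
  refine ⟨Q'.comap q, hQ'.preimage hqc, fun v hv => ?_⟩
  simpa only [Submodule.mem_comap, TensorProduct.map_tmul] using hq' (q v) hv

lemma lambdaCond_map (hpo : IsOpenMap p) (hqo : IsOpenMap q)
    (hps : Function.Surjective p) (hqs : Function.Surjective q)
    {E : Submodule k (U ⊗[k] V)} (h : LambdaCond E) :
    LambdaCond (E.map (TensorProduct.map p q)) := by
  obtain ⟨⟨P, hP, hle⟩, h2⟩ := h
  have htop : (⊤ : Submodule k V).map q = ⊤ := by
    rw [Submodule.map_top]; exact LinearMap.range_eq_top.mpr hqs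
  refine ⟨⟨P.map p, by rw [Submodule.map_coe]; exact hpo _ hP, ?_⟩, ?_⟩
  · rw [← htop]
    exact (tensorImage_map_le p q P ⊤).trans (Submodule.map_mono hle)
  · intro c
    obtain ⟨u, rfl⟩ := hps c
    obtain ⟨Q, hQ, hq'⟩ := h2 u
    refine ⟨Q.map q, by rw [Submodule.map_coe]; exact hqo _ hQ, fun d hd => ?_⟩
    obtain ⟨v, hv, rfl⟩ := Submodule.mem_map.mp hd
    rw [← TensorProduct.map_tmul]
    exact Submodule.mem_map_of_mem (hq' v hv)

end Aux

open Filter in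
lemma contOpen_of_bases {G H : Type*} [AddCommGroup G] [AddCommGroup H]
    [TopologicalSpace G] [TopologicalSpace H] [IsTopologicalAddGroup G] [IsTopologicalAddGroup H]
    {ιG ιH : Sort*} {pG : ιG → Prop} {sG : ιG → Set G} {pH : ιH → Prop} {sH : ιH → Set H}
    (hG : (𝓝 (0 : G)).HasBasis pG sG) (hH : (𝓝 (0 : H)).HasBasis pH sH)
    (f : G →+ H)
    (hcont : ∀ j, pH j → ∃ i, pG i ∧ ∀ x ∈ sG i, f x ∈ sH j)
    (hopen : ∀ i, pG i → ∃ j, pH j ∧ sH j ⊆ f '' sG i) :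
    Continuous f ∧ IsOpenMap f := by
  have hc : Continuous f := by
    apply continuous_of_continuousAt_zero f
    rw [ContinuousAt, map_zero, hG.tendsto_iff hH]
    exact hcont
  refine ⟨hc, ?_⟩
  have h0 : 𝓝 (0 : H) ≤ Filter.map f (𝓝 0) := by
    intro s hs
    rw [Filter.mem_map] at hs
    obtain ⟨i, hi, hsub⟩ := hG.mem_iff.mp hs
    obtain ⟨j, hj, hsub'⟩ := hopen i hi
    exact Filter.mem_of_superset (hH.mem_of_mem hj)
      (hsub'.trans ((Set.image_mono hsub).trans (Set.image_preimage_subset f s)))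
  apply IsOpenMap.of_nhds_le
  intro a
  calc 𝓝 (f a) = Filter.map (f a + ·) (𝓝 0) := (map_add_left_nhds_zero (f a)).symm
    _ ≤ Filter.map (f a + ·) (Filter.map f (𝓝 0)) := Filter.map_mono h0
    _ = Filter.map f (Filter.map (a + ·) (𝓝 0)) := by
        rw [Filter.map_map, Filter.map_map]
        exact Filter.map_congr (Filter.Eventually.of_forall fun x => by
          simp [Function.comp, map_add])
    _ = Filter.map f (𝓝 a) := by rw [map_add_left_nhds_zero]

/-- Let `k` be a field with the discrete topology and let
`p : U → C`, `q : V → D` be open, surjective, continuous `k`-linear maps between topological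
`k`-vector spaces with linear topology.  Then `p ⊗ q : U ⊗[k] V → C ⊗[k] D` is surjective, and
it is continuous and open with respect to each of the three tensor product topologies
(`*`, `λ` and `!`). -/
theorem statement16 {k : Type*} [Field k] [TopologicalSpace k] [DiscreteTopology k]
    {U V C D : Type*}
    [AddCommGroup U] [Module k U] [TopologicalSpace U] [IsTopologicalAddGroup U]
    [ContinuousSMul k U] (hU : HasLinearTopologyMod k U)
    [AddCommGroup V] [Module k V] [TopologicalSpace V] [IsTopologicalAddGroup V]
    [ContinuousSMul k V] (hV : HasLinearTopologyMod k V)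
    [AddCommGroup C] [Module k C] [TopologicalSpace C] [IsTopologicalAddGroup C]
    [ContinuousSMul k C] (hC : HasLinearTopologyMod k C)
    [AddCommGroup D] [Module k D] [TopologicalSpace D] [IsTopologicalAddGroup D]
    [ContinuousSMul k D] (hD : HasLinearTopologyMod k D)
    (p : U →ₗ[k] C) (hpc : Continuous p) (hpo : IsOpenMap p) (hps : Function.Surjective p)
    (q : V →ₗ[k] D) (hqc : Continuous q) (hqo : IsOpenMap q) (hqs : Function.Surjective q)
    (τs : TopologicalSpace (U ⊗[k] V)) (hτs : IsStarTopology τs)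
    (τl : TopologicalSpace (U ⊗[k] V)) (hτl : IsLambdaTopology τl)
    (τe : TopologicalSpace (U ⊗[k] V)) (hτe : IsShriekTopology τe)
    (σs : TopologicalSpace (C ⊗[k] D)) (hσs : IsStarTopology σs)
    (σl : TopologicalSpace (C ⊗[k] D)) (hσl : IsLambdaTopology σl)
    (σe : TopologicalSpace (C ⊗[k] D)) (hσe : IsShriekTopology σe) :
    Function.Surjective (TensorProduct.map p q) ∧
    (@Continuous _ _ τs σs (TensorProduct.map p q) ∧
      @IsOpenMap _ _ τs σs (TensorProduct.map p q)) ∧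
    (@Continuous _ _ τl σl (TensorProduct.map p q) ∧
      @IsOpenMap _ _ τl σl (TensorProduct.map p q)) ∧
    (@Continuous _ _ τe σe (TensorProduct.map p q) ∧
      @IsOpenMap _ _ τe σe (TensorProduct.map p q)) := by
  have f := TensorProduct.map p q
  have hsurj : Function.Surjective (TensorProduct.map p q) :=
    TensorProduct.map_surjective hps hqs
  have htopV : (⊤ : Submodule k V).map q = ⊤ := by
    rw [Submodule.map_top]; exact LinearMap.range_eq_top.mpr hqs
  have htopU : (⊤ : Submodule k U).map p = ⊤ := by
    rw [Submodule.map_top]; exact LinearMap.range_eq_top.mpr hps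
  refine ⟨hsurj, ?_, ?_, ?_⟩
  · -- star topology
    letI : TopologicalSpace (U ⊗[k] V) := τs
    letI : TopologicalSpace (C ⊗[k] D) := σs
    haveI : IsTopologicalAddGroup (U ⊗[k] V) := hτs.1
    haveI : IsTopologicalAddGroup (C ⊗[k] D) := hσs.1
    have key := contOpen_of_bases hτs.2 hσs.2 (TensorProduct.map p q).toAddMonoidHom
      (fun E' hE' => ⟨E'.comap (TensorProduct.map p q), starCond_comap hpc hqc hE',
        fun x hx => hx⟩)
      (fun E hE => ⟨E.map (TensorProduct.map p q), starCond_map hpo hqo hps hqs hE,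
        by rw [Submodule.map_coe]; exact Set.Subset.rfl⟩)
    exact key
  · -- lambda topology
    letI : TopologicalSpace (U ⊗[k] V) := τl
    letI : TopologicalSpace (C ⊗[k] D) := σl
    haveI : IsTopologicalAddGroup (U ⊗[k] V) := hτl.1
    haveI : IsTopologicalAddGroup (C ⊗[k] D) := hσl.1
    have key := contOpen_of_bases hτl.2 hσl.2 (TensorProduct.map p q).toAddMonoidHom
      (fun E' hE' => ⟨E'.comap (TensorProduct.map p q), lambdaCond_comap hpc hqc hE',
        fun x hx => hx⟩)
      (fun E hE => ⟨E.map (TensorProduct.map p q), lambdaCond_map hpo hqo hps hqs hE,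
        by rw [Submodule.map_coe]; exact Set.Subset.rfl⟩)
    exact key
  · -- shriek topology
    letI : TopologicalSpace (U ⊗[k] V) := τe
    letI : TopologicalSpace (C ⊗[k] D) := σe
    haveI : IsTopologicalAddGroup (U ⊗[k] V) := hτe.1
    haveI : IsTopologicalAddGroup (C ⊗[k] D) := hσe.1
    have key := contOpen_of_bases hτe.2 hσe.2 (TensorProduct.map p q).toAddMonoidHom
      (fun PQ' hPQ' => ?_) (fun PQ hPQ => ?_)
    · exact key
    · -- continuity condition
      refine ⟨⟨PQ'.1.comap p, PQ'.2.comap q⟩,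
        ⟨hPQ'.1.preimage hpc, hPQ'.2.preimage hqc⟩, fun x hx => ?_⟩
      have hle : (tensorImage (PQ'.1.comap p) (⊤ : Submodule k V) ⊔
          tensorImage (⊤ : Submodule k U) (PQ'.2.comap q) : Submodule k (U ⊗[k] V)) ≤
          (tensorImage PQ'.1 (⊤ : Submodule k D) ⊔
            tensorImage (⊤ : Submodule k C) PQ'.2).comap (TensorProduct.map p q) :=
        sup_le
          ((tensorImage_le_comap p q le_rfl (by simp)).trans
            (Submodule.comap_mono le_sup_left))
          ((tensorImage_le_comap p q (by simp) le_rfl).trans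
            (Submodule.comap_mono le_sup_right))
      exact hle hx
    · -- openness condition
      refine ⟨⟨PQ.1.map p, PQ.2.map q⟩,
        ⟨by rw [Submodule.map_coe]; exact hpo _ hPQ.1,
          by rw [Submodule.map_coe]; exact hqo _ hPQ.2⟩, ?_⟩
      have hle : (tensorImage (PQ.1.map p) (⊤ : Submodule k D) ⊔
          tensorImage (⊤ : Submodule k C) (PQ.2.map q) : Submodule k (C ⊗[k] D)) ≤
          (tensorImage PQ.1 (⊤ : Submodule k V) ⊔
            tensorImage (⊤ : Submodule k U) PQ.2).map (TensorProduct.map p q) := by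
        apply sup_le
        · rw [← htopV]
          exact (tensorImage_map_le p q PQ.1 ⊤).trans (Submodule.map_mono le_sup_left)
        · rw [← htopU]
          exact (tensorImage_map_le p q ⊤ PQ.2).trans (Submodule.map_mono le_sup_right)
      intro x hx
      have := hle hx
      rwa [Submodule.mem_map] at this
end

section
/- Let k be a field with the discrete topology, let U and V be topological k-vector spaces with linear topology, and let K ⊆ U and L ⊆ V be dense k-subspaces. Then the image K·L of K ⊗_k L in U ⊗_k V is a dense subset of U ⊗_k V with respect to each of the three topologies U ⊗^* V, U ⊗^λ V, and U ⊗^! V. -/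
open Filter Topology TensorProduct

section Aux

variable {k U V : Type*} [CommRing k] [AddCommGroup U] [Module k U]
  [AddCommGroup V] [Module k V]

/-- Approximate a point by a dense submodule within an open submodule. -/
lemma approx_aux [TopologicalSpace V] [IsTopologicalAddGroup V]
    (L : Submodule k V) (hL : Dense (L : Set V)) (Q : Submodule k V)
    (hQ : IsOpen (Q : Set V)) (v : V) : ∃ l ∈ L, v - l ∈ Q := by
  have hopen : IsOpen ((v + ·) '' (Q : Set V)) := (isOpenMap_add_left v) _ hQ
  have hne : ((v + ·) '' (Q : Set V)).Nonempty := ⟨v, 0, Q.zero_mem, add_zero v⟩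
  obtain ⟨l, hlL, hlQ⟩ := hL.exists_mem_open hopen hne
  obtain ⟨q, hq, rfl⟩ := hlQ
  exact ⟨v + q, hlL, by simpa using Q.neg_mem hq⟩

lemma tmul_mem_tensorImage {P : Submodule k U} {T : Submodule k V} {p : U} {t : V}
    (hp : p ∈ P) (ht : t ∈ T) : p ⊗ₜ[k] t ∈ tensorImage P T :=
  Submodule.subset_span ⟨p, hp, t, ht, rfl⟩

/-- If every elementary tensor can be approximated modulo `E` by an element of
`tensorImage K L`, then so can every element of the tensor product. -/
lemma core_aux (K : Submodule k U) (L : Submodule k V) (E : Submodule k (U ⊗[k] V))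
    (h : ∀ u v, ∃ x ∈ tensorImage K L, u ⊗ₜ[k] v - x ∈ E) (w : U ⊗[k] V) :
    ∃ x ∈ tensorImage K L, w - x ∈ E := by
  induction w using TensorProduct.induction_on with
  | zero => exact ⟨0, Submodule.zero_mem _, by simpa using E.zero_mem⟩
  | tmul u v => exact h u v
  | add a b ha hb =>
    obtain ⟨x, hx, hx'⟩ := ha
    obtain ⟨y, hy, hy'⟩ := hb
    refine ⟨x + y, add_mem hx hy, ?_⟩
    have := add_mem hx' hy'
    convert this using 1
    abel

/-- Density criterion from a basis of neighborhoods of zero by subspaces. -/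
lemma dense_of_basis (τ : TopologicalSpace (U ⊗[k] V))
    (hτ : @IsTopologicalAddGroup (U ⊗[k] V) τ _)
    {ι : Sort*} {p : ι → Prop} {s : ι → Submodule k (U ⊗[k] V)}
    (hb : (@nhds _ τ 0).HasBasis p (fun i => (s i : Set (U ⊗[k] V))))
    (S : Submodule k (U ⊗[k] V))
    (h : ∀ i, p i → ∀ w : U ⊗[k] V, ∃ x ∈ S, w - x ∈ s i) :
    @Dense (U ⊗[k] V) τ (S : Set (U ⊗[k] V)) := by
  letI := τ
  haveI := hτ
  intro w
  have hbw : (𝓝 w).HasBasis p (fun i => (w + ·) '' (s i : Set (U ⊗[k] V))) := by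
    rw [← map_add_left_nhds_zero w]
    exact hb.map _
  rw [mem_closure_iff_nhds_basis hbw]
  intro i hi
  obtain ⟨x, hxS, hxE⟩ := h i hi w
  exact ⟨x, hxS, -(w - x), (s i).neg_mem hxE, by simp [neg_sub]⟩

end Aux

/-- Let `k` be a field with the discrete topology, `U` and `V` topological
`k`-vector spaces with linear topology, and `K ⊆ U`, `L ⊆ V` dense `k`-subspaces.  Then the
image `K·L` of `K ⊗ L` in `U ⊗[k] V` is dense with respect to each of the three topologies
`U ⊗* V`, `U ⊗^λ V` and `U ⊗^! V`. -/
theorem statement18 {k : Type*} [Field k] [TopologicalSpace k] [DiscreteTopology k]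
    {U V : Type*}
    [AddCommGroup U] [Module k U] [TopologicalSpace U] [IsTopologicalAddGroup U]
    [ContinuousSMul k U] (hU : HasLinearTopologyMod k U)
    [AddCommGroup V] [Module k V] [TopologicalSpace V] [IsTopologicalAddGroup V]
    [ContinuousSMul k V] (hV : HasLinearTopologyMod k V)
    (K : Submodule k U) (hK : Dense (K : Set U))
    (L : Submodule k V) (hL : Dense (L : Set V))
    (τs : TopologicalSpace (U ⊗[k] V)) (hτs : IsStarTopology τs)
    (τl : TopologicalSpace (U ⊗[k] V)) (hτl : IsLambdaTopology τl)
    (τe : TopologicalSpace (U ⊗[k] V)) (hτe : IsShriekTopology τe) :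
    @Dense (U ⊗[k] V) τs (tensorImage K L : Set (U ⊗[k] V)) ∧
    @Dense (U ⊗[k] V) τl (tensorImage K L : Set (U ⊗[k] V)) ∧
    @Dense (U ⊗[k] V) τe (tensorImage K L : Set (U ⊗[k] V)) := by
  refine ⟨?_, ?_, ?_⟩
  · refine dense_of_basis τs hτs.1 hτs.2 _ ?_
    intro E hE w
    refine core_aux K L E (fun u v => ?_) w
    obtain ⟨-, h2, h3⟩ := hE
    obtain ⟨Q, hQo, hQ⟩ := h2 u
    obtain ⟨l, hlL, hlQ⟩ := approx_aux L hL Q hQo v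
    obtain ⟨P, hPo, hP⟩ := h3 l
    obtain ⟨κ, hκK, hκP⟩ := approx_aux K hK P hPo u
    refine ⟨κ ⊗ₜ[k] l, tmul_mem_tensorImage hκK hlL, ?_⟩
    have h1 : u ⊗ₜ[k] (v - l) ∈ E := hQ _ hlQ
    have h2' : (u - κ) ⊗ₜ[k] l ∈ E := hP _ hκP
    have := add_mem h1 h2'
    convert this using 1
    rw [TensorProduct.tmul_sub, TensorProduct.sub_tmul]
    abel
  · refine dense_of_basis τl hτl.1 hτl.2 _ ?_
    intro E hE w
    refine core_aux K L E (fun u v => ?_) w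
    obtain ⟨⟨P, hPo, hP⟩, h2⟩ := hE
    obtain ⟨Q, hQo, hQ⟩ := h2 u
    obtain ⟨l, hlL, hlQ⟩ := approx_aux L hL Q hQo v
    obtain ⟨κ, hκK, hκP⟩ := approx_aux K hK P hPo u
    refine ⟨κ ⊗ₜ[k] l, tmul_mem_tensorImage hκK hlL, ?_⟩
    have h1 : u ⊗ₜ[k] (v - l) ∈ E := hQ _ hlQ
    have h2' : (u - κ) ⊗ₜ[k] l ∈ E :=
      hP (tmul_mem_tensorImage hκP Submodule.mem_top)
    have := add_mem h1 h2'
    convert this using 1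
    rw [TensorProduct.tmul_sub, TensorProduct.sub_tmul]
    abel
  · refine dense_of_basis τe hτe.1 hτe.2 _ ?_
    rintro ⟨P, Q⟩ ⟨hPo, hQo⟩ w
    refine core_aux K L _ (fun u v => ?_) w
    obtain ⟨l, hlL, hlQ⟩ := approx_aux L hL Q hQo v
    obtain ⟨κ, hκK, hκP⟩ := approx_aux K hK P hPo u
    refine ⟨κ ⊗ₜ[k] l, tmul_mem_tensorImage hκK hlL, ?_⟩
    have h1 : (u - κ) ⊗ₜ[k] v ∈ tensorImage P (⊤ : Submodule k V) ⊔
        tensorImage (⊤ : Submodule k U) Q :=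
      Submodule.mem_sup_left (tmul_mem_tensorImage hκP Submodule.mem_top)
    have h2 : κ ⊗ₜ[k] (v - l) ∈ tensorImage P (⊤ : Submodule k V) ⊔
        tensorImage (⊤ : Submodule k U) Q :=
      Submodule.mem_sup_right (tmul_mem_tensorImage Submodule.mem_top hlQ)
    have := add_mem h1 h2
    convert this using 1
    rw [TensorProduct.tmul_sub, TensorProduct.sub_tmul]
    abel
end
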